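/- arXiv:1402.3210 — 11 statements merged into one kernel-verified Lean document; each statement's English description precedes it below -/
import Mathlib

section
/- Let S be an m×n real matrix with nonnegative entries, and let τ̄_w ∈ ℝ^m and τ₀ ∈ ℝ^n have strictly positive entries. Define the maps Φ_s : ℝ^n_{≥0} → ℝ^m by Φ_s(τ_x)_i = 1/((S τ_x)_i + 1/τ̄_{w,i}) and Φ_x : ℝ^m_{≥0} → ℝ^n by Φ_x(τ_s)_j = 1/((Sᵀ τ_s)_j + 1/τ₀_j), and set Φ := Φ_x ∘ Φ_s. Then Φ has a unique fixed point τ_x* with strictly positive entries, and for every initialization τ_x^0 with strictly positive entries the iterates τ_x^{t+1} = Φ(τ_x^t) converge to τ_x* as t → ∞; likewise the iterates τ_s^t = Φ_s(τ_x^t) converge to the unique strictly positive fixed point of Φ_s ∘ Φ_x. (This establishes that the GAMP stepsizes in the Gaussian case converge to unique fixed points, independent of the damping constants.) -/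
open Matrix Filter

/-- The GAMP stepsize half-update `Φ_s`. -/
noncomputable def PhiS {m n : ℕ} (S : Matrix (Fin m) (Fin n) ℝ)
    (w : Fin m → ℝ) (τx : Fin n → ℝ) : Fin m → ℝ :=
  fun i => 1 / ((S.mulVec τx) i + 1 / w i)

/-- The GAMP stepsize half-update `Φ_x`. -/
noncomputable def PhiX {m n : ℕ} (S : Matrix (Fin m) (Fin n) ℝ)
    (τ0 : Fin n → ℝ) (τs : Fin m → ℝ) : Fin n → ℝ :=
  fun j => 1 / ((Sᵀ.mulVec τs) j + 1 / τ0 j)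


namespace GGAMPaux

variable {m n : ℕ} (S : Matrix (Fin m) (Fin n) ℝ)

lemma mulVec_mono (hS : ∀ i j, 0 ≤ S i j) {σ τ : Fin n → ℝ}
    (h : ∀ j, σ j ≤ τ j) (i : Fin m) : S.mulVec σ i ≤ S.mulVec τ i := by
  simp only [Matrix.mulVec, dotProduct]
  exact Finset.sum_le_sum fun j _ => mul_le_mul_of_nonneg_left (h j) (hS i j)

lemma mulVec_nonneg (hS : ∀ i j, 0 ≤ S i j) {τ : Fin n → ℝ}
    (hτ : ∀ j, 0 ≤ τ j) (i : Fin m) : 0 ≤ S.mulVec τ i := by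
  simp only [Matrix.mulVec, dotProduct]
  exact Finset.sum_nonneg fun j _ => mul_nonneg (hS i j) (hτ j)

lemma mulVec_mul (a : ℝ) (τ : Fin n → ℝ) (i : Fin m) :
    S.mulVec (fun j => a * τ j) i = a * S.mulVec τ i := by
  simp only [Matrix.mulVec, dotProduct, Finset.mul_sum]
  exact Finset.sum_congr rfl fun j _ => by ring

variable (w : Fin m → ℝ) (τ0 : Fin n → ℝ)

lemma phiS_denom_pos (hS : ∀ i j, 0 ≤ S i j) (hw : ∀ i, 0 < w i)
    {τ : Fin n → ℝ} (hτ : ∀ j, 0 ≤ τ j) (i : Fin m) :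
    0 < S.mulVec τ i + 1 / w i :=
  add_pos_of_nonneg_of_pos (mulVec_nonneg S hS hτ i) (one_div_pos.mpr (hw i))

lemma phiS_pos (hS : ∀ i j, 0 ≤ S i j) (hw : ∀ i, 0 < w i)
    {τ : Fin n → ℝ} (hτ : ∀ j, 0 ≤ τ j) (i : Fin m) : 0 < PhiS S w τ i :=
  one_div_pos.mpr (phiS_denom_pos S w hS hw hτ i)

lemma phiS_le_w (hS : ∀ i j, 0 ≤ S i j) (hw : ∀ i, 0 < w i)
    {τ : Fin n → ℝ} (hτ : ∀ j, 0 ≤ τ j) (i : Fin m) : PhiS S w τ i ≤ w i := by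
  have h1 : (0:ℝ) < 1 / w i := one_div_pos.mpr (hw i)
  have := one_div_le_one_div_of_le h1
    (le_add_of_nonneg_left (mulVec_nonneg S hS hτ i) :
      1 / w i ≤ S.mulVec τ i + 1 / w i)
  simpa [one_div_one_div, PhiS] using this

lemma phiS_anti (hS : ∀ i j, 0 ≤ S i j) (hw : ∀ i, 0 < w i)
    {σ τ : Fin n → ℝ} (hσ : ∀ j, 0 ≤ σ j) (h : ∀ j, σ j ≤ τ j) (i : Fin m) :
    PhiS S w τ i ≤ PhiS S w σ i :=
  one_div_le_one_div_of_le (phiS_denom_pos S w hS hw hσ i)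
    (add_le_add_left (mulVec_mono S hS h i) _)

lemma phiX_denom_pos (hS : ∀ i j, 0 ≤ S i j) (hτ0 : ∀ j, 0 < τ0 j)
    {τs : Fin m → ℝ} (hτs : ∀ i, 0 ≤ τs i) (j : Fin n) :
    0 < Sᵀ.mulVec τs j + 1 / τ0 j :=
  add_pos_of_nonneg_of_pos
    (mulVec_nonneg Sᵀ (fun j i => hS i j) hτs j) (one_div_pos.mpr (hτ0 j))

lemma phiX_pos (hS : ∀ i j, 0 ≤ S i j) (hτ0 : ∀ j, 0 < τ0 j)
    {τs : Fin m → ℝ} (hτs : ∀ i, 0 ≤ τs i) (j : Fin n) : 0 < PhiX S τ0 τs j :=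
  one_div_pos.mpr (phiX_denom_pos S τ0 hS hτ0 hτs j)

lemma phiX_anti (hS : ∀ i j, 0 ≤ S i j) (hτ0 : ∀ j, 0 < τ0 j)
    {σ τ : Fin m → ℝ} (hσ : ∀ i, 0 ≤ σ i) (h : ∀ i, σ i ≤ τ i) (j : Fin n) :
    PhiX S τ0 τ j ≤ PhiX S τ0 σ j :=
  one_div_le_one_div_of_le (phiX_denom_pos S τ0 hS hτ0 hσ j)
    (add_le_add_left (mulVec_mono Sᵀ (fun j i => hS i j) h j) _)

/-- lower bound function -/
noncomputable def Lb : Fin n → ℝ := fun j => 1 / (Sᵀ.mulVec w j + 1 / τ0 j)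

lemma Lb_pos (hS : ∀ i j, 0 ≤ S i j) (hw : ∀ i, 0 < w i) (hτ0 : ∀ j, 0 < τ0 j)
    (j : Fin n) : 0 < Lb S w τ0 j :=
  one_div_pos.mpr (phiX_denom_pos S τ0 hS hτ0 (fun i => (hw i).le) j)

lemma F_mono (hS : ∀ i j, 0 ≤ S i j) (hw : ∀ i, 0 < w i) (hτ0 : ∀ j, 0 < τ0 j)
    {σ τ : Fin n → ℝ} (hσ : ∀ j, 0 ≤ σ j) (h : ∀ j, σ j ≤ τ j) (j : Fin n) :
    (PhiX S τ0 ∘ PhiS S w) σ j ≤ (PhiX S τ0 ∘ PhiS S w) τ j := by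
  have hτ : ∀ j, 0 ≤ τ j := fun j => (hσ j).trans (h j)
  exact phiX_anti S τ0 hS hτ0 (fun i => (phiS_pos S w hS hw hτ i).le)
    (phiS_anti S w hS hw hσ h) j

lemma F_ge_Lb (hS : ∀ i j, 0 ≤ S i j) (hw : ∀ i, 0 < w i) (hτ0 : ∀ j, 0 < τ0 j)
    {τ : Fin n → ℝ} (hτ : ∀ j, 0 ≤ τ j) (j : Fin n) :
    Lb S w τ0 j ≤ (PhiX S τ0 ∘ PhiS S w) τ j := by
  refine one_div_le_one_div_of_le
    (phiX_denom_pos S τ0 hS hτ0 (fun i => (phiS_pos S w hS hw hτ i).le) j) ?_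
  exact add_le_add_left
    (mulVec_mono Sᵀ (fun j i => hS i j) (phiS_le_w S w hS hw hτ) j) _

lemma F_le_τ0 (hS : ∀ i j, 0 ≤ S i j) (hw : ∀ i, 0 < w i) (hτ0 : ∀ j, 0 < τ0 j)
    {τ : Fin n → ℝ} (hτ : ∀ j, 0 ≤ τ j) (j : Fin n) :
    (PhiX S τ0 ∘ PhiS S w) τ j ≤ τ0 j := by
  have h1 : (0:ℝ) < 1 / τ0 j := one_div_pos.mpr (hτ0 j)
  have := one_div_le_one_div_of_le h1
    (le_add_of_nonneg_left
      (mulVec_nonneg Sᵀ (fun j i => hS i j)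
        (fun i => (phiS_pos S w hS hw hτ i).le) j))
  simpa [one_div_one_div, PhiX, PhiS] using this

/-- strict scalability -/
lemma F_scal (hS : ∀ i j, 0 ≤ S i j) (hw : ∀ i, 0 < w i) (hτ0 : ∀ j, 0 < τ0 j)
    {α : ℝ} (hα : 1 < α) {τ : Fin n → ℝ} (hτ : ∀ j, 0 < τ j) (j : Fin n) :
    (PhiX S τ0 ∘ PhiS S w) (fun j => α * τ j) j < α * (PhiX S τ0 ∘ PhiS S w) τ j := by
  have hτ' : ∀ j, (0:ℝ) ≤ τ j := fun j => (hτ j).le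
  have hατ : ∀ j, (0:ℝ) ≤ α * τ j := fun j => mul_nonneg (by linarith) (hτ j).le
  -- step 1 : PhiS τ i ≤ α * PhiS (ατ) i
  have key : ∀ i, PhiS S w τ i ≤ α * PhiS S w (fun j => α * τ j) i := by
    intro i
    have hd : 0 < S.mulVec τ i + 1 / w i := phiS_denom_pos S w hS hw hτ' i
    have hd' : 0 < S.mulVec (fun j => α * τ j) i + 1 / w i :=
      phiS_denom_pos S w hS hw hατ i
    simp only [PhiS]
    rw [mul_one_div, div_le_div_iff₀ hd hd']
    rw [mulVec_mul]
    have hwpos : (0:ℝ) < 1 / w i := one_div_pos.mpr (hw i)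
    nlinarith [mulVec_nonneg S hS hτ' i]
  set u := PhiS S w (fun j => α * τ j) with hu
  have hu_pos : ∀ i, 0 ≤ u i := fun i => (phiS_pos S w hS hw hατ i).le
  have h2 : Sᵀ.mulVec (PhiS S w τ) j ≤ α * Sᵀ.mulVec u j := by
    rw [← mulVec_mul]
    exact mulVec_mono Sᵀ (fun j i => hS i j) key j
  have hD : 0 < Sᵀ.mulVec (PhiS S w τ) j + 1 / τ0 j :=
    phiX_denom_pos S τ0 hS hτ0 (fun i => (phiS_pos S w hS hw hτ' i).le) j
  have hD' : 0 < Sᵀ.mulVec u j + 1 / τ0 j :=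
    phiX_denom_pos S τ0 hS hτ0 hu_pos j
  show PhiX S τ0 u j < α * PhiX S τ0 (PhiS S w τ) j
  simp only [PhiX]
  rw [mul_one_div, div_lt_div_iff₀ hD' hD]
  have ht0 : (0:ℝ) < 1 / τ0 j := one_div_pos.mpr (hτ0 j)
  nlinarith

/-- uniqueness half: any positive fixed point `τ'` is `≤` any positive fixed point `τ`. -/
lemma fix_le (hS : ∀ i j, 0 ≤ S i j) (hw : ∀ i, 0 < w i) (hτ0 : ∀ j, 0 < τ0 j)
    {τ τ' : Fin n → ℝ} (hτ : ∀ j, 0 < τ j) (hτ' : ∀ j, 0 < τ' j)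
    (hfix : (PhiX S τ0 ∘ PhiS S w) τ = τ) (hfix' : (PhiX S τ0 ∘ PhiS S w) τ' = τ')
    (j : Fin n) : τ' j ≤ τ j := by
  obtain ⟨j0, -, hj0⟩ := Finset.exists_max_image Finset.univ
    (fun k => τ' k / τ k) ⟨j, Finset.mem_univ j⟩
  set α := τ' j0 / τ j0 with hα
  rcases le_or_gt α 1 with h1 | h1
  · have := hj0 j (Finset.mem_univ j)
    rw [div_le_iff₀ (hτ j)] at this
    calc τ' j ≤ (τ' j0 / τ j0) * τ j := this
    _ ≤ 1 * τ j := by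
        apply mul_le_mul_of_nonneg_right (h1.trans_eq rfl) (hτ j).le
    _ = τ j := one_mul _
  · exfalso
    have hle : ∀ k, τ' k ≤ α * τ k := fun k => by
      have := hj0 k (Finset.mem_univ k)
      rwa [div_le_iff₀ (hτ k)] at this
    have heq : τ' j0 = α * τ j0 := by
      rw [hα, div_mul_cancel₀ _ (hτ j0).ne']
    have hstep : τ' j0 ≤ (PhiX S τ0 ∘ PhiS S w) (fun k => α * τ k) j0 := by
      calc τ' j0 = (PhiX S τ0 ∘ PhiS S w) τ' j0 := by rw [hfix']
      _ ≤ _ := F_mono S w τ0 hS hw hτ0 (fun k => (hτ' k).le) hle j0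
    have hscal := F_scal S w τ0 hS hw hτ0 h1 hτ j0
    rw [hfix] at hscal
    linarith [heq ▸ hstep]

lemma phiS_contAt (hS : ∀ i j, 0 ≤ S i j) (hw : ∀ i, 0 < w i)
    {τ : Fin n → ℝ} (hτ : ∀ j, 0 ≤ τ j) : ContinuousAt (PhiS S w) τ := by
  rw [continuousAt_pi]
  intro i
  have hc : Continuous fun τ' : Fin n → ℝ => S.mulVec τ' i + 1 / w i := by
    apply Continuous.add _ continuous_const
    simp only [Matrix.mulVec, dotProduct]
    exact continuous_finset_sum _ fun j _ => continuous_const.mul (continuous_apply j)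
  exact ContinuousAt.div continuousAt_const hc.continuousAt
    (phiS_denom_pos S w hS hw hτ i).ne'

lemma phiX_contAt (hS : ∀ i j, 0 ≤ S i j) (hτ0 : ∀ j, 0 < τ0 j)
    {τs : Fin m → ℝ} (hτs : ∀ i, 0 ≤ τs i) : ContinuousAt (PhiX S τ0) τs := by
  rw [continuousAt_pi]
  intro j
  have hc : Continuous fun τ' : Fin m → ℝ => Sᵀ.mulVec τ' j + 1 / τ0 j := by
    apply Continuous.add _ continuous_const
    simp only [Matrix.mulVec, dotProduct]
    exact continuous_finset_sum _ fun i _ => continuous_const.mul (continuous_apply i)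
  exact ContinuousAt.div continuousAt_const hc.continuousAt
    (phiX_denom_pos S τ0 hS hτ0 hτs j).ne'

lemma F_contAt (hS : ∀ i j, 0 ≤ S i j) (hw : ∀ i, 0 < w i) (hτ0 : ∀ j, 0 < τ0 j)
    {τ : Fin n → ℝ} (hτ : ∀ j, 0 ≤ τ j) :
    ContinuousAt (PhiX S τ0 ∘ PhiS S w) τ :=
  (phiX_contAt S τ0 hS hτ0 (fun i => (phiS_pos S w hS hw hτ i).le)).comp
    (phiS_contAt S w hS hw hτ)

end GGAMPaux

/-- **Theorem 1 (convergence of GGAMP stepsizes).**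
For any entrywise nonnegative `S` and strictly positive `τ̄_w`, `τ₀`, the composed
stepsize update `Φ = Φ_x ∘ Φ_s` has a unique strictly positive fixed point `τ_x*`,
and the iterates from any strictly positive initialization converge to it;
likewise `τ_s^t = Φ_s(τ_x^t)` converges to the unique strictly positive fixed
point of `Φ_s ∘ Φ_x`. -/
theorem ggamp_stepsize_convergence {m n : ℕ}
    (S : Matrix (Fin m) (Fin n) ℝ) (hS : ∀ i j, 0 ≤ S i j)
    (w : Fin m → ℝ) (hw : ∀ i, 0 < w i)
    (τ0 : Fin n → ℝ) (hτ0 : ∀ j, 0 < τ0 j) :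
    ∃ τxstar : Fin n → ℝ,
      (∀ j, 0 < τxstar j) ∧
      (PhiX S τ0 ∘ PhiS S w) τxstar = τxstar ∧
      (∀ τ : Fin n → ℝ, (∀ j, 0 < τ j) → (PhiX S τ0 ∘ PhiS S w) τ = τ → τ = τxstar) ∧
      (∀ τinit : Fin n → ℝ, (∀ j, 0 < τinit j) →
        Tendsto (fun t : ℕ => (PhiX S τ0 ∘ PhiS S w)^[t] τinit) atTop (nhds τxstar)) ∧
      ∃ τsstar : Fin m → ℝ,
        (∀ i, 0 < τsstar i) ∧
        (PhiS S w ∘ PhiX S τ0) τsstar = τsstar ∧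
        (∀ τ : Fin m → ℝ, (∀ i, 0 < τ i) → (PhiS S w ∘ PhiX S τ0) τ = τ → τ = τsstar) ∧
        (∀ τinit : Fin n → ℝ, (∀ j, 0 < τinit j) →
          Tendsto (fun t : ℕ => PhiS S w ((PhiX S τ0 ∘ PhiS S w)^[t] τinit))
            atTop (nhds τsstar)) := by
    classical
  set F := PhiX S τ0 ∘ PhiS S w with hF
  set L : Fin n → ℝ := GGAMPaux.Lb S w τ0 with hL
  have hLpos : ∀ j, 0 < L j := GGAMPaux.Lb_pos S w τ0 hS hw hτ0
  set a : ℕ → Fin n → ℝ := fun t => F^[t] L with ha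
  set b : ℕ → Fin n → ℝ := fun t => F^[t] τ0 with hb
  have hastep : ∀ t, a (t+1) = F (a t) := fun t => by
    simp only [ha, Function.iterate_succ_apply']
  have hbstep : ∀ t, b (t+1) = F (b t) := fun t => by
    simp only [hb, Function.iterate_succ_apply']
  -- basic invariants for a
  have haInv : ∀ t, (∀ j, L j ≤ a t j) ∧ (∀ j, a t j ≤ τ0 j) ∧ (∀ j, a t j ≤ a (t+1) j) := by
    intro t
    induction t with
    | zero =>
      have hFL1 : ∀ j, L j ≤ F L j :=
        GGAMPaux.F_ge_Lb S w τ0 hS hw hτ0 (fun j => (hLpos j).le)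
      refine ⟨fun j => le_refl _, fun j => ?_, fun j => ?_⟩
      · show L j ≤ τ0 j
        exact (hFL1 j).trans (GGAMPaux.F_le_τ0 S w τ0 hS hw hτ0 (fun j => (hLpos j).le) j)
      · rw [hastep 0]; exact hFL1 j
    | succ t ih =>
      obtain ⟨ih1, ih2, ih3⟩ := ih
      have h0 : ∀ j, 0 ≤ a t j := fun j => (hLpos j).le.trans (ih1 j)
      refine ⟨fun j => ?_, fun j => ?_, fun j => ?_⟩
      · rw [hastep t]; exact GGAMPaux.F_ge_Lb S w τ0 hS hw hτ0 h0 j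
      · rw [hastep t]; exact GGAMPaux.F_le_τ0 S w τ0 hS hw hτ0 h0 j
      · rw [hastep t, hastep (t+1)]
        exact GGAMPaux.F_mono S w τ0 hS hw hτ0 h0 ih3 j
  have haPos : ∀ t j, 0 ≤ a t j := fun t j => (hLpos j).le.trans ((haInv t).1 j)
  -- invariants for b
  have hbInv : ∀ t, (∀ j, L j ≤ b t j) ∧ (∀ j, b t j ≤ τ0 j) ∧ (∀ j, b (t+1) j ≤ b t j) := by
    intro t
    induction t with
    | zero =>
      refine ⟨fun j => ?_, fun j => le_refl _, fun j => ?_⟩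
      · show L j ≤ τ0 j
        calc L j ≤ F τ0 j := GGAMPaux.F_ge_Lb S w τ0 hS hw hτ0 (fun j => (hτ0 j).le) j
        _ ≤ τ0 j := GGAMPaux.F_le_τ0 S w τ0 hS hw hτ0 (fun j => (hτ0 j).le) j
      · rw [hbstep 0]
        exact GGAMPaux.F_le_τ0 S w τ0 hS hw hτ0 (fun j => (hτ0 j).le) j
    | succ t ih =>
      obtain ⟨ih1, ih2, ih3⟩ := ih
      have h0 : ∀ j, 0 ≤ b t j := fun j => (hLpos j).le.trans (ih1 j)
      have h1 : ∀ j, L j ≤ b (t+1) j := fun j => by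
        rw [hbstep t]; exact GGAMPaux.F_ge_Lb S w τ0 hS hw hτ0 h0 j
      have h0' : ∀ j, 0 ≤ b (t+1) j := fun j => (hLpos j).le.trans (h1 j)
      refine ⟨h1, fun j => ?_, fun j => ?_⟩
      · rw [hbstep t]; exact GGAMPaux.F_le_τ0 S w τ0 hS hw hτ0 h0 j
      · rw [hbstep t, hbstep (t+1)]
        exact GGAMPaux.F_mono S w τ0 hS hw hτ0 h0' ih3 j
  -- limits
  set A : Fin n → ℝ := fun j => ⨆ t, a t j with hA
  set B : Fin n → ℝ := fun j => ⨅ t, b t j with hB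
  have haBdd : ∀ j, BddAbove (Set.range fun t => a t j) := fun j =>
    ⟨τ0 j, by rintro x ⟨t, rfl⟩; exact (haInv t).2.1 j⟩
  have hbBdd : ∀ j, BddBelow (Set.range fun t => b t j) := fun j =>
    ⟨L j, by rintro x ⟨t, rfl⟩; exact (hbInv t).1 j⟩
  have hAt : Tendsto a atTop (nhds A) := by
    rw [tendsto_pi_nhds]
    intro j
    exact tendsto_atTop_ciSup (monotone_nat_of_le_succ fun t => (haInv t).2.2 j) (haBdd j)
  have hBt : Tendsto b atTop (nhds B) := by
    rw [tendsto_pi_nhds]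
    intro j
    exact tendsto_atTop_ciInf (antitone_nat_of_succ_le fun t => (hbInv t).2.2 j) (hbBdd j)
  have hALb : ∀ j, L j ≤ A j := fun j => (le_ciSup (haBdd j) 0 : a 0 j ≤ A j)
  have hApos : ∀ j, 0 < A j := fun j => (hLpos j).trans_le (hALb j)
  have hBLb : ∀ j, L j ≤ B j := fun j => le_ciInf fun t => (hbInv t).1 j
  have hBpos : ∀ j, 0 < B j := fun j => (hLpos j).trans_le (hBLb j)
  -- A, B are fixed points
  have hAfix : F A = A := by
    have h1 : Tendsto (fun t => F (a t)) atTop (nhds (F A)) :=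
      ((GGAMPaux.F_contAt S w τ0 hS hw hτ0 (fun j => (hApos j).le)).tendsto).comp hAt
    have h2 : (fun t => F (a t)) = fun t => a (t+1) := by
      funext t; exact (hastep t).symm
    rw [h2] at h1
    have h3 : Tendsto (fun t => a (t+1)) atTop (nhds A) :=
      (Filter.tendsto_add_atTop_iff_nat 1).mpr hAt
    exact tendsto_nhds_unique h1 h3
  have hBfix : F B = B := by
    have h1 : Tendsto (fun t => F (b t)) atTop (nhds (F B)) :=
      ((GGAMPaux.F_contAt S w τ0 hS hw hτ0 (fun j => (hBpos j).le)).tendsto).comp hBt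
    have h2 : (fun t => F (b t)) = fun t => b (t+1) := by
      funext t; exact (hbstep t).symm
    rw [h2] at h1
    have h3 : Tendsto (fun t => b (t+1)) atTop (nhds B) :=
      (Filter.tendsto_add_atTop_iff_nat 1).mpr hBt
    exact tendsto_nhds_unique h1 h3
  -- uniqueness of positive fixed points
  have huniq : ∀ τ : Fin n → ℝ, (∀ j, 0 < τ j) → F τ = τ → τ = A := by
    intro τ hτpos hτfix
    funext j
    exact le_antisymm
      (GGAMPaux.fix_le S w τ0 hS hw hτ0 hApos hτpos hAfix hτfix j)
      (GGAMPaux.fix_le S w τ0 hS hw hτ0 hτpos hApos hτfix hAfix j)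
  have hBA : B = A := huniq B hBpos hBfix
  -- convergence from arbitrary positive initialization
  have hconv : ∀ τinit : Fin n → ℝ, (∀ j, 0 < τinit j) →
      Tendsto (fun t : ℕ => F^[t] τinit) atTop (nhds A) := by
    intro τinit hinit
    set c : ℕ → Fin n → ℝ := fun t => F^[t] τinit with hc
    have hcstep : ∀ t, c (t+1) = F (c t) := fun t => by
      simp only [hc, Function.iterate_succ_apply']
    have hsand : ∀ t j, a t j ≤ c (t+1) j ∧ c (t+1) j ≤ b t j := by
      intro t
      induction t with
      | zero =>
        intro j
        rw [hcstep 0]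
        constructor
        · exact GGAMPaux.F_ge_Lb S w τ0 hS hw hτ0 (fun j => (hinit j).le) j
        · exact GGAMPaux.F_le_τ0 S w τ0 hS hw hτ0 (fun j => (hinit j).le) j
      | succ t ih =>
        intro j
        have hc0 : ∀ j, 0 ≤ c (t+1) j := fun j => (haPos t j).trans (ih j).1
        rw [hcstep (t+1), hastep t, hbstep t]
        constructor
        · exact GGAMPaux.F_mono S w τ0 hS hw hτ0 (haPos t) (fun j => (ih j).1) j
        · exact GGAMPaux.F_mono S w τ0 hS hw hτ0 hc0 (fun j => (ih j).2) j
    have hcshift : Tendsto (fun t => c (t+1)) atTop (nhds A) := by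
      rw [tendsto_pi_nhds]
      intro j
      have hAtj : Tendsto (fun t => a t j) atTop (nhds (A j)) := tendsto_pi_nhds.mp hAt j
      have hBtj : Tendsto (fun t => b t j) atTop (nhds (A j)) := by
        have := tendsto_pi_nhds.mp hBt j
        rwa [hBA] at this
      exact tendsto_of_tendsto_of_tendsto_of_le_of_le hAtj hBtj
        (fun t => (hsand t j).1) (fun t => (hsand t j).2)
    exact (Filter.tendsto_add_atTop_iff_nat 1).mp hcshift
  refine ⟨A, hApos, hAfix, huniq, hconv, PhiS S w A, ?_, ?_, ?_, ?_⟩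
  · exact GGAMPaux.phiS_pos S w hS hw (fun j => (hApos j).le)
  · show PhiS S w (PhiX S τ0 (PhiS S w A)) = PhiS S w A
    exact congrArg (PhiS S w) hAfix
  · intro τs hτspos hτsfix
    have hσpos : ∀ j, 0 < PhiX S τ0 τs j :=
      GGAMPaux.phiX_pos S τ0 hS hτ0 (fun i => (hτspos i).le)
    have hσfix : F (PhiX S τ0 τs) = PhiX S τ0 τs := by
      show PhiX S τ0 (PhiS S w (PhiX S τ0 τs)) = PhiX S τ0 τs
      exact congrArg (PhiX S τ0) hτsfix
    have hσA : PhiX S τ0 τs = A := huniq _ hσpos hσfix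
    calc τs = PhiS S w (PhiX S τ0 τs) := hτsfix.symm
    _ = PhiS S w A := by rw [hσA]
  · intro τinit hinit
    exact ((GGAMPaux.phiS_contAt S w hS hw (fun j => (hApos j).le)).tendsto).comp
      (hconv τinit hinit)
end

section
/- Let S be an m×n real matrix with nonnegative entries, and let τ̄_w ∈ ℝ^m and τ₀ ∈ ℝ^n have strictly positive entries. Define Φ_s(τ_x)_i = 1/((S τ_x)_i + 1/τ̄_{w,i}), Φ_x(τ_s)_j = 1/((Sᵀ τ_s)_j + 1/τ₀_j), and Φ := Φ_x ∘ Φ_s. Then: (i) Φ(τ) has strictly positive entries for every entrywise nonnegative τ; (ii) Φ is monotone: if τ ≥ τ' entrywise (both nonnegative) then Φ(τ) ≥ Φ(τ') entrywise; (iii) Φ is strictly scalable: for every α > 1 and entrywise nonnegative τ, Φ(ατ) < αΦ(τ) entrywise; (iv) Φ(τ) ≤ τ₀ entrywise for all nonnegative τ, and consequently every τ with τ ≥ τ₀ entrywise satisfies Φ(τ) ≤ τ entrywise. -/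
open Matrix

section aux
variable {m n : ℕ}

lemma mulVec_nonneg' (A : Matrix (Fin m) (Fin n) ℝ) (hA : ∀ i j, 0 ≤ A i j)
    (v : Fin n → ℝ) (hv : ∀ j, 0 ≤ v j) (i : Fin m) : 0 ≤ A.mulVec v i := by
  simp only [mulVec, dotProduct]
  apply Finset.sum_nonneg
  intro j _
  exact mul_nonneg (hA i j) (hv j)

lemma mulVec_mono' (A : Matrix (Fin m) (Fin n) ℝ) (hA : ∀ i j, 0 ≤ A i j)
    (v v' : Fin n → ℝ) (hvv : ∀ j, v' j ≤ v j) (i : Fin m) :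
    A.mulVec v' i ≤ A.mulVec v i := by
  simp only [mulVec, dotProduct]
  apply Finset.sum_le_sum
  intro j _
  exact mul_le_mul_of_nonneg_left (hvv j) (hA i j)

lemma phiS_denom_pos (S : Matrix (Fin m) (Fin n) ℝ) (hS : ∀ i j, 0 ≤ S i j)
    (w : Fin m → ℝ) (hw : ∀ i, 0 < w i) (τ : Fin n → ℝ) (hτ : ∀ j, 0 ≤ τ j)
    (i : Fin m) : 0 < S.mulVec τ i + 1 / w i :=
  add_pos_of_nonneg_of_pos (mulVec_nonneg' S hS τ hτ i) (by have := hw i; positivity)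

lemma phiS_pos (S : Matrix (Fin m) (Fin n) ℝ) (hS : ∀ i j, 0 ≤ S i j)
    (w : Fin m → ℝ) (hw : ∀ i, 0 < w i) (τ : Fin n → ℝ) (hτ : ∀ j, 0 ≤ τ j)
    (i : Fin m) : 0 < PhiS S w τ i := by
  unfold PhiS
  have := phiS_denom_pos S hS w hw τ hτ i
  positivity

lemma phiX_denom_pos (S : Matrix (Fin m) (Fin n) ℝ) (hS : ∀ i j, 0 ≤ S i j)
    (τ0 : Fin n → ℝ) (hτ0 : ∀ j, 0 < τ0 j) (τs : Fin m → ℝ) (hτs : ∀ i, 0 ≤ τs i)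
    (j : Fin n) : 0 < Sᵀ.mulVec τs j + 1 / τ0 j :=
  add_pos_of_nonneg_of_pos
    (mulVec_nonneg' Sᵀ (fun i j => hS j i) τs hτs j) (by have := hτ0 j; positivity)

end aux

/-- The standard-interference-function properties (positivity, monotonicity,
strict scalability, and boundedness by `τ₀`) of the composed GAMP stepsize
update `Φ = Φ_x ∘ Φ_s` in the Gaussian case. -/
theorem ggamp_stepsize_map_properties {m n : ℕ}
    (S : Matrix (Fin m) (Fin n) ℝ) (hS : ∀ i j, 0 ≤ S i j)
    (w : Fin m → ℝ) (hw : ∀ i, 0 < w i)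
    (τ0 : Fin n → ℝ) (hτ0 : ∀ j, 0 < τ0 j) :
    -- (i) positivity
    (∀ τ : Fin n → ℝ, (∀ j, 0 ≤ τ j) → ∀ j, 0 < (PhiX S τ0 ∘ PhiS S w) τ j) ∧
    -- (ii) monotonicity
    (∀ τ τ' : Fin n → ℝ, (∀ j, 0 ≤ τ' j) → (∀ j, τ' j ≤ τ j) →
      ∀ j, (PhiX S τ0 ∘ PhiS S w) τ' j ≤ (PhiX S τ0 ∘ PhiS S w) τ j) ∧
    -- (iii) strict scalability
    (∀ α : ℝ, 1 < α → ∀ τ : Fin n → ℝ, (∀ j, 0 ≤ τ j) →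
      ∀ j, (PhiX S τ0 ∘ PhiS S w) (α • τ) j < α * (PhiX S τ0 ∘ PhiS S w) τ j) ∧
    -- (iv) boundedness by τ₀, and Φ(τ) ≤ τ whenever τ ≥ τ₀
    (∀ τ : Fin n → ℝ, (∀ j, 0 ≤ τ j) → ∀ j, (PhiX S τ0 ∘ PhiS S w) τ j ≤ τ0 j) ∧
    (∀ τ : Fin n → ℝ, (∀ j, 0 ≤ τ j) → (∀ j, τ0 j ≤ τ j) →
      ∀ j, (PhiX S τ0 ∘ PhiS S w) τ j ≤ τ j) := by
  have hST : ∀ (i : Fin n) (j : Fin m), 0 ≤ Sᵀ i j := fun i j => hS j i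
  -- (iv) boundedness, proved first since it's used at the end
  have hbound : ∀ τ : Fin n → ℝ, (∀ j, 0 ≤ τ j) →
      ∀ j, (PhiX S τ0 ∘ PhiS S w) τ j ≤ τ0 j := by
    intro τ hτ j
    have hs := fun i => (phiS_pos S hS w hw τ hτ i).le
    have hd := phiX_denom_pos S hS τ0 hτ0 (PhiS S w τ) hs j
    have hA := mulVec_nonneg' Sᵀ hST (PhiS S w τ) hs j
    simp only [Function.comp, PhiX]
    rw [div_le_iff₀ hd]
    have h0 := hτ0 j
    have : τ0 j * (1 / τ0 j) = 1 := by field_simp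
    nlinarith
  refine ⟨?_, ?_, ?_, hbound, ?_⟩
  · -- positivity
    intro τ hτ j
    have hs := fun i => (phiS_pos S hS w hw τ hτ i).le
    have hd := phiX_denom_pos S hS τ0 hτ0 (PhiS S w τ) hs j
    simp only [Function.comp, PhiX]
    positivity
  · -- monotonicity
    intro τ τ' hτ' hle j
    have hτ : ∀ j, 0 ≤ τ j := fun j => (hτ' j).trans (hle j)
    -- PhiS τ ≤ PhiS τ' entrywise
    have hS1 : ∀ i, PhiS S w τ i ≤ PhiS S w τ' i := by
      intro i
      have h1 := phiS_denom_pos S hS w hw τ' hτ' i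
      exact one_div_le_one_div_of_le h1
        (by gcongr; exact mulVec_mono' S hS τ τ' hle i)
    have hs := fun i => (phiS_pos S hS w hw τ hτ i).le
    have hd := phiX_denom_pos S hS τ0 hτ0 (PhiS S w τ) hs j
    simp only [Function.comp, PhiX]
    apply one_div_le_one_div_of_le hd
    gcongr
    exact mulVec_mono' Sᵀ hST _ _ hS1 j
  · -- strict scalability
    intro α hα τ hτ j
    have hα0 : 0 < α := lt_trans one_pos hα
    have hατ : ∀ j, 0 ≤ (α • τ) j := fun j => mul_nonneg hα0.le (hτ j)
    -- PhiS τ ≤ α • PhiS (α • τ) entrywise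
    have hkey : ∀ i, PhiS S w τ i ≤ α * PhiS S w (α • τ) i := by
      intro i
      have hmv : S.mulVec (α • τ) i = α * S.mulVec τ i := by
        rw [mulVec_smul]; rfl
      have hc := mulVec_nonneg' S hS τ hτ i
      have hwpos : (0:ℝ) < 1 / w i := by have := hw i; positivity
      have h1 := phiS_denom_pos S hS w hw τ hτ i
      have h2 := phiS_denom_pos S hS w hw (α • τ) hατ i
      unfold PhiS
      rw [hmv] at h2 ⊢
      rw [mul_one_div, div_le_div_iff₀ h1 h2]
      nlinarith
    have hs := fun i => (phiS_pos S hS w hw τ hτ i).le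
    have hsα := fun i => (phiS_pos S hS w hw (α • τ) hατ i).le
    have hd := phiX_denom_pos S hS τ0 hτ0 (PhiS S w τ) hs j
    have hdα := phiX_denom_pos S hS τ0 hτ0 (PhiS S w (α • τ)) hsα j
    simp only [Function.comp, PhiX]
    -- B ≤ α * A where A = Sᵀ (PhiS (ατ)) j, B = Sᵀ (PhiS τ) j
    have hBA : Sᵀ.mulVec (PhiS S w τ) j ≤ α * Sᵀ.mulVec (PhiS S w (α • τ)) j := by
      have := mulVec_mono' Sᵀ hST (α • PhiS S w (α • τ)) (PhiS S w τ) hkey j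
      rwa [mulVec_smul] at this
    have hτ0j : (0:ℝ) < 1 / τ0 j := by have := hτ0 j; positivity
    rw [mul_one_div, div_lt_div_iff₀ hdα hd]
    nlinarith
  · -- Φ(τ) ≤ τ for τ ≥ τ0
    intro τ hτ hτ0le j
    exact (hbound τ hτ j).trans (hτ0le j)
end

section
/- Let A be a nonzero real m×n matrix and θ_s, θ_x ∈ (0,1]. Suppose Γ(θ_s,θ_x) > ‖A‖₂²/‖A‖_F². Then for every prior variance τ₀ > 0 and noise variance v_w > 0, if (τ_s, τ_x) are scalar GGAMP fixed-point stepsizes for (A, τ₀, v_w), then every complex eigenvalue of the GGAMP iteration matrix H has modulus strictly less than 1 (i.e., damped scalar-stepsize Gaussian GAMP converges for any τ₀ and v_w). -/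
open Matrix

/-- Squared Frobenius norm of a real matrix. -/
noncomputable def frobSq {m n : ℕ} (A : Matrix (Fin m) (Fin n) ℝ) : ℝ :=
  ∑ i, ∑ j, (A i j) ^ 2

/-- Squared spectral (ℓ²-operator) norm of a real matrix. -/
noncomputable def specSq {m n : ℕ} (A : Matrix (Fin m) (Fin n) ℝ) : ℝ :=
  ‖LinearMap.toContinuousLinearMap (Matrix.toEuclideanLin A)‖ ^ 2

/-- The damping threshold `Γ(θ_s, θ_x)` of Theorem 2. -/
noncomputable def Gam (m n : ℕ) (θs θx : ℝ) : ℝ :=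
  if n ≤ m then 2 * ((2 - θs) * m + θs * n) / (θs * θx * m * n)
  else 2 * ((2 - θx) * n + θx * m) / (θs * θx * m * n)

/-- `(τs, τx)` are scalar GGAMP fixed-point stepsizes for `(A, τ0, vw)`. -/
noncomputable def IsFixedStepsizes {m n : ℕ} (A : Matrix (Fin m) (Fin n) ℝ)
    (τ0 vw τs τx : ℝ) : Prop :=
  0 < τs ∧ 0 < τx ∧
    1 / τs = (frobSq A / m) * τx + vw ∧
    1 / τx = (frobSq A / n) * τs + 1 / τ0

/-- The `(m+n)×(m+n)` GGAMP iteration matrix `H`. -/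
noncomputable def iterMat {m n : ℕ} (A : Matrix (Fin m) (Fin n) ℝ)
    (θs θx τs τx : ℝ) : Matrix (Fin m ⊕ Fin n) (Fin m ⊕ Fin n) ℝ :=
  let qs : ℝ := τs * (frobSq A / m) * τx
  let qx : ℝ := τx * (frobSq A / n) * τs
  let ds : ℝ := (1 - θs) + θs * qs
  let dx : ℝ := (1 - θx) + θx * qx
  let F : Matrix (Fin m) (Fin n) ℝ := Real.sqrt (θs * θx * τs * τx) • A
  Matrix.fromBlocks (ds • (1 : Matrix (Fin m) (Fin m) ℝ)) F
    (-(ds • Fᵀ)) (dx • (1 : Matrix (Fin n) (Fin n) ℝ) - Fᵀ * F)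

/-- `μ ∈ ℂ` is an eigenvalue of the real matrix `M`. -/
def HasEig {N : Type*} [Fintype N] (M : Matrix N N ℝ) (μ : ℂ) : Prop :=
  ∃ v : N → ℂ, v ≠ 0 ∧ (M.map (fun x => (x : ℂ))).mulVec v = μ • v

/-- Operator norm bound for `mulVec` in terms of the squared spectral norm. -/
lemma spec_bound {m n : ℕ} (A : Matrix (Fin m) (Fin n) ℝ) (x : Fin n → ℝ) :
    ∑ i, (A.mulVec x i) ^ 2 ≤ specSq A * ∑ j, (x j) ^ 2 := by
  set T := LinearMap.toContinuousLinearMap (Matrix.toEuclideanLin A)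
  set y : EuclideanSpace ℝ (Fin n) := (WithLp.equiv 2 (Fin n → ℝ)).symm x
  have h1 : ‖T y‖ ≤ ‖T‖ * ‖y‖ := T.le_opNorm y
  have hTy : T y = (WithLp.equiv 2 (Fin m → ℝ)).symm (A.mulVec x) := rfl
  have hn1 : ‖T y‖ ^ 2 = ∑ i, (A.mulVec x i) ^ 2 := by
    rw [hTy, EuclideanSpace.norm_eq]
    rw [Real.sq_sqrt (by positivity)]
    simp only [Real.norm_eq_abs, sq_abs]
    rfl
  have hn2 : ‖y‖ ^ 2 = ∑ j, (x j) ^ 2 := by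
    rw [EuclideanSpace.norm_eq, Real.sq_sqrt (by positivity)]
    simp only [Real.norm_eq_abs, sq_abs]
    rfl
  calc ∑ i, (A.mulVec x i) ^ 2 = ‖T y‖ ^ 2 := hn1.symm
    _ ≤ (‖T‖ * ‖y‖) ^ 2 := by nlinarith [norm_nonneg (T y), norm_nonneg T, norm_nonneg y]
    _ = specSq A * ∑ j, (x j) ^ 2 := by rw [mul_pow, specSq, hn2]

/-- Roots of a real quadratic `z² - bz + c` with `0 < c < 1` and `|b| < 1 + c`
lie strictly inside the unit circle. -/
lemma quad_root_abs_lt_one (b c : ℝ) (hc0 : 0 < c) (hc1 : c < 1) (hb : |b| < 1 + c)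
    (μ : ℂ) (h : μ ^ 2 - (b : ℂ) * μ + (c : ℂ) = 0) : ‖μ‖ < 1 := by
  obtain ⟨hb1, hb2⟩ := abs_lt.1 hb
  set x := μ.re with hx
  set y := μ.im with hy
  have hre : x * x - y * y - b * x + c = 0 := by
    have := congrArg Complex.re h
    simpa [pow_two, Complex.mul_re, Complex.sub_re, Complex.add_re] using this
  have him : y * (2 * x - b) = 0 := by
    have := congrArg Complex.im h
    simp [pow_two, Complex.mul_im, Complex.sub_im, Complex.add_im] at this
    linarith
  have hxy : x ^ 2 + y ^ 2 < 1 := by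
    rcases mul_eq_zero.1 him with hy0 | hxb
    · have hx2 : x ^ 2 < 1 := by
        rcases le_or_gt 1 x with h1 | h1
        · exfalso
          have hp : (0:ℝ) ≤ (x - 1) * (x - c) :=
            mul_nonneg (by linarith) (by linarith)
          nlinarith [hre, hy0]
        · rcases le_or_gt x (-1) with h2 | h2
          · exfalso
            have hp : (0:ℝ) ≤ (-(x + 1)) * (-(x + c)) :=
              mul_nonneg (by linarith) (by linarith)
            nlinarith [hre, hy0]
          · nlinarith
      nlinarith [sq_nonneg y, hy0]
    · have h2x : b = 2 * x := by linarith
      nlinarith [hre]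
  have habs : ‖μ‖ ^ 2 = x ^ 2 + y ^ 2 := by
    rw [Complex.sq_norm, Complex.normSq_apply]; ring
  nlinarith [norm_nonneg μ]

lemma key_ineq (θa θb qa qb : ℝ) (ha0 : 0 < θa) (ha1 : θa ≤ 1) (hb0 : 0 < θb)
    (hb1 : θb ≤ 1) (hqa0 : 0 < qa) (hqa1 : qa < 1) (hqb0 : 0 < qb) (hqb1 : qb < 1) :
    2 * ((2 - θa) * qb + θa * qa)
      ≤ (1 + ((1 - θa) + θa * qa)) * (1 + ((1 - θb) + θb * qb)) := by
  have h1 : (0:ℝ) ≤ (1 - θb) * (1 - qb) * ((2 - θa) + θa * qa) := by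
    apply mul_nonneg (mul_nonneg (by linarith) (by linarith))
    nlinarith
  have h2 : (0:ℝ) ≤ (1 - qb) * ((2 - θa) - θa * qa) := by
    apply mul_nonneg (by linarith)
    nlinarith
  nlinarith [h1, h2]

/-- **Theorem 2 (sufficiency).** If `Γ(θ_s,θ_x) > ‖A‖₂²/‖A‖_F²`, then for every
prior variance `τ₀ > 0` and noise variance `v_w > 0`, at the fixed-point
stepsizes every eigenvalue of the GGAMP iteration matrix lies strictly inside
the unit circle. -/
theorem ggamp_scalar_convergence_sufficient {m n : ℕ}
    (A : Matrix (Fin m) (Fin n) ℝ) (hA : A ≠ 0)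
    (θs θx : ℝ) (hθs : θs ∈ Set.Ioc (0 : ℝ) 1) (hθx : θx ∈ Set.Ioc (0 : ℝ) 1)
    (hΓ : specSq A / frobSq A < Gam m n θs θx) :
    ∀ τ0 vw τs τx : ℝ, 0 < τ0 → 0 < vw →
      IsFixedStepsizes A τ0 vw τs τx →
      ∀ μ : ℂ, HasEig (iterMat A θs θx τs τx) μ → ‖μ‖ < 1 := by
  obtain ⟨hθs0, hθs1⟩ := hθs
  obtain ⟨hθx0, hθx1⟩ := hθx
  intro τ0 vw τs τx hτ0 hvw hfix μ hEigAll
  obtain ⟨hτs, hτx, e1, e2⟩ := hfix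
  obtain ⟨v, hv0, hEig⟩ := hEigAll
  -- basic positivity facts
  have hA' : ∃ i j, A i j ≠ 0 := by
    by_contra h
    push_neg at h
    exact hA (Matrix.ext fun i j => h i j)
  obtain ⟨i₀, j₀, hij₀⟩ := hA'
  have hm : 0 < (m : ℝ) := by exact_mod_cast i₀.pos
  have hn : 0 < (n : ℝ) := by exact_mod_cast j₀.pos
  have hφ : 0 < frobSq A := by
    have h1 : (0:ℝ) < A i₀ j₀ ^ 2 := by positivity
    have h2 : A i₀ j₀ ^ 2 ≤ ∑ j', A i₀ j' ^ 2 :=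
      Finset.single_le_sum (f := fun j' => A i₀ j' ^ 2) (fun _ _ => sq_nonneg _)
        (Finset.mem_univ j₀)
    have h3 : ∑ j', A i₀ j' ^ 2 ≤ frobSq A :=
      Finset.single_le_sum (f := fun i' => ∑ j', A i' j' ^ 2)
        (fun _ _ => Finset.sum_nonneg fun _ _ => sq_nonneg _) (Finset.mem_univ i₀)
    linarith
  have hIter : iterMat A θs θx τs τx =
      Matrix.fromBlocks
        (((1 - θs) + θs * (τs * (frobSq A / m) * τx)) • (1 : Matrix (Fin m) (Fin m) ℝ))
        (Real.sqrt (θs * θx * τs * τx) • A)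
        (-(((1 - θs) + θs * (τs * (frobSq A / m) * τx)) •
            (Real.sqrt (θs * θx * τs * τx) • A)ᵀ))
        ((((1 - θx) + θx * (τx * (frobSq A / n) * τs)) • (1 : Matrix (Fin n) (Fin n) ℝ))
          - (Real.sqrt (θs * θx * τs * τx) • A)ᵀ * (Real.sqrt (θs * θx * τs * τx) • A)) := rfl
  -- the step quantities
  set qs : ℝ := τs * (frobSq A / m) * τx with hqs_def
  set qx : ℝ := τx * (frobSq A / n) * τs with hqx_def
  set ds : ℝ := (1 - θs) + θs * qs with hds_def
  set dx : ℝ := (1 - θx) + θx * qx with hdx_def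
  set c : ℝ := θs * θx * τs * τx with hc_def
  have hc : 0 < c := by positivity
  have hqs0 : 0 < qs := by positivity
  have hqx0 : 0 < qx := by positivity
  have hqs1 : qs < 1 := by
    have h : (frobSq A / m) * τx = 1 / τs - vw := by linarith only [e1]
    have h' : qs = τs * (1 / τs - vw) := by rw [hqs_def, mul_assoc, h]
    rw [h', mul_sub, mul_one_div, div_self hτs.ne']
    have hp : 0 < τs * vw := mul_pos hτs hvw
    linarith only [hp]
  have hqx1 : qx < 1 := by
    have h : (frobSq A / n) * τs = 1 / τx - 1 / τ0 := by linarith only [e2]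
    have h' : qx = τx * (1 / τx - 1 / τ0) := by rw [hqx_def, mul_assoc, h]
    rw [h', mul_sub, mul_one_div, div_self hτx.ne']
    have hp : 0 < τx * (1 / τ0) := by positivity
    linarith only [hp]
  have hds0 : 0 < ds := by
    have hp : 0 < θs * qs := mul_pos hθs0 hqs0
    rw [hds_def]; linarith only [hθs1, hp]
  have hds1 : ds < 1 := by
    have hp : θs * qs < θs * 1 := (mul_lt_mul_iff_right₀ hθs0).2 hqs1
    rw [hds_def]; linarith only [hp]
  have hdx0 : 0 < dx := by
    have hp : 0 < θx * qx := mul_pos hθx0 hqx0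
    rw [hdx_def]; linarith only [hθx1, hp]
  have hdx1 : dx < 1 := by
    have hp : θx * qx < θx * 1 := (mul_lt_mul_iff_right₀ hθx0).2 hqx1
    rw [hdx_def]; linarith only [hp]
  -- the key spectral-norm inequality
  have hspec0 : 0 ≤ specSq A := by rw [specSq]; exact sq_nonneg _
  have hKey : c * specSq A < (1 + ds) * (1 + dx) := by
    have hspec : specSq A < Gam m n θs θx * frobSq A := (div_lt_iff₀ hφ).1 hΓ
    have h1 : c * specSq A < c * (Gam m n θs θx * frobSq A) :=
      (mul_lt_mul_iff_right₀ hc).2 hspec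
    have h2 : c * (Gam m n θs θx * frobSq A) ≤ (1 + ds) * (1 + dx) := by
      rw [Gam]
      split_ifs with hmn
      · have heq : c * (2 * ((2 - θs) * m + θs * n) / (θs * θx * m * n) * frobSq A)
            = 2 * ((2 - θs) * qx + θs * qs) := by
          rw [hc_def, hqs_def, hqx_def]
          field_simp
        rw [heq, hds_def, hdx_def]
        exact key_ineq θs θx qs qx hθs0 hθs1 hθx0 hθx1 hqs0 hqs1 hqx0 hqx1
      · have heq : c * (2 * ((2 - θx) * n + θx * m) / (θs * θx * m * n) * frobSq A)
            = 2 * ((2 - θx) * qs + θx * qx) := by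
          rw [hc_def, hqs_def, hqx_def]
          field_simp
        rw [heq, hds_def, hdx_def]
        have := key_ineq θx θs qx qs hθx0 hθx1 hθs0 hθs1 hqx0 hqx1 hqs0 hqs1
        linarith only [this]
    linarith only [h1, h2]
  -- set up the complexified blocks
  set F : Matrix (Fin m) (Fin n) ℝ := Real.sqrt c • A with hF_def
  set B : Matrix (Fin m) (Fin n) ℂ := F.map (fun x : ℝ => (x : ℂ)) with hB_def
  set u : Fin m → ℂ := fun i => v (Sum.inl i) with hu_def
  set w : Fin n → ℂ := fun j => v (Sum.inr j) with hw_def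
  have hv : v = Sum.elim u w := by funext k; cases k <;> rfl
  have hmap : (iterMat A θs θx τs τx).map (fun x : ℝ => (x : ℂ)) =
      Matrix.fromBlocks ((ds : ℂ) • (1 : Matrix (Fin m) (Fin m) ℂ)) B
        (-((ds : ℂ) • Bᵀ)) ((dx : ℂ) • (1 : Matrix (Fin n) (Fin n) ℂ) - Bᵀ * B) := by
    rw [hIter]
    ext i j
    rcases i with i | i <;> rcases j with j | j
    · simp only [Matrix.map_apply, Matrix.fromBlocks_apply₁₁, Matrix.smul_apply,
        Matrix.one_apply, smul_eq_mul]
      by_cases h : i = j <;> simp [h]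
    · simp only [Matrix.map_apply, Matrix.fromBlocks_apply₁₂, hB_def]
    · simp only [Matrix.map_apply, Matrix.fromBlocks_apply₂₁, Matrix.neg_apply,
        Matrix.smul_apply, Matrix.transpose_apply, smul_eq_mul, hB_def]
      push_cast
      ring
    · simp only [Matrix.map_apply, Matrix.fromBlocks_apply₂₂, Matrix.sub_apply,
        Matrix.smul_apply, Matrix.one_apply, Matrix.mul_apply, Matrix.transpose_apply,
        smul_eq_mul, hB_def, apply_ite (fun x : ℝ => (x : ℂ))]
      push_cast
      by_cases h : i = j <;> simp [h]
  rw [hmap, hv, Matrix.fromBlocks_mulVec] at hEig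
  simp only [Matrix.smul_mulVec, Matrix.one_mulVec, Matrix.neg_mulVec,
    Matrix.sub_mulVec, ← Matrix.mulVec_mulVec] at hEig
  have E1 : ∀ i, (ds : ℂ) * u i + (B *ᵥ w) i = μ * u i := by
    intro i
    have h := congrFun hEig (Sum.inl i)
    simpa using h
  have E2 : ∀ j, -((ds : ℂ) * (Bᵀ *ᵥ u) j) + ((dx : ℂ) * w j - (Bᵀ *ᵥ (B *ᵥ w)) j)
      = μ * w j := by
    intro j
    have h := congrFun hEig (Sum.inr j)
    simpa using h
  by_cases hw0 : w = 0
  · -- the eigenvector lives in the `u` block, so `μ = ds`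
    have hu0 : u ≠ 0 := by
      intro h
      apply hv0
      rw [hv, h, hw0]
      funext k; cases k <;> rfl
    obtain ⟨i, hi⟩ := Function.ne_iff.1 hu0
    have h := E1 i
    rw [hw0, Matrix.mulVec_zero] at h
    simp only [Pi.zero_apply, add_zero] at h
    have hμ : μ = (ds : ℂ) := by
      have := mul_right_cancel₀ hi (by rw [h] : (ds : ℂ) * u i = μ * u i)
      exact this.symm
    rw [hμ, Complex.norm_real, Real.norm_eq_abs, abs_of_pos hds0]
    exact hds1
  · -- main case: `w ≠ 0`
    have hBw : B *ᵥ w = (μ - (ds : ℂ)) • u := by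
      funext i
      simp only [Pi.smul_apply, smul_eq_mul]
      linear_combination E1 i
    have hM : Bᵀ *ᵥ (B *ᵥ w) = (μ - (ds : ℂ)) • (Bᵀ *ᵥ u) := by
      rw [hBw, Matrix.mulVec_smul]
    have hSS : ∀ j, μ * (Bᵀ *ᵥ (B *ᵥ w)) j = ((dx : ℂ) - μ) * (μ - (ds : ℂ)) * w j := by
      intro j
      have h2 := E2 j
      have h3 := congrFun hM j
      simp only [Pi.smul_apply, smul_eq_mul] at h3
      linear_combination ((ds : ℂ) - μ) * h2 + (ds : ℂ) * h3
    -- inner products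
    set g : Fin m → ℂ := B *ᵥ w with hg_def
    have hBreal : ∀ i j, (starRingEnd ℂ) (B i j) = B i j := fun i j => by
      rw [hB_def]; exact Complex.conj_ofReal _
    have hconj_g : ∀ i, (starRingEnd ℂ) (g i) = ∑ j, B i j * (starRingEnd ℂ) (w j) := by
      intro i
      rw [hg_def]
      simp only [Matrix.mulVec, dotProduct, map_sum]
      exact Finset.sum_congr rfl fun j _ => by rw [_root_.map_mul, hBreal]
    have hSwap : ∑ j, (starRingEnd ℂ) (w j) * (Bᵀ *ᵥ g) j
        = ∑ i, g i * (starRingEnd ℂ) (g i) := by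
      calc ∑ j, (starRingEnd ℂ) (w j) * (Bᵀ *ᵥ g) j
          = ∑ j, ∑ i, (starRingEnd ℂ) (w j) * (B i j * g i) := by
            refine Finset.sum_congr rfl fun j _ => ?_
            simp only [Matrix.mulVec, dotProduct, Matrix.transpose_apply,
              Finset.mul_sum]
        _ = ∑ i, ∑ j, (starRingEnd ℂ) (w j) * (B i j * g i) := Finset.sum_comm
        _ = ∑ i, g i * (starRingEnd ℂ) (g i) := by
            refine Finset.sum_congr rfl fun i _ => ?_
            rw [hconj_g, Finset.mul_sum]
            exact Finset.sum_congr rfl fun j _ => by ring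
    set Sr : ℝ := ∑ i, Complex.normSq (g i) with hSr_def
    set Wr : ℝ := ∑ j, Complex.normSq (w j) with hWr_def
    have hSrC : ∑ j, (starRingEnd ℂ) (w j) * (Bᵀ *ᵥ g) j = (Sr : ℂ) := by
      rw [hSwap, hSr_def]
      push_cast
      exact Finset.sum_congr rfl fun i _ => (Complex.mul_conj (g i))
    have hWrC : ∑ j, (starRingEnd ℂ) (w j) * w j = (Wr : ℂ) := by
      rw [hWr_def]
      push_cast
      exact Finset.sum_congr rfl fun j _ => by rw [mul_comm, Complex.mul_conj]
    have hWrpos : 0 < Wr := by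
      obtain ⟨j, hj⟩ := Function.ne_iff.1 hw0
      have h1 : 0 < Complex.normSq (w j) := Complex.normSq_pos.2 hj
      have h2 : Complex.normSq (w j) ≤ Wr :=
        Finset.single_le_sum (f := fun j => Complex.normSq (w j))
          (fun _ _ => Complex.normSq_nonneg _) (Finset.mem_univ j)
      linarith
    have hμS : μ * (Sr : ℂ) = ((dx : ℂ) - μ) * (μ - (ds : ℂ)) * (Wr : ℂ) := by
      rw [← hSrC, ← hWrC, Finset.mul_sum, Finset.mul_sum]
      refine Finset.sum_congr rfl fun j _ => ?_
      have := hSS j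
      calc μ * ((starRingEnd ℂ) (w j) * (Bᵀ *ᵥ g) j)
          = (starRingEnd ℂ) (w j) * (μ * (Bᵀ *ᵥ (B *ᵥ w)) j) := by rw [hg_def]; ring
        _ = (starRingEnd ℂ) (w j) * (((dx : ℂ) - μ) * (μ - (ds : ℂ)) * w j) := by rw [this]
        _ = ((dx : ℂ) - μ) * (μ - (ds : ℂ)) * ((starRingEnd ℂ) (w j) * w j) := by ring
    -- bound Sr
    have hSr_bound : Sr ≤ c * specSq A * Wr := by
      set a : Fin n → ℝ := fun j => (w j).re with ha_def
      set bb : Fin n → ℝ := fun j => (w j).im with hbb_def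
      have hgre : ∀ i, (g i).re = F.mulVec a i := by
        intro i
        rw [hg_def]
        simp only [Matrix.mulVec, dotProduct, Complex.re_sum]
        refine Finset.sum_congr rfl fun j _ => ?_
        rw [hB_def]
        simp [Complex.mul_re, ha_def]
      have hgim : ∀ i, (g i).im = F.mulVec bb i := by
        intro i
        rw [hg_def]
        simp only [Matrix.mulVec, dotProduct, Complex.im_sum]
        refine Finset.sum_congr rfl fun j _ => ?_
        rw [hB_def]
        simp [Complex.mul_im, hbb_def]
      have hFa : ∀ x : Fin n → ℝ, ∑ i, (F.mulVec x i) ^ 2 ≤ c * specSq A * ∑ j, (x j) ^ 2 := by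
        intro x
        have h1 : F.mulVec x = Real.sqrt c • (A.mulVec x) := by
          rw [hF_def, Matrix.smul_mulVec]
        have h2 : ∑ i, (F.mulVec x i) ^ 2 = c * ∑ i, (A.mulVec x i) ^ 2 := by
          rw [h1, Finset.mul_sum]
          refine Finset.sum_congr rfl fun i _ => ?_
          simp only [Pi.smul_apply, smul_eq_mul, mul_pow]
          rw [Real.sq_sqrt hc.le]
        rw [h2]
        exact le_of_le_of_eq ((mul_le_mul_iff_right₀ hc).2 (spec_bound A x))
          (mul_assoc c (specSq A) _).symm
      have hSr_split : Sr = ∑ i, (F.mulVec a i) ^ 2 + ∑ i, (F.mulVec bb i) ^ 2 := by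
        rw [hSr_def, ← Finset.sum_add_distrib]
        refine Finset.sum_congr rfl fun i _ => ?_
        rw [Complex.normSq_apply, ← hgre, ← hgim]
        ring
      have hWr_split : Wr = ∑ j, (a j) ^ 2 + ∑ j, (bb j) ^ 2 := by
        rw [hWr_def, ← Finset.sum_add_distrib]
        refine Finset.sum_congr rfl fun j _ => ?_
        rw [Complex.normSq_apply]
        simp only [ha_def, hbb_def]
        ring
      calc Sr = ∑ i, (F.mulVec a i) ^ 2 + ∑ i, (F.mulVec bb i) ^ 2 := hSr_split
        _ ≤ c * specSq A * ∑ j, (a j) ^ 2 + c * specSq A * ∑ j, (bb j) ^ 2 :=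
            add_le_add (hFa a) (hFa bb)
        _ = c * specSq A * Wr := by rw [hWr_split]; ring
    -- the eigenvalue quadratic
    set r : ℝ := Sr / Wr with hr_def
    have hr0 : 0 ≤ r := by
      apply div_nonneg _ hWrpos.le
      exact Finset.sum_nonneg fun _ _ => Complex.normSq_nonneg _
    have hr1 : r ≤ c * specSq A := (div_le_iff₀ hWrpos).2 hSr_bound
    have hKeq : ((dx : ℂ) - μ) * (μ - (ds : ℂ)) = μ * (r : ℂ) := by
      have hWne : (Wr : ℂ) ≠ 0 := by
        simp only [ne_eq, Complex.ofReal_eq_zero]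
        exact hWrpos.ne'
      apply mul_right_cancel₀ hWne
      rw [← hμS, hr_def]
      push_cast
      field_simp
    have hquad : μ ^ 2 - ((ds + dx - r : ℝ) : ℂ) * μ + ((ds * dx : ℝ) : ℂ) = 0 := by
      push_cast
      linear_combination (-1 : ℂ) * hKeq
    have hc₀0 : 0 < ds * dx := mul_pos hds0 hdx0
    have hc₀1 : ds * dx < 1 := by
      have := mul_lt_mul' hds1.le hdx1 hdx0.le one_pos
      linarith only [this]
    have habs_b : |ds + dx - r| < 1 + ds * dx := by
      rw [abs_lt]
      constructor
      · linarith only [hr1, hKey]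
      · have hp : 0 < (1 - ds) * (1 - dx) :=
          mul_pos (by linarith only [hds1]) (by linarith only [hdx1])
        linarith only [hp, hr0]
    exact quad_root_abs_lt_one (ds + dx - r) (ds * dx) hc₀0 hc₀1 habs_b μ hquad
end

section
/- Let A be a nonzero real m×n matrix and θ_s, θ_x ∈ (0,1]. Suppose Γ(θ_s,θ_x) < ‖A‖₂²/‖A‖_F². Then there exist a prior variance τ₀ > 0, a noise variance v_w > 0, and scalar GGAMP fixed-point stepsizes (τ_s, τ_x) for (A, τ₀, v_w), such that the GGAMP iteration matrix H has a complex eigenvalue of modulus strictly greater than 1 (i.e., damped scalar-stepsize Gaussian GAMP diverges for sufficiently large τ₀/v_w). -/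
set_option maxHeartbeats 1600000


open Matrix

/-- Existence of a top singular vector. -/
lemma exists_top_singular {m n : ℕ} (A : Matrix (Fin m) (Fin n) ℝ) (hA : A ≠ 0) (hn : 0 < n) :
    ∃ v : Fin n → ℝ, v ≠ 0 ∧ Aᵀ *ᵥ (A *ᵥ v) = specSq A • v ∧ 0 < specSq A := by
  classical
  set T : EuclideanSpace ℝ (Fin n) →L[ℝ] EuclideanSpace ℝ (Fin m) :=
    LinearMap.toContinuousLinearMap (Matrix.toEuclideanLin A) with hTdef
  have hT0 : T ≠ 0 := by
    intro h
    apply hA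
    have : Matrix.toEuclideanLin A = 0 := by
      exact (LinearEquiv.map_eq_zero_iff LinearMap.toContinuousLinearMap).mp h
    exact (LinearEquiv.map_eq_zero_iff Matrix.toEuclideanLin).mp this
  set S : EuclideanSpace ℝ (Fin n) →L[ℝ] EuclideanSpace ℝ (Fin n) :=
    (ContinuousLinearMap.adjoint T).comp T with hSdef
  have hS : IsSelfAdjoint S := by
    rw [ContinuousLinearMap.isSelfAdjoint_iff', hSdef, ContinuousLinearMap.adjoint_comp,
      ContinuousLinearMap.adjoint_adjoint]
  have hf : ∀ x, S.reApplyInnerSelf x = ‖T x‖ ^ 2 := by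
    intro x
    rw [ContinuousLinearMap.reApplyInnerSelf]
    show (inner ℝ (S x) x : ℝ) = _
    rw [hSdef]
    show (inner ℝ ((ContinuousLinearMap.adjoint T) (T x)) x : ℝ) = _
    rw [ContinuousLinearMap.adjoint_inner_left, real_inner_self_eq_norm_sq]
  have hsne : (Metric.sphere (0 : EuclideanSpace ℝ (Fin n)) 1).Nonempty := by
    refine ⟨EuclideanSpace.single ⟨0, hn⟩ (1 : ℝ), ?_⟩
    simp [mem_sphere_zero_iff_norm, EuclideanSpace.norm_single]
  obtain ⟨x₀, hx₀s, hmax⟩ := (isCompact_sphere (0 : EuclideanSpace ℝ (Fin n)) 1).exists_isMaxOn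
    hsne S.reApplyInnerSelf_continuous.continuousOn
  have hx₀n : ‖x₀‖ = 1 := mem_sphere_zero_iff_norm.mp hx₀s
  have hx₀ne : x₀ ≠ 0 := by intro h; rw [h] at hx₀n; simp at hx₀n
  have hextr : IsLocalExtrOn S.reApplyInnerSelf
      (Metric.sphere (0 : EuclideanSpace ℝ (Fin n)) ‖x₀‖) x₀ := by
    rw [hx₀n]; exact Or.inr hmax.localize
  have hev := hS.hasEigenvector_of_isLocalExtrOn hx₀ne hextr
  have heig : S x₀ = (S.rayleighQuotient x₀) • x₀ := by
    have := hev.apply_eq_smul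
    simpa using this
  have hray : S.rayleighQuotient x₀ = ‖T x₀‖ ^ 2 := by
    rw [ContinuousLinearMap.rayleighQuotient, hf, hx₀n]
    simp
  have hTx₀ : ‖T x₀‖ = ‖T‖ := by
    have h1 : ‖T x₀‖ ≤ ‖T‖ := by
      calc ‖T x₀‖ ≤ ‖T‖ * ‖x₀‖ := T.le_opNorm x₀
      _ = ‖T‖ := by rw [hx₀n, mul_one]
    have h2 : ‖T‖ ≤ ‖T x₀‖ := by
      refine ContinuousLinearMap.opNorm_le_bound T (norm_nonneg _) ?_
      intro x
      rcases eq_or_ne x 0 with h | h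
      · simp [h]
      · have hxn : ‖x‖ ≠ 0 := norm_ne_zero_iff.mpr h
        set y : EuclideanSpace ℝ (Fin n) := ‖x‖⁻¹ • x with hy
        have hys : y ∈ Metric.sphere (0 : EuclideanSpace ℝ (Fin n)) 1 := by
          rw [mem_sphere_zero_iff_norm, hy, norm_smul]
          simp [abs_of_nonneg (norm_nonneg x), inv_mul_cancel₀ hxn]
        have hmy : S.reApplyInnerSelf y ≤ S.reApplyInnerSelf x₀ := hmax hys
        rw [hf, hf] at hmy
        have hle : ‖T y‖ ≤ ‖T x₀‖ := by
          nlinarith [norm_nonneg (T y), norm_nonneg (T x₀)]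
        have hTy : ‖T y‖ = ‖x‖⁻¹ * ‖T x‖ := by
          rw [hy, T.map_smul, norm_smul]
          simp [abs_of_nonneg (norm_nonneg x)]
        rw [hTy] at hle
        calc ‖T x‖ = ‖x‖ * (‖x‖⁻¹ * ‖T x‖) := by field_simp
        _ ≤ ‖x‖ * ‖T x₀‖ := by
            apply mul_le_mul_of_nonneg_left hle (norm_nonneg x)
        _ = ‖T x₀‖ * ‖x‖ := by ring
    linarith
  have hspec : specSq A = S.rayleighQuotient x₀ := by
    rw [hray, specSq, hTx₀, hTdef]
  have hpos : 0 < specSq A := by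
    rw [specSq]
    have : 0 < ‖T‖ := norm_pos_iff.mpr hT0
    rw [hTdef] at this
    positivity
  refine ⟨(WithLp.equiv 2 (Fin n → ℝ)) x₀, ?_, ?_, hpos⟩
  · intro h
    apply hx₀ne
    have := congrArg (WithLp.equiv 2 (Fin n → ℝ)).symm h
    simpa using this
  · have hadj : ContinuousLinearMap.adjoint T =
        LinearMap.toContinuousLinearMap (Matrix.toEuclideanLin Aᵀ) := by
      rw [hTdef, ← LinearMap.adjoint_toContinuousLinearMap]
      congr 1
      rw [← Matrix.toEuclideanLin_conjTranspose_eq_adjoint,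
        Matrix.conjTranspose_eq_transpose_of_trivial]
    have h1 : S x₀ = specSq A • x₀ := by rw [heig, hspec]
    rw [hSdef] at h1
    have h2 : (ContinuousLinearMap.adjoint T) (T x₀) = specSq A • x₀ := h1
    rw [hadj, hTdef] at h2
    have h3 : Matrix.toEuclideanLin Aᵀ (Matrix.toEuclideanLin A x₀) = specSq A • x₀ := h2
    have := congrArg (WithLp.equiv 2 (Fin n → ℝ)) h3
    simpa [Matrix.toEuclideanLin_apply] using this

/-- If `p(-1) < 0` for the monic quadratic `λ² - bλ + c`, it has a real root `< -1`. -/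
lemma exists_root_lt_neg_one {b c : ℝ} (h : 1 + b + c < 0) :
    ∃ lam : ℝ, lam < -1 ∧ lam ^ 2 - b * lam + c = 0 := by
  set D : ℝ := b ^ 2 - 4 * c with hD
  have hDgt : (b + 2) ^ 2 < D := by nlinarith
  have hD0 : 0 ≤ D := le_trans (sq_nonneg _) hDgt.le
  have hsq : Real.sqrt D ^ 2 = D := Real.sq_sqrt hD0
  refine ⟨(b - Real.sqrt D) / 2, ?_, ?_⟩
  · have h1 : b + 2 < Real.sqrt D := by
      have h2 : Real.sqrt ((b + 2) ^ 2) < Real.sqrt D := Real.sqrt_lt_sqrt (sq_nonneg _) hDgt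
      have h3 : |b + 2| < Real.sqrt D := by rwa [Real.sqrt_sq_eq_abs] at h2
      calc b + 2 ≤ |b + 2| := le_abs_self _
      _ < Real.sqrt D := h3
    linarith
  · have : ((b - Real.sqrt D) / 2) ^ 2 - b * ((b - Real.sqrt D) / 2) + c
        = (Real.sqrt D ^ 2 - (b ^ 2 - 4 * c)) / 4 := by ring
    rw [this, hsq]
    simp [hD]

/-- **Theorem 2 (necessity).** If `Γ(θ_s,θ_x) < ‖A‖₂²/‖A‖_F²`, then there exist
a prior variance `τ₀ > 0`, a noise variance `v_w > 0` and fixed-point stepsizes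
`(τ_s, τ_x)` for which the GGAMP iteration matrix has an eigenvalue of modulus
strictly greater than 1. -/
theorem ggamp_scalar_divergence_necessary {m n : ℕ}
    (A : Matrix (Fin m) (Fin n) ℝ) (hA : A ≠ 0)
    (θs θx : ℝ) (hθs : θs ∈ Set.Ioc (0 : ℝ) 1) (hθx : θx ∈ Set.Ioc (0 : ℝ) 1)
    (hΓ : Gam m n θs θx < specSq A / frobSq A) :
    ∃ τ0 vw τs τx : ℝ, 0 < τ0 ∧ 0 < vw ∧
      IsFixedStepsizes A τ0 vw τs τx ∧
      ∃ μ : ℂ, HasEig (iterMat A θs θx τs τx) μ ∧ 1 < ‖μ‖ := by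
  classical
  obtain ⟨hθs0, hθs1⟩ := hθs
  obtain ⟨hθx0, hθx1⟩ := hθx
  -- positivity of dimensions and norms
  have hm : 0 < m := by
    rcases Nat.eq_zero_or_pos m with h | h
    · exfalso; apply hA; subst h; ext i j; exact i.elim0
    · exact h
  have hn : 0 < n := by
    rcases Nat.eq_zero_or_pos n with h | h
    · exfalso; apply hA; subst h; ext i j; exact j.elim0
    · exact h
  have hmR : (0 : ℝ) < m := by exact_mod_cast hm
  have hnR : (0 : ℝ) < n := by exact_mod_cast hn
  set φ : ℝ := frobSq A with hφdef
  have hφ : 0 < φ := by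
    obtain ⟨i, j, hij⟩ : ∃ i j, A i j ≠ 0 := by
      by_contra h
      push_neg at h
      exact hA (by ext i j; simp [h])
    have hinner : (0 : ℝ) < ∑ j, A i j ^ 2 :=
      Finset.sum_pos' (fun _ _ => sq_nonneg _)
        ⟨j, Finset.mem_univ j, by positivity⟩
    exact Finset.sum_pos' (fun i _ => Finset.sum_nonneg fun j _ => sq_nonneg _)
      ⟨i, Finset.mem_univ i, hinner⟩
  set σ2 : ℝ := specSq A with hσ2def
  -- the threshold time
  set tstar : ℝ := (min m n : ℝ) / φ with htstar
  have htstarpos : 0 < tstar := by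
    have : (0 : ℝ) < (min m n : ℝ) := lt_min hmR hnR
    positivity
  set g : ℝ → ℝ := fun t => θs * θx * σ2 * t -
      (2 - θs + θs * (t * φ / m)) * (2 - θx + θx * (t * φ / n)) with hgdef
  have hgcont : Continuous g := by fun_prop
  have hgt : 0 < g tstar := by
    rcases le_or_gt n m with hcase | hcase
    · -- n ≤ m
      have hmin : (min m n : ℝ) = n :=
        min_eq_right (by exact_mod_cast hcase)
      have hGam : Gam m n θs θx = 2 * ((2 - θs) * m + θs * n) / (θs * θx * m * n) := by
        rw [Gam, if_pos hcase]
      rw [hGam] at hΓ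
      have key : 2 * ((2 - θs) * m + θs * n) * φ < σ2 * (θs * θx * m * n) := by
        have hd1 : (0 : ℝ) < θs * θx * m * n := by positivity
        exact (div_lt_div_iff₀ hd1 hφ).mp hΓ
      rw [hgdef]
      simp only
      rw [htstar, hmin]
      have e1 : (n : ℝ) / φ * φ / m = n / m := by field_simp
      have e2 : (n : ℝ) / φ * φ / n = 1 := by field_simp
      rw [e1, e2]
      rw [sub_pos, ← mul_lt_mul_iff_of_pos_right (show (0 : ℝ) < m * φ by positivity)]
      have e3 : θs * θx * σ2 * ((n : ℝ) / φ) * (m * φ) = σ2 * (θs * θx * m * n) := by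
        field_simp
      rw [e3]
      calc (2 - θs + θs * ((n : ℝ) / m)) * (2 - θx + θx * 1) * (m * φ)
          = 2 * ((2 - θs) * m + θs * (((n : ℝ) / m) * m)) * φ := by ring
        _ = 2 * ((2 - θs) * m + θs * n) * φ := by
            rw [div_mul_cancel₀ _ hmR.ne']
        _ < σ2 * (θs * θx * m * n) := key
    · -- m < n
      have hcase' : ¬ (n ≤ m) := not_le.mpr hcase
      have hmin : (min m n : ℝ) = m :=
        min_eq_left (by exact_mod_cast (le_of_lt hcase))
      have hGam : Gam m n θs θx = 2 * ((2 - θx) * n + θx * m) / (θs * θx * m * n) := by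
        rw [Gam, if_neg (not_le.mpr hcase)]
      rw [hGam] at hΓ
      have key : 2 * ((2 - θx) * n + θx * m) * φ < σ2 * (θs * θx * m * n) := by
        have hd1 : (0 : ℝ) < θs * θx * m * n := by positivity
        exact (div_lt_div_iff₀ hd1 hφ).mp hΓ
      rw [hgdef]
      simp only
      rw [htstar, hmin]
      have e1 : (m : ℝ) / φ * φ / m = 1 := by field_simp
      have e2 : (m : ℝ) / φ * φ / n = m / n := by field_simp
      rw [e1, e2]
      rw [sub_pos, ← mul_lt_mul_iff_of_pos_right (show (0 : ℝ) < n * φ by positivity)]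
      have e3 : θs * θx * σ2 * ((m : ℝ) / φ) * (n * φ) = σ2 * (θs * θx * m * n) := by
        field_simp
      rw [e3]
      calc (2 - θs + θs * 1) * (2 - θx + θx * ((m : ℝ) / n)) * (n * φ)
          = 2 * ((2 - θx) * n + θx * (((m : ℝ) / n) * n)) * φ := by ring
        _ = 2 * ((2 - θx) * n + θx * m) * φ := by
            rw [div_mul_cancel₀ _ hnR.ne']
        _ < σ2 * (θs * θx * m * n) := key
  -- choose t slightly below tstar with g t > 0
  have hopen : IsOpen {t : ℝ | 0 < g t} := isOpen_lt continuous_const hgcont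
  have hmem : {t : ℝ | 0 < g t} ∈ nhds tstar := hopen.mem_nhds hgt
  rw [Metric.mem_nhds_iff] at hmem
  obtain ⟨ε, hε, hball⟩ := hmem
  set δ : ℝ := min (ε / 2) (tstar / 2) with hδdef
  have hδpos : 0 < δ := lt_min (by linarith) (by linarith)
  set t : ℝ := tstar - δ with htdef
  have htpos : 0 < t := by
    have : δ ≤ tstar / 2 := min_le_right _ _
    rw [htdef]; linarith
  have htlt : t < tstar := by rw [htdef]; linarith
  have hgtpos : 0 < g t := by
    apply hball
    rw [Metric.mem_ball, Real.dist_eq, htdef]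
    have h1 : δ ≤ ε / 2 := min_le_left _ _
    rw [abs_of_nonpos (by linarith)]
    linarith
  -- define the stepsizes
  set τs : ℝ := Real.sqrt t with hτsdef
  set τx : ℝ := Real.sqrt t with hτxdef
  have hτs : 0 < τs := Real.sqrt_pos.mpr htpos
  have hτx : 0 < τx := hτs
  have hts : τs * τx = t := Real.mul_self_sqrt htpos.le
  -- t φ < min m n, so both q's are < 1
  have htφ : t * φ < (min m n : ℝ) := by
    have : tstar * φ = (min m n : ℝ) := by
      rw [htstar]; field_simp
    calc t * φ < tstar * φ := by exact mul_lt_mul_of_pos_right htlt hφ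
    _ = _ := this
  have hminm : (min m n : ℝ) ≤ m := min_le_left _ _
  have hminn : (min m n : ℝ) ≤ n := min_le_right _ _
  have hqs1 : t * φ / m < 1 := by
    rw [div_lt_one hmR]; linarith
  have hqx1 : t * φ / n < 1 := by
    rw [div_lt_one hnR]; linarith
  -- noise and prior variances
  set vw : ℝ := 1 / τs - (φ / m) * τx with hvwdef
  have hvw : 0 < vw := by
    have h1 : vw * τs = 1 - t * φ / ↑m := by
      have e : vw * τs = (1 / τs) * τs - (φ / ↑m) * (τs * τx) := by rw [hvwdef]; ring
      rw [one_div, inv_mul_cancel₀ hτs.ne', hts] at e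
      rw [e]; ring
    have h2 : vw = (1 - t * φ / ↑m) / τs := by
      rw [← h1]; field_simp
    rw [h2]
    exact div_pos (by linarith) hτs
  set ρ : ℝ := 1 / τx - (φ / n) * τs with hρdef
  have hρ : 0 < ρ := by
    have h1 : ρ * τx = 1 - t * φ / ↑n := by
      have e : ρ * τx = (1 / τx) * τx - (φ / ↑n) * (τs * τx) := by rw [hρdef]; ring
      rw [one_div, inv_mul_cancel₀ hτx.ne', hts] at e
      rw [e]; ring
    have h2 : ρ = (1 - t * φ / ↑n) / τx := by
      rw [← h1]; field_simp
    rw [h2]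
    exact div_pos (by linarith) hτx
  set τ0 : ℝ := 1 / ρ with hτ0def
  have hτ0 : 0 < τ0 := by rw [hτ0def]; positivity
  have hfix : IsFixedStepsizes A τ0 vw τs τx := by
    refine ⟨hτs, hτx, by rw [hvwdef]; ring, ?_⟩
    rw [hτ0def, one_div_one_div, hρdef]
    ring
  -- top singular vector
  obtain ⟨v, hv0, hvA, hσpos⟩ := exists_top_singular A hA hn
  set c : ℝ := Real.sqrt (θs * θx * τs * τx) with hcdef
  have hθt : 0 < θs * θx * τs * τx := by positivity
  have hcpos : 0 < c := Real.sqrt_pos.mpr hθt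
  have hc2 : c * c = θs * θx * (τs * τx) := by
    rw [hcdef, Real.mul_self_sqrt hθt.le]; ring
  set qs : ℝ := τs * (frobSq A / ↑m) * τx with hqsdef
  set qx : ℝ := τx * (frobSq A / ↑n) * τs with hqxdef
  have hqseq : qs = t * φ / ↑m := by
    rw [hqsdef, show τs * (frobSq A / ↑m) * τx = τs * τx * frobSq A / ↑m from by ring, hts,
      ← hφdef]
  have hqxeq : qx = t * φ / ↑n := by
    rw [hqxdef, show τx * (frobSq A / ↑n) * τs = τs * τx * frobSq A / ↑n from by ring, hts,
      ← hφdef]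
  set ds : ℝ := (1 - θs) + θs * qs with hdsdef
  set dx : ℝ := (1 - θx) + θx * qx with hdxdef
  have hqspos : 0 < qs := by rw [hqseq]; positivity
  have hqxpos : 0 < qx := by rw [hqxeq]; positivity
  have hdspos : 0 < ds := by
    rw [hdsdef]
    have : 0 < θs * qs := by positivity
    linarith
  -- the quadratic condition
  have hquad : 1 + (ds + dx - c * c * σ2) + ds * dx < 0 := by
    have hgt' : 0 < θs * θx * σ2 * t -
        (2 - θs + θs * (t * φ / ↑m)) * (2 - θx + θx * (t * φ / ↑n)) := by
      have := hgtpos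
      rw [hgdef] at this
      simpa using this
    have hfeq : c * c * σ2 = θs * θx * σ2 * t := by rw [hc2, hts]; ring
    have h1d : 2 - θs + θs * (t * φ / ↑m) = 1 + ds := by rw [hdsdef, hqseq]; ring
    have h2d : 2 - θx + θx * (t * φ / ↑n) = 1 + dx := by rw [hdxdef, hqxeq]; ring
    rw [h1d, h2d, ← hfeq] at hgt'
    have hexp : (1 + ds) * (1 + dx) = 1 + ds + dx + ds * dx := by ring
    rw [hexp] at hgt'
    linarith
  obtain ⟨lam, hlam1, hlamroot⟩ := exists_root_lt_neg_one hquad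
  set u : Fin m → ℝ := A *ᵥ v with hudef
  have hAu : Aᵀ *ᵥ u = σ2 • v := hvA
  have hlds : lam - ds ≠ 0 := by
    have : lam - ds < 0 := by linarith
    exact this.ne
  set w : Fin m ⊕ Fin n → ℝ := Sum.elim (c • u) ((lam - ds) • v) with hwdef
  have hM : iterMat A θs θx τs τx =
      Matrix.fromBlocks (ds • (1 : Matrix (Fin m) (Fin m) ℝ)) (c • A)
        (-(ds • (c • A)ᵀ)) (dx • (1 : Matrix (Fin n) (Fin n) ℝ) - (c • A)ᵀ * (c • A)) := rfl
  have hTop : (ds • (1 : Matrix (Fin m) (Fin m) ℝ)) *ᵥ (c • u) + (c • A) *ᵥ ((lam - ds) • v)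
      = lam • (c • u) := by
    rw [Matrix.smul_mulVec, Matrix.one_mulVec, Matrix.mulVec_smul,
      Matrix.smul_mulVec, ← hudef]
    match_scalars
    ring
  have hBot : (-(ds • (c • A)ᵀ)) *ᵥ (c • u)
      + (dx • (1 : Matrix (Fin n) (Fin n) ℝ) - (c • A)ᵀ * (c • A)) *ᵥ ((lam - ds) • v)
      = lam • ((lam - ds) • v) := by
    simp only [Matrix.neg_mulVec, Matrix.sub_mulVec, Matrix.transpose_smul,
      ← Matrix.mulVec_mulVec, Matrix.smul_mulVec, Matrix.mulVec_smul,
      Matrix.one_mulVec, ← hudef, hAu]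
    match_scalars
    linear_combination -hlamroot
  have hre : iterMat A θs θx τs τx *ᵥ w = lam • w := by
    rw [hM, hwdef, Matrix.fromBlocks_mulVec]
    simp only [Sum.elim_comp_inl, Sum.elim_comp_inr]
    rw [hTop, hBot]
    funext x
    cases x <;> simp
  -- assemble
  refine ⟨τ0, vw, τs, τx, hτ0, hvw, hfix, (lam : ℂ), ⟨fun i => ((w i : ℝ) : ℂ), ?_, ?_⟩, ?_⟩
  · obtain ⟨j, hj⟩ := Function.ne_iff.mp hv0
    intro h
    have h2 := congrFun h (Sum.inr j)
    rw [hwdef] at h2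
    simp only [Sum.elim_inr, Pi.smul_apply, smul_eq_mul, Pi.zero_apply] at h2
    have : (lam - ds) * v j = 0 := by exact_mod_cast h2
    exact hj (by
      rcases mul_eq_zero.mp this with h' | h'
      · exact absurd h' hlds
      · exact h')
  · funext i
    have hmap : ((iterMat A θs θx τs τx).map (fun x => (x : ℂ))
        *ᵥ (fun i => ((w i : ℝ) : ℂ))) i
        = (((iterMat A θs θx τs τx *ᵥ w) i : ℝ) : ℂ) :=
      (RingHom.map_mulVec Complex.ofRealHom _ w i).symm
    rw [hmap, hre]
    simp [Complex.ofReal_mul]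
  · rw [Complex.norm_real, Real.norm_eq_abs, abs_of_neg (by linarith)]
    linarith
end

section
/- Let A be a nonzero real m×n matrix, θ_s, θ_x ∈ (0,1], τ₀ > 0, v_w > 0, and let (τ_s, τ_x) be scalar GGAMP fixed-point stepsizes for (A, τ₀, v_w). Define γ := (1/(‖A‖_F² θ_s θ_x)) · (2/τ_x − θ_x/τ₀) · (2/τ_s − θ_s v_w). Then every complex eigenvalue of the GGAMP iteration matrix H has modulus strictly less than 1 if and only if ‖A‖₂² < ‖A‖_F² · γ. -/
open Matrix

lemma inner_eq_dot {k : ℕ} (x y : EuclideanSpace ℝ (Fin k)) :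
    (inner ℝ x y : ℝ) = ⇑x ⬝ᵥ ⇑y := by
  simp [PiLp.inner_apply, RCLike.inner_apply, dotProduct, mul_comm]


lemma normSq_equiv_symm {k : ℕ} (x : Fin k → ℝ) :
    ‖(WithLp.equiv 2 (Fin k → ℝ)).symm x‖ ^ 2 = x ⬝ᵥ x := by
  rw [EuclideanSpace.norm_eq, Real.sq_sqrt (by positivity)]
  simp [dotProduct, sq]

lemma quadBound {m n : ℕ} (F : Matrix (Fin m) (Fin n) ℝ) (x : Fin n → ℝ) :
    (F *ᵥ x) ⬝ᵥ (F *ᵥ x) ≤ specSq F * (x ⬝ᵥ x) := by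
  have h := (LinearMap.toContinuousLinearMap (Matrix.toEuclideanLin F)).le_opNorm
      ((WithLp.equiv 2 (Fin n → ℝ)).symm x)
  have h2 : LinearMap.toContinuousLinearMap (Matrix.toEuclideanLin F)
      ((WithLp.equiv 2 (Fin n → ℝ)).symm x) = (WithLp.equiv 2 (Fin m → ℝ)).symm (F *ᵥ x) := by
    simp [LinearMap.coe_toContinuousLinearMap']
  rw [h2] at h
  have h3 := pow_le_pow_left₀ (norm_nonneg _) h 2
  rw [normSq_equiv_symm] at h3
  calc (F *ᵥ x) ⬝ᵥ (F *ᵥ x) ≤ (‖LinearMap.toContinuousLinearMap (Matrix.toEuclideanLin F)‖ *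
        ‖(WithLp.equiv 2 (Fin n → ℝ)).symm x‖) ^ 2 := h3
    _ = specSq F * (x ⬝ᵥ x) := by rw [mul_pow, normSq_equiv_symm]; rfl

lemma dot_G_eq {m n : ℕ} (F : Matrix (Fin m) (Fin n) ℝ) (x : Fin n → ℝ) :
    x ⬝ᵥ ((Fᵀ * F) *ᵥ x) = (F *ᵥ x) ⬝ᵥ (F *ᵥ x) := by
  rw [← Matrix.mulVec_mulVec, Matrix.dotProduct_mulVec, Matrix.vecMul_transpose]

lemma spec_top {m n : ℕ} (hn : 0 < n) (F : Matrix (Fin m) (Fin n) ℝ) :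
    ∃ v : Fin n → ℝ, v ≠ 0 ∧ (Fᵀ * F) *ᵥ v = specSq F • v := by
  have : Nonempty (Fin n) := ⟨⟨0, hn⟩⟩
  have hG : (Fᵀ * F).IsHermitian := by
    have := Matrix.isHermitian_conjTranspose_mul_self F
    rwa [Matrix.conjTranspose_eq_transpose_of_trivial] at this
  set b := hG.eigenvectorBasis with hb
  set ev := hG.eigenvalues with hev
  obtain ⟨i0, hi0⟩ := Finite.exists_max ev
  -- repr of G x
  have hGsymm : (Fᵀ * F)ᵀ = Fᵀ * F := by
    have := hG.eq
    rwa [Matrix.conjTranspose_eq_transpose_of_trivial] at this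
  have hrepr : ∀ (x : Fin n → ℝ) (i : Fin n),
      b.repr ((WithLp.equiv 2 (Fin n → ℝ)).symm ((Fᵀ * F) *ᵥ x)) i
        = ev i * b.repr ((WithLp.equiv 2 (Fin n → ℝ)).symm x) i := by
    intro x i
    rw [b.repr_apply_apply, b.repr_apply_apply, inner_eq_dot, inner_eq_dot]
    show ⇑(b i) ⬝ᵥ ((Fᵀ * F) *ᵥ x) = ev i * (⇑(b i) ⬝ᵥ x)
    rw [Matrix.dotProduct_mulVec, ← Matrix.mulVec_transpose, hGsymm,
      hG.mulVec_eigenvectorBasis, smul_dotProduct, smul_eq_mul]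
  -- quadratic form bound by ev i0
  have K1 : ∀ x : Fin n → ℝ, x ⬝ᵥ ((Fᵀ * F) *ᵥ x) ≤ ev i0 * (x ⬝ᵥ x) := by
    intro x
    set y := (WithLp.equiv 2 (Fin n → ℝ)).symm x with hy
    have e1 : x ⬝ᵥ ((Fᵀ * F) *ᵥ x)
        = (inner ℝ y ((WithLp.equiv 2 (Fin n → ℝ)).symm ((Fᵀ * F) *ᵥ x)) : ℝ) := by
      rw [inner_eq_dot]; rfl
    have e2 : (inner ℝ y ((WithLp.equiv 2 (Fin n → ℝ)).symm ((Fᵀ * F) *ᵥ x)) : ℝ)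
        = ∑ i, b.repr y i * (ev i * b.repr y i) := by
      rw [← (b.repr : EuclideanSpace ℝ (Fin n) ≃ₗᵢ[ℝ] EuclideanSpace ℝ (Fin n)).inner_map_map]
      rw [inner_eq_dot]
      simp only [dotProduct]
      refine Finset.sum_congr rfl fun i _ => ?_
      show b.repr y i * b.repr ((WithLp.equiv 2 (Fin n → ℝ)).symm ((Fᵀ * F) *ᵥ x)) i = _
      rw [hrepr x i]
    have e3 : x ⬝ᵥ x = ∑ i, b.repr y i * b.repr y i := by
      have : x ⬝ᵥ x = (inner ℝ y y : ℝ) := (inner_eq_dot y y).symm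
      rw [this, ← (b.repr : EuclideanSpace ℝ (Fin n) ≃ₗᵢ[ℝ] EuclideanSpace ℝ (Fin n)).inner_map_map,
        inner_eq_dot]
      rfl
    rw [e1, e2, e3, Finset.mul_sum]
    refine Finset.sum_le_sum fun i _ => ?_
    have h1 : b.repr y i * (ev i * b.repr y i) = ev i * (b.repr y i)^2 := by ring
    have h2 : ev i0 * (b.repr y i * b.repr y i) = ev i0 * (b.repr y i)^2 := by ring
    rw [h1, h2]
    exact mul_le_mul_of_nonneg_right (hi0 i) (sq_nonneg _)
  -- the top eigenvector
  set v0 : Fin n → ℝ := ⇑(b i0) with hv0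
  have hveig : (Fᵀ * F) *ᵥ v0 = ev i0 • v0 := hG.mulVec_eigenvectorBasis i0
  have hvdot : v0 ⬝ᵥ v0 = 1 := by
    have := b.orthonormal.1 i0
    have h' : (inner ℝ (b i0) (b i0) : ℝ) = 1 := by
      rw [real_inner_self_eq_norm_sq, this]; norm_num
    rw [inner_eq_dot] at h'
    exact h'
  have hvne : v0 ≠ 0 := by
    intro h
    have : b i0 = 0 := by
      apply (WithLp.equiv 2 (Fin n → ℝ)).injective
      exact h
    exact b.orthonormal.ne_zero i0 this
  -- ev i0 ≤ specSq F
  have hle : ev i0 ≤ specSq F := by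
    have h1 : v0 ⬝ᵥ ((Fᵀ * F) *ᵥ v0) = ev i0 := by
      rw [hveig, dotProduct_smul, smul_eq_mul, hvdot, mul_one]
    have h2 := quadBound F v0
    rw [← dot_G_eq, h1, hvdot, mul_one] at h2
    exact h2
  have hnn : 0 ≤ ev i0 := by
    have h1 : v0 ⬝ᵥ ((Fᵀ * F) *ᵥ v0) = ev i0 := by
      rw [hveig, dotProduct_smul, smul_eq_mul, hvdot, mul_one]
    rw [dot_G_eq] at h1
    rw [← h1]
    exact Finset.sum_nonneg fun i _ => mul_self_nonneg _
  -- specSq F ≤ ev i0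
  have hge : specSq F ≤ ev i0 := by
    have hb' : ‖LinearMap.toContinuousLinearMap (Matrix.toEuclideanLin F)‖ ≤ Real.sqrt (ev i0) := by
      apply ContinuousLinearMap.opNorm_le_bound _ (Real.sqrt_nonneg _)
      intro y
      have hy : LinearMap.toContinuousLinearMap (Matrix.toEuclideanLin F) y
          = (WithLp.equiv 2 (Fin m → ℝ)).symm (F *ᵥ ⇑y) := rfl
      rw [hy]
      have hsq : ‖(WithLp.equiv 2 (Fin m → ℝ)).symm (F *ᵥ ⇑y)‖ ^ 2 ≤ (Real.sqrt (ev i0) * ‖y‖)^2 := by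
        rw [normSq_equiv_symm, mul_pow, Real.sq_sqrt hnn]
        have hyy : ‖y‖^2 = ⇑y ⬝ᵥ ⇑y := by
          have : y = (WithLp.equiv 2 (Fin n → ℝ)).symm ⇑y := rfl
          rw [this, normSq_equiv_symm]; rfl
        rw [hyy]
        calc (F *ᵥ ⇑y) ⬝ᵥ (F *ᵥ ⇑y) = ⇑y ⬝ᵥ ((Fᵀ * F) *ᵥ ⇑y) := (dot_G_eq F ⇑y).symm
          _ ≤ ev i0 * (⇑y ⬝ᵥ ⇑y) := K1 ⇑y
      have := Real.sqrt_le_sqrt hsq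
      rwa [Real.sqrt_sq (norm_nonneg _), Real.sqrt_sq (by positivity)] at this
    have := pow_le_pow_left₀ (norm_nonneg _) hb' 2
    rwa [Real.sq_sqrt hnn] at this
  have heq : specSq F = ev i0 := le_antisymm hge hle
  exact ⟨v0, hvne, by rw [heq]; exact hveig⟩


lemma juryLemma (ds dx lam : ℝ) (μ : ℂ) (hds0 : 0 < ds) (hds1 : ds < 1)
    (hdx0 : 0 < dx) (hdx1 : dx < 1) (hlam0 : 0 ≤ lam) (hlam : lam < (1+ds)*(1+dx))
    (hroot : μ^2 - ((ds + dx - lam : ℝ) : ℂ) * μ + ((ds * dx : ℝ) : ℂ) = 0) :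
    ‖μ‖ < 1 := by
  set t : ℝ := ds + dx - lam with ht
  set p : ℝ := ds * dx with hp
  have hq1 : 0 < 1 - t + p := by rw [ht, hp]; nlinarith
  have hq2 : 0 < 1 + t + p := by rw [ht, hp]; nlinarith
  have hp1 : p < 1 := by rw [hp]; nlinarith
  have hp0 : 0 < p := mul_pos hds0 hdx0
  set a := μ.re with ha
  set b := μ.im with hb
  have h1 := congrArg Complex.re hroot
  have h2 := congrArg Complex.im hroot
  simp only [Complex.add_re, Complex.sub_re, Complex.add_im, Complex.sub_im, pow_two,
    Complex.mul_re, Complex.mul_im, Complex.ofReal_re, Complex.ofReal_im, Complex.zero_re,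
    Complex.zero_im, ← ha, ← hb] at h1 h2
  by_cases hb0 : b = 0
  · -- real root
    rw [hb0] at h1
    have hroot' : a^2 - t*a + p = 0 := by nlinarith [h1]
    have habs : ‖μ‖ = |a| := by
      have : μ = (a : ℂ) := Complex.ext rfl hb0
      rw [this, Complex.norm_real, Real.norm_eq_abs]
    rw [habs]
    rw [abs_lt]
    constructor
    · by_contra h
      push_neg at h
      nlinarith [mul_pos hq2 (by linarith : (0:ℝ) < -a)]
    · by_contra h
      push_neg at h
      nlinarith [mul_pos hq1 (by linarith : (0:ℝ) < a)]
  · -- complex root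
    have ht2 : t = 2*a := by
      have : b * (a + a - t) = 0 := by nlinarith [h2]
      rcases mul_eq_zero.mp this with h | h
      · exact absurd h hb0
      · linarith
    have hsq : a^2 + b^2 = p := by linear_combination (-1)*h1 + (-a)*ht2
    have : (‖μ‖)^2 = p := by
      rw [Complex.sq_norm, Complex.normSq_apply, ← ha, ← hb]; linear_combination hsq
    nlinarith [norm_nonneg μ, this]

lemma rootBad (ds dx lam : ℝ) (hds0 : 0 < ds) (hds1 : ds < 1)
    (hdx0 : 0 < dx) (hdx1 : dx < 1) (hlam : (1+ds)*(1+dx) ≤ lam) :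
    ∃ x : ℝ, x ≤ -1 ∧ x^2 - (ds + dx - lam)*x + ds*dx = 0 := by
  set t : ℝ := ds + dx - lam with ht
  set p : ℝ := ds * dx with hp
  have htp : 1 + t + p ≤ 0 := by rw [ht, hp]; nlinarith
  have hp0 : 0 < p := mul_pos hds0 hdx0
  have hdisc : 0 ≤ t^2 - 4*p := by nlinarith [sq_nonneg (1-p), sq_nonneg (t+1+p)]
  set s := Real.sqrt (t^2 - 4*p) with hs
  have hs0 : 0 ≤ s := Real.sqrt_nonneg _
  have hs2 : s^2 = t^2 - 4*p := Real.sq_sqrt hdisc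
  refine ⟨(t - s)/2, ?_, by linear_combination hs2/4⟩
  by_contra h
  push_neg at h
  have hx' : (t - s)/2 ≤ (t + s)/2 := by linarith
  have hid : (1 + (t-s)/2)*(1 + (t+s)/2) = 1 + t + p := by linear_combination (-1/4)*hs2
  nlinarith [mul_pos (by linarith : (0:ℝ) < 1 + (t-s)/2) (by linarith : (0:ℝ) < 1 + (t+s)/2)]

noncomputable def csq {k : ℕ} (z : Fin k → ℂ) : ℝ := ∑ i, Complex.normSq (z i)

lemma csq_nonneg {k : ℕ} (z : Fin k → ℂ) : 0 ≤ csq z :=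
  Finset.sum_nonneg fun i _ => Complex.normSq_nonneg _

lemma csq_pos {k : ℕ} {z : Fin k → ℂ} (hz : z ≠ 0) : 0 < csq z := by
  obtain ⟨j, hj⟩ : ∃ j, z j ≠ 0 := by
    by_contra h; push_neg at h; exact hz (funext h)
  exact Finset.sum_pos' (fun i _ => Complex.normSq_nonneg _)
    ⟨j, Finset.mem_univ j, Complex.normSq_pos.mpr hj⟩

lemma star_dot_self {k : ℕ} (z : Fin k → ℂ) : star z ⬝ᵥ z = (csq z : ℂ) := by
  simp only [dotProduct, Pi.star_apply, csq]
  push_cast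
  refine Finset.sum_congr rfl fun i _ => ?_
  rw [Complex.normSq_eq_conj_mul_self]
  rfl

lemma map_transpose_mul_self {m n : ℕ} (F : Matrix (Fin m) (Fin n) ℝ) :
    (Fᵀ * F).map (fun x => (x : ℂ)) = (F.map (fun x => (x : ℂ)))ᵀ * (F.map (fun x => (x : ℂ))) := by
  ext i j
  simp only [Matrix.map_apply, Matrix.mul_apply, Matrix.transpose_apply]
  push_cast
  rfl

lemma star_dot_G {m n : ℕ} (F : Matrix (Fin m) (Fin n) ℝ) (w : Fin n → ℂ) :
    star w ⬝ᵥ (((Fᵀ * F).map (fun x => (x : ℂ))) *ᵥ w)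
      = (csq ((F.map (fun x => (x : ℂ))) *ᵥ w) : ℂ) := by
  set B := F.map (fun x => (x : ℂ)) with hB
  set y := B *ᵥ w with hy
  rw [map_transpose_mul_self, ← Matrix.mulVec_mulVec, Matrix.dotProduct_mulVec, ← hB, ← hy]
  have hvm : star w ᵥ* Bᵀ = star y := by
    funext i
    rw [Pi.star_apply, hy, hB]
    simp only [Matrix.vecMul, Matrix.mulVec, dotProduct, Matrix.transpose_apply,
      Matrix.map_apply, Complex.star_def, map_sum, _root_.map_mul, Complex.conj_ofReal]
    exact Finset.sum_congr rfl fun j _ => mul_comm _ _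
  rw [hvm, star_dot_self]

lemma csq_bound {m n : ℕ} (F : Matrix (Fin m) (Fin n) ℝ) (w : Fin n → ℂ) :
    csq ((F.map (fun x => (x : ℂ))) *ᵥ w) ≤ specSq F * csq w := by
  have key : ∀ i, (F.map (fun x => (x : ℂ)) *ᵥ w) i
      = ((F *ᵥ fun k => (w k).re) i : ℂ) + ((F *ᵥ fun k => (w k).im) i : ℂ) * Complex.I := by
    intro i
    simp only [Matrix.mulVec, dotProduct, Matrix.map_apply]
    push_cast
    rw [Finset.sum_mul, ← Finset.sum_add_distrib]
    refine Finset.sum_congr rfl fun j _ => ?_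
    linear_combination (-(F i j : ℂ)) * Complex.re_add_im (w j)
  have hcsq : csq (F.map (fun x => (x : ℂ)) *ᵥ w)
      = (F *ᵥ fun k => (w k).re) ⬝ᵥ (F *ᵥ fun k => (w k).re)
        + (F *ᵥ fun k => (w k).im) ⬝ᵥ (F *ᵥ fun k => (w k).im) := by
    simp only [csq, dotProduct]
    rw [← Finset.sum_add_distrib]
    refine Finset.sum_congr rfl fun i _ => ?_
    rw [key i, Complex.normSq_add_mul_I]
    ring
  have hw : csq w = (fun k => (w k).re) ⬝ᵥ (fun k => (w k).re)
      + (fun k => (w k).im) ⬝ᵥ (fun k => (w k).im) := by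
    simp only [csq, dotProduct, Complex.normSq_apply, ← Finset.sum_add_distrib]
  rw [hcsq, hw, mul_add]
  exact add_le_add (quadBound F _) (quadBound F _)

lemma hasEig_of_real {N : Type*} [Fintype N] (M : Matrix N N ℝ) (x : ℝ) (X : N → ℝ)
    (hX : X ≠ 0) (h : M *ᵥ X = x • X) :
    ∃ v : N → ℂ, v ≠ 0 ∧ (M.map (fun t => (t : ℂ))).mulVec v = (x : ℂ) • v := by
  refine ⟨fun i => (X i : ℂ), ?_, ?_⟩
  · intro h0
    apply hX
    funext i
    have := congrFun h0 i
    simp only [Pi.zero_apply] at this ⊢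
    exact_mod_cast this
  · funext i
    have hi := congrFun h i
    simp only [Matrix.mulVec, dotProduct, Pi.smul_apply, smul_eq_mul] at hi ⊢
    simp only [Matrix.map_apply]
    push_cast
    exact_mod_cast congrArg (fun r : ℝ => (r : ℂ)) hi

lemma coreIff {m n : ℕ} (hn : 0 < n) (F : Matrix (Fin m) (Fin n) ℝ) (ds dx : ℝ)
    (hds0 : 0 < ds) (hds1 : ds < 1) (hdx0 : 0 < dx) (hdx1 : dx < 1) :
    (∀ μ : ℂ, HasEig (Matrix.fromBlocks (ds • (1 : Matrix (Fin m) (Fin m) ℝ)) F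
        (-(ds • Fᵀ)) (dx • (1 : Matrix (Fin n) (Fin n) ℝ) - Fᵀ * F)) μ → ‖μ‖ < 1)
      ↔ specSq F < (1 + ds) * (1 + dx) := by
  set B := F.map (fun x => (x : ℂ)) with hBdef
  have hmap : (Matrix.fromBlocks (ds • (1 : Matrix (Fin m) (Fin m) ℝ)) F
        (-(ds • Fᵀ)) (dx • (1 : Matrix (Fin n) (Fin n) ℝ) - Fᵀ * F)).map (fun x => (x : ℂ))
      = Matrix.fromBlocks ((ds : ℂ) • (1 : Matrix (Fin m) (Fin m) ℂ)) B
        (-((ds : ℂ) • Bᵀ)) ((dx : ℂ) • (1 : Matrix (Fin n) (Fin n) ℂ) - Bᵀ * B) := by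
    have e11 : (ds • (1 : Matrix (Fin m) (Fin m) ℝ)).map (fun x => (x : ℂ))
        = (ds : ℂ) • (1 : Matrix (Fin m) (Fin m) ℂ) := by
      ext i j
      simp only [Matrix.map_apply, Matrix.smul_apply, Matrix.one_apply, smul_eq_mul, mul_ite,
        mul_one, mul_zero, apply_ite (fun x : ℝ => (x : ℂ))]
      push_cast
      rfl
    have e21 : (-(ds • Fᵀ)).map (fun x => (x : ℂ)) = -((ds : ℂ) • Bᵀ) := by
      ext i j
      simp only [Matrix.map_apply, Matrix.neg_apply, Matrix.smul_apply, Matrix.transpose_apply,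
        hBdef, smul_eq_mul]
      push_cast
      ring
    have e22 : (dx • (1 : Matrix (Fin n) (Fin n) ℝ) - Fᵀ * F).map (fun x => (x : ℂ))
        = (dx : ℂ) • (1 : Matrix (Fin n) (Fin n) ℂ) - Bᵀ * B := by
      ext i j
      simp only [Matrix.map_apply, Matrix.sub_apply, Matrix.smul_apply, Matrix.one_apply,
        Matrix.mul_apply, Matrix.transpose_apply, hBdef, smul_eq_mul]
      push_cast
      simp [apply_ite (fun x : ℝ => (x : ℂ))]
    rw [Matrix.fromBlocks_map, e11, e21, e22]
  constructor
  · -- eigenvalues small → norm bound (contrapositive)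
    intro h
    by_contra hge
    push_neg at hge
    obtain ⟨v, hv0, hveig⟩ := spec_top hn F
    set lam := specSq F with hlamdef
    obtain ⟨x, hx1, hxroot⟩ := rootBad ds dx lam hds0 hds1 hdx0 hdx1 hge
    have hxds : x - ds ≠ 0 := by intro hc; nlinarith
    set u : Fin m → ℝ := (x - ds)⁻¹ • (F *ᵥ v) with hudef
    set X : Fin m ⊕ Fin n → ℝ := Sum.elim u v with hXdef
    have hX0 : X ≠ 0 := by
      intro hc
      exact hv0 (funext fun j => congrFun hc (Sum.inr j))
    have hFv : F *ᵥ v = (x - ds) • u := by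
      rw [hudef, smul_smul, mul_inv_cancel₀ hxds, one_smul]
    have hFtu : Fᵀ *ᵥ u = ((x - ds)⁻¹ * lam) • v := by
      rw [hudef, Matrix.mulVec_smul, Matrix.mulVec_mulVec, hveig, smul_smul]
    have hHX : (Matrix.fromBlocks (ds • (1 : Matrix (Fin m) (Fin m) ℝ)) F
        (-(ds • Fᵀ)) (dx • (1 : Matrix (Fin n) (Fin n) ℝ) - Fᵀ * F)) *ᵥ X = x • X := by
      rw [hXdef, Matrix.fromBlocks_mulVec]
      simp only [Sum.elim_comp_inl, Sum.elim_comp_inr]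
      have htop : (ds • (1 : Matrix (Fin m) (Fin m) ℝ)) *ᵥ u + F *ᵥ v = x • u := by
        rw [Matrix.smul_mulVec, Matrix.one_mulVec, hFv]
        funext i
        simp only [Pi.add_apply, Pi.smul_apply, smul_eq_mul]
        ring
      have hbot : (-(ds • Fᵀ)) *ᵥ u + ((dx • (1 : Matrix (Fin n) (Fin n) ℝ) - Fᵀ * F)) *ᵥ v
          = x • v := by
        rw [Matrix.neg_mulVec, Matrix.smul_mulVec, hFtu, Matrix.sub_mulVec,
          Matrix.smul_mulVec, Matrix.one_mulVec, hveig]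
        have hs : -(ds * ((x - ds)⁻¹ * lam)) + dx - lam = x := by
          field_simp
          linear_combination -hxroot
        funext j
        simp only [Pi.add_apply, Pi.neg_apply, Pi.sub_apply, Pi.smul_apply, smul_eq_mul]
        linear_combination (v j) * hs
      rw [htop, hbot]
      funext z
      cases z <;> rfl
    obtain ⟨vc, hvc0, hvceq⟩ := hasEig_of_real _ x X hX0 hHX
    have := h (x : ℂ) ⟨vc, hvc0, hvceq⟩
    rw [Complex.norm_real, Real.norm_eq_abs] at this
    have := neg_abs_le x
    linarith [abs_lt.mp (by assumption : |x| < 1)]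
  · -- norm bound → eigenvalues small
    intro hlt μ hμ
    obtain ⟨v, hv0, hveq⟩ := hμ
    set u : Fin m → ℂ := fun i => v (Sum.inl i) with hu
    set w : Fin n → ℂ := fun j => v (Sum.inr j) with hw
    have hv : v = Sum.elim u w := funext fun z => by cases z <;> rfl
    rw [hmap, hv, Matrix.fromBlocks_mulVec] at hveq
    simp only [Sum.elim_comp_inl, Sum.elim_comp_inr] at hveq
    have E1 : B *ᵥ w = (μ - (ds : ℂ)) • u := by
      funext i
      have h := congrFun hveq (Sum.inl i)
      simp only [Sum.elim_inl, Pi.add_apply, Pi.smul_apply, smul_eq_mul,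
        Matrix.smul_mulVec, Matrix.one_mulVec] at h
      simp only [Pi.smul_apply, smul_eq_mul]
      linear_combination h
    have E2 : ∀ j, -((ds:ℂ) * (Bᵀ *ᵥ u) j) + ((dx:ℂ) * w j - ((Bᵀ * B) *ᵥ w) j) = μ * w j := by
      intro j
      have h := congrFun hveq (Sum.inr j)
      simp only [Sum.elim_inr, Pi.add_apply, Pi.smul_apply, smul_eq_mul, Matrix.neg_mulVec,
        Matrix.sub_mulVec, Matrix.smul_mulVec, Matrix.one_mulVec, Pi.neg_apply,
        Pi.sub_apply] at h
      linear_combination h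
    have hG : (Bᵀ * B) *ᵥ w = (μ - (ds:ℂ)) • (Bᵀ *ᵥ u) := by
      rw [← Matrix.mulVec_mulVec, E1, Matrix.mulVec_smul]
    have E3 : ∀ j, μ * (Bᵀ *ᵥ u) j = ((dx:ℂ) - μ) * w j := by
      intro j
      have h := E2 j
      rw [hG] at h
      simp only [Pi.smul_apply, smul_eq_mul] at h
      linear_combination -h
    by_cases hw0 : w = 0
    · have hu0 : u ≠ 0 := by
        intro hc
        apply hv0
        rw [hv, hc, hw0]
        funext z
        cases z <;> rfl
      rw [hw0] at E1
      simp only [Matrix.mulVec_zero] at E1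
      have hsub := (smul_eq_zero.mp E1.symm).resolve_right hu0
      have hμds : μ = (ds : ℂ) := sub_eq_zero.mp hsub
      rw [hμds, Complex.norm_real, Real.norm_eq_abs, abs_of_pos hds0]
      exact hds1
    · have hS : 0 < csq w := csq_pos hw0
      have h2 : μ • ((Bᵀ * B) *ᵥ w) = ((μ - ds) * ((dx:ℂ) - μ)) • w := by
        rw [hG]
        funext j
        simp only [Pi.smul_apply, smul_eq_mul]
        linear_combination (μ - (ds:ℂ)) * E3 j
      have h1 : star w ⬝ᵥ ((Bᵀ * B) *ᵥ w) = (csq (B *ᵥ w) : ℂ) := by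
        have := star_dot_G F w
        rwa [map_transpose_mul_self] at this
      have hkey : μ * (csq (B *ᵥ w) : ℂ) = ((μ - ds) * ((dx:ℂ) - μ)) * (csq w : ℂ) := by
        calc μ * (csq (B *ᵥ w) : ℂ) = star w ⬝ᵥ (μ • ((Bᵀ * B) *ᵥ w)) := by
              rw [dotProduct_smul, h1, smul_eq_mul]
          _ = star w ⬝ᵥ (((μ - ds) * ((dx:ℂ) - μ)) • w) := by rw [h2]
          _ = ((μ - ds) * ((dx:ℂ) - μ)) * (csq w : ℂ) := by
              rw [dotProduct_smul, star_dot_self, smul_eq_mul]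
      set lam := csq (B *ᵥ w) / csq w with hlam
      have hlam0 : 0 ≤ lam := div_nonneg (csq_nonneg _) hS.le
      have hlamle : lam ≤ specSq F := by
        rw [hlam, div_le_iff₀ hS]
        exact csq_bound F w
      have hcw : (csq w : ℂ) ≠ 0 := by exact_mod_cast hS.ne'
      have hlamC : (lam : ℂ) * (csq w : ℂ) = (csq (B *ᵥ w) : ℂ) := by
        rw [hlam]
        push_cast
        rw [div_mul_cancel₀]
        exact_mod_cast hS.ne'
      have h3 : (μ * (lam : ℂ) - (μ - ds) * ((dx:ℂ) - μ)) * (csq w : ℂ) = 0 := by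
        linear_combination hkey + μ * hlamC
      have h4 : μ * (lam : ℂ) = (μ - ds) * ((dx:ℂ) - μ) :=
        sub_eq_zero.mp ((mul_eq_zero.mp h3).resolve_right hcw)
      have hroot : μ^2 - ((ds + dx - lam : ℝ) : ℂ) * μ + ((ds * dx : ℝ) : ℂ) = 0 := by
        push_cast
        linear_combination h4
      exact juryLemma ds dx lam μ hds0 hds1 hdx0 hdx1 hlam0 (lt_of_le_of_lt hlamle hlt) hroot


lemma specSq_smul {m n : ℕ} (c : ℝ) (A : Matrix (Fin m) (Fin n) ℝ) :
    specSq (c • A) = c ^ 2 * specSq A := by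
  unfold specSq
  rw [_root_.map_smul, _root_.map_smul]
  have h := norm_smul c (LinearMap.toContinuousLinearMap (Matrix.toEuclideanLin A))
  rw [Real.norm_eq_abs] at h
  rw [h, mul_pow, sq_abs]

lemma frobSq_pos {m n : ℕ} {A : Matrix (Fin m) (Fin n) ℝ} (hA : A ≠ 0) : 0 < frobSq A := by
  obtain ⟨i, j, hij⟩ : ∃ i j, A i j ≠ 0 := by
    by_contra h
    push_neg at h
    exact hA (Matrix.ext fun i j => h i j)
  have hterm : 0 < A i j ^ 2 := by
    rw [sq]
    exact mul_self_pos.mpr hij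
  refine Finset.sum_pos' (fun i _ => Finset.sum_nonneg fun j _ => sq_nonneg _) ?_
  exact ⟨i, Finset.mem_univ i, Finset.sum_pos' (fun j _ => sq_nonneg _)
    ⟨j, Finset.mem_univ j, hterm⟩⟩

set_option maxHeartbeats 2000000 in
/-- **Lemma 5 (stability characterization, Appendix C).** At fixed-point
stepsizes, all eigenvalues of the GGAMP iteration matrix `H` lie strictly
inside the unit circle if and only if `‖A‖₂² < ‖A‖_F² · γ`, where
`γ = (1/(‖A‖_F² θ_s θ_x)) (2/τ_x − θ_x/τ₀)(2/τ_s − θ_s v_w)`. -/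
theorem ggamp_scalar_stability_characterization {m n : ℕ}
    (A : Matrix (Fin m) (Fin n) ℝ) (hA : A ≠ 0)
    (θs θx : ℝ) (hθs : θs ∈ Set.Ioc (0 : ℝ) 1) (hθx : θx ∈ Set.Ioc (0 : ℝ) 1)
    (τ0 vw : ℝ) (hτ0 : 0 < τ0) (hvw : 0 < vw)
    (τs τx : ℝ) (hfix : IsFixedStepsizes A τ0 vw τs τx) :
    (∀ μ : ℂ, HasEig (iterMat A θs θx τs τx) μ → ‖μ‖ < 1) ↔
      specSq A < frobSq A *
        (1 / (frobSq A * θs * θx) * (2 / τx - θx / τ0) * (2 / τs - θs * vw)) := by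
  obtain ⟨hτs, hτx, hfs, hfx⟩ := hfix
  obtain ⟨hθs0, hθs1⟩ := hθs
  obtain ⟨hθx0, hθx1⟩ := hθx
  have hm : 0 < m := by
    rcases Nat.eq_zero_or_pos m with hm0 | hm0
    · exfalso; apply hA; subst hm0; ext i j; exact i.elim0
    · exact hm0
  have hn : 0 < n := by
    rcases Nat.eq_zero_or_pos n with hn0 | hn0
    · exfalso; apply hA; subst hn0; ext i j; exact j.elim0
    · exact hn0
  have hF2 : 0 < frobSq A := frobSq_pos hA
  set qs : ℝ := τs * (frobSq A / ↑m) * τx with hqsdef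
  set qx : ℝ := τx * (frobSq A / ↑n) * τs with hqxdef
  set ds : ℝ := (1 - θs) + θs * qs with hdsdef
  set dx : ℝ := (1 - θx) + θx * qx with hdxdef
  set c : ℝ := Real.sqrt (θs * θx * τs * τx) with hcdef
  set F : Matrix (Fin m) (Fin n) ℝ := c • A with hFdef
  have hiter : iterMat A θs θx τs τx
      = Matrix.fromBlocks (ds • (1 : Matrix (Fin m) (Fin m) ℝ)) F
        (-(ds • Fᵀ)) (dx • (1 : Matrix (Fin n) (Fin n) ℝ) - Fᵀ * F) := by
    rw [hdsdef, hqsdef, hdxdef, hqxdef, hFdef, hcdef]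
    rfl
  -- fixed point identities
  have hqs : qs = 1 - τs * vw := by
    have h2 : τs * (1/τs) = τs * ((frobSq A / ↑m) * τx + vw) := by rw [← hfs]
    rw [mul_one_div_cancel hτs.ne'] at h2
    rw [hqsdef]
    linear_combination -h2
  have hqx : qx = 1 - τx * (1/τ0) := by
    have h2 : τx * (1/τx) = τx * ((frobSq A / ↑n) * τs + 1/τ0) := by rw [← hfx]
    rw [mul_one_div_cancel hτx.ne'] at h2
    rw [hqxdef]
    linear_combination -h2
  have hqs0 : 0 < qs := by
    rw [hqsdef]
    have := div_pos hF2 (by exact_mod_cast hm : (0:ℝ) < ↑m)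
    positivity
  have hqx0 : 0 < qx := by
    rw [hqxdef]
    have := div_pos hF2 (by exact_mod_cast hn : (0:ℝ) < ↑n)
    positivity
  have hqs1 : qs < 1 := by
    rw [hqs]
    nlinarith [mul_pos hτs hvw]
  have hqx1 : qx < 1 := by
    rw [hqx]
    nlinarith [mul_pos hτx (one_div_pos.mpr hτ0)]
  have hds0 : 0 < ds := by
    rw [hdsdef]
    nlinarith [mul_pos hθs0 hqs0]
  have hds1 : ds < 1 := by
    rw [hdsdef]
    nlinarith [mul_pos hθs0 (sub_pos.mpr hqs1)]
  have hdx0 : 0 < dx := by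
    rw [hdxdef]
    nlinarith [mul_pos hθx0 hqx0]
  have hdx1 : dx < 1 := by
    rw [hdxdef]
    nlinarith [mul_pos hθx0 (sub_pos.mpr hqx1)]
  have hppos : 0 < θs * θx * τs * τx := by positivity
  have hc2 : c ^ 2 = θs * θx * τs * τx := Real.sq_sqrt hppos.le
  have hFspec : specSq F = (θs * θx * τs * τx) * specSq A := by
    rw [hFdef, specSq_smul, hc2]
  -- identities for the threshold
  have i2 : 2 / τs - θs * vw = (1 + ds) / τs := by
    rw [hdsdef, hqs]
    field_simp
    ring
  have i1 : 2 / τx - θx / τ0 = (1 + dx) / τx := by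
    rw [hdxdef, hqx]
    field_simp
    ring
  have hR : frobSq A * (1 / (frobSq A * θs * θx) * (2 / τx - θx / τ0) * (2 / τs - θs * vw))
      = (1 + ds) * (1 + dx) / (θs * θx * τs * τx) := by
    rw [i1, i2]
    field_simp
  rw [hiter, coreIff hn F ds dx hds0 hds1 hdx0 hdx1, hR, hFspec, lt_div_iff₀ hppos]
  constructor
  · intro h; linarith [h]
  · intro h; linarith [h]
end

section
/- Let A be a nonzero real m×n matrix with m > n, let θ_s, θ_x ∈ (0,1], and fix τ₀ > 0. For each noise variance v > 0, let (τ_s(v), τ_x(v)) be the unique positive solution of the fixed-point equations 1/τ_s = (‖A‖_F²/m)τ_x + v and 1/τ_x = (‖A‖_F²/n)τ_s + 1/τ₀, and define γ(v) := (1/(‖A‖_F² θ_s θ_x)) · (2/τ_x(v) − θ_x/τ₀) · (2/τ_s(v) − θ_s v). Then lim_{v → 0⁺} γ(v) = 2((2−θ_s)m + θ_s n)/(θ_s θ_x m n). (The analogous statement with the roles of (m, θ_s) and (n, θ_x) exchanged holds when m < n.) -/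
open Matrix Filter

/-- **Limit lemma (Appendix C).** For `m > n`, as the noise variance `v → 0⁺`,
the stability threshold `γ(v)` computed at the fixed-point stepsizes
`(τ_s(v), τ_x(v))` tends to `2((2−θ_s)m + θ_s n)/(θ_s θ_x m n)`. -/
theorem ggamp_gamma_limit {m n : ℕ}
    (A : Matrix (Fin m) (Fin n) ℝ) (hA : A ≠ 0) (hmn : n < m)
    (θs θx : ℝ) (hθs : θs ∈ Set.Ioc (0 : ℝ) 1) (hθx : θx ∈ Set.Ioc (0 : ℝ) 1)
    (τ0 : ℝ) (hτ0 : 0 < τ0)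
    (τs τx : ℝ → ℝ)
    (hpos : ∀ v : ℝ, 0 < v → 0 < τs v ∧ 0 < τx v)
    (hfix : ∀ v : ℝ, 0 < v →
      1 / τs v = (frobSq A / m) * τx v + v ∧
      1 / τx v = (frobSq A / n) * τs v + 1 / τ0) :
    Tendsto
      (fun v : ℝ =>
        1 / (frobSq A * θs * θx) * (2 / τx v - θx / τ0) * (2 / τs v - θs * v))
      (nhdsWithin 0 (Set.Ioi 0))
      (nhds (2 * ((2 - θs) * m + θs * n) / (θs * θx * m * n))) := by
  obtain ⟨hθs0, hθs1⟩ := hθs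
  obtain ⟨hθx0, hθx1⟩ := hθx
  have hn : 0 < n := by
    rcases Nat.eq_zero_or_pos n with h | h
    · exfalso; apply hA; subst h; ext i j; exact j.elim0
    · exact h
  have hm : 0 < m := hn.trans hmn
  set F := frobSq A with hFdef
  have hF : 0 < F := by
    have h1 : ∃ i j, A i j ≠ 0 := by
      by_contra h; push_neg at h
      exact hA (by ext i j; simpa using h i j)
    obtain ⟨i, j, hij⟩ := h1
    have h2 : (0:ℝ) < ∑ j', (A i j')^2 :=
      Finset.sum_pos' (fun _ _ => sq_nonneg _)
        ⟨j, Finset.mem_univ j, by positivity⟩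
    exact Finset.sum_pos' (fun _ _ => Finset.sum_nonneg fun _ _ => sq_nonneg _)
      ⟨i, Finset.mem_univ i, h2⟩
  have hmR : (0:ℝ) < m := by exact_mod_cast hm
  have hnR : (0:ℝ) < n := by exact_mod_cast hn
  have hmnR : (n:ℝ) < m := by exact_mod_cast hmn
  set a := F / (m:ℝ) with hadef
  set b := F / (n:ℝ) with hbdef
  set c := (1:ℝ) / τ0 with hcdef
  have ha : 0 < a := div_pos hF hmR
  have hb : 0 < b := div_pos hF hnR
  have hab : a < b := div_lt_div_of_pos_left hF hnR hmnR
  have hc : 0 < c := by positivity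
  set G : ℝ → ℝ := fun t =>
    1/(F*θs*θx) * ((2 - θx*c*t) * (2*a + (2-θs)*(b/(1-c*t) - a))) with hGdef
  have key : ∀ v : ℝ, 0 < v →
      (1 / (F * θs * θx) * (2 / τx v - θx / τ0) * (2 / τs v - θs * v)
        = G (τx v)) ∧ (b - a) * τx v ≤ v := by
    intro v hv
    obtain ⟨hs, ht⟩ := hpos v hv
    obtain ⟨e1, e2⟩ := hfix v hv
    set t := τx v with htd
    set s := τs v with hsd
    have h1 : (a*t + v) * s = 1 := by
      rw [show a*t + v = 1/s from e1.symm]; field_simp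
    have h2 : (b*s + c) * t = 1 := by
      rw [show b*s + c = 1/t from e2.symm]; field_simp
    have h2' : b*s*t = 1 - c*t := by linear_combination h2
    have h3 : (a*t + v)*(1 - c*t) = b*t := by
      linear_combination b*t*h1 - (a*t+v)*h2'
    have hct : 0 < 1 - c*t := by
      have := mul_pos (mul_pos hb hs) ht
      linarith [h2']
    constructor
    · have hv' : v = t*(b/(1-c*t) - a) := by
        rw [mul_sub, mul_div_assoc', eq_sub_iff_add_eq, eq_div_iff hct.ne']
        linear_combination h3
      have hs2 : 2/s = 2*(a*t+v) := by rw [← e1]; ring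
      have hcc : θx / τ0 = θx * c := by rw [hcdef]; ring
      rw [hGdef]
      have inner : (2 / t - θx / τ0) * (2 / s - θs * v)
          = (2 - θx*c*t) * (2*a + (2-θs)*(b/(1-c*t) - a)) := by
        rw [hs2, hcc, hv']
        field_simp
        ring
      rw [mul_assoc, inner]
    · nlinarith [h3, mul_nonneg (mul_nonneg (by positivity : (0:ℝ) ≤ a*t+v) hc.le) ht.le]
  have htend : Tendsto (fun v => τx v) (nhdsWithin 0 (Set.Ioi 0)) (nhds 0) := by
    have hbnd : Tendsto (fun v : ℝ => v / (b - a)) (nhdsWithin 0 (Set.Ioi 0)) (nhds 0) := by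
      have := (tendsto_id.div_const (b - a)).mono_left
        (nhdsWithin_le_nhds : nhdsWithin (0:ℝ) (Set.Ioi 0) ≤ nhds 0)
      simpa using this
    refine tendsto_of_tendsto_of_tendsto_of_le_of_le' tendsto_const_nhds hbnd ?_ ?_
    · filter_upwards [self_mem_nhdsWithin] with v hv
      exact (hpos v hv).2.le
    · filter_upwards [self_mem_nhdsWithin] with v hv
      have := (key v hv).2
      rw [le_div_iff₀ (by linarith : (0:ℝ) < b - a)]
      linarith
  have hG : ContinuousAt G 0 := by
    rw [hGdef]
    apply ContinuousAt.mul continuousAt_const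
    apply ContinuousAt.mul
    · fun_prop
    · apply ContinuousAt.add continuousAt_const
      apply ContinuousAt.mul continuousAt_const
      apply ContinuousAt.sub _ continuousAt_const
      exact ContinuousAt.div continuousAt_const (by fun_prop) (by norm_num)
  have hG0 : G 0 = 2 * ((2 - θs) * m + θs * n) / (θs * θx * m * n) := by
    rw [hGdef]
    simp only [hadef, hbdef]
    field_simp
    ring
  have hfinal : Tendsto (fun v => G (τx v)) (nhdsWithin 0 (Set.Ioi 0)) (nhds (G 0)) :=
    hG.tendsto.comp htend
  rw [← hG0]
  apply hfinal.congr'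
  filter_upwards [self_mem_nhdsWithin] with v hv
  exact ((key v hv).1).symm
end

section
/- Let A be a real m×n matrix whose columns all have unit Euclidean norm (so that ‖A‖_F² = n), and suppose the walk-summability condition λ_max(|I_n − AᵀA|) < 1 holds, where |I_n − AᵀA| denotes the entrywise absolute value and λ_max the largest eigenvalue of this symmetric nonnegative matrix. Then ‖A‖₂² ≤ 1 + λ_max(|I_n − AᵀA|) < 2, and consequently κ(A) < 2·min{m,n}/n ≤ 2·min{m,n}·(m+n)/(mn) = min{m,n}·Γ(1,1); hence walk summability implies the (undamped) GGAMP convergence condition. -/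
open Matrix

/-- Peak-to-average ratio of the squared singular values. -/
noncomputable def kappa {m n : ℕ} (A : Matrix (Fin m) (Fin n) ℝ) : ℝ :=
  specSq A / (frobSq A / (min m n : ℝ))

/-- Largest real eigenvalue of a real square matrix. -/
noncomputable def lamMax {n : ℕ} (M : Matrix (Fin n) (Fin n) ℝ) : ℝ :=
  sSup {μ : ℝ | ∃ v : Fin n → ℝ, v ≠ 0 ∧ M.mulVec v = μ • v}

lemma bddAbove_eigs {n : ℕ} (N : Matrix (Fin n) (Fin n) ℝ) :
    BddAbove {μ : ℝ | ∃ v : Fin n → ℝ, v ≠ 0 ∧ N.mulVec v = μ • v} := by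
  refine ⟨∑ i, ∑ j, |N i j|, ?_⟩
  rintro μ ⟨v, hv, hMv⟩
  obtain ⟨i0, hi0⟩ := Function.ne_iff.mp hv
  obtain ⟨i, -, hi⟩ := Finset.exists_max_image Finset.univ (fun i => |v i|) ⟨i0, Finset.mem_univ _⟩
  have hvi : 0 < |v i| := lt_of_lt_of_le (abs_pos.mpr hi0) (hi i0 (Finset.mem_univ _))
  have h1 : |μ| * |v i| ≤ (∑ j, |N i j|) * |v i| := by
    have hthis : μ * v i = N.mulVec v i := by rw [hMv]; rfl
    calc |μ| * |v i| = |μ * v i| := (abs_mul _ _).symm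
      _ = |∑ j, N i j * v j| := by rw [hthis]; rfl
      _ ≤ ∑ j, |N i j * v j| := Finset.abs_sum_le_sum_abs _ _
      _ ≤ ∑ j, |N i j| * |v i| := by
          refine Finset.sum_le_sum fun j _ => ?_
          rw [abs_mul]
          exact mul_le_mul_of_nonneg_left (hi j (Finset.mem_univ _)) (abs_nonneg _)
      _ = (∑ j, |N i j|) * |v i| := by rw [Finset.sum_mul]
  have h2 : |μ| ≤ ∑ j, |N i j| := le_of_mul_le_mul_right h1 hvi
  calc μ ≤ |μ| := le_abs_self μ
    _ ≤ ∑ j, |N i j| := h2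
    _ ≤ ∑ i, ∑ j, |N i j| := Finset.single_le_sum (f := fun i => ∑ j, |N i j|)
        (fun i _ => Finset.sum_nonneg fun j _ => abs_nonneg _) (Finset.mem_univ i)

lemma rayleigh_le {n : ℕ} (N : Matrix (Fin n) (Fin n) ℝ) (hH : N.IsHermitian)
    (y : Fin n → ℝ) : y ⬝ᵥ N.mulVec y ≤ lamMax N * (y ⬝ᵥ y) := by
  classical
  set b := hH.eigenvectorBasis with hb
  set e := hH.eigenvalues with he
  set y' : EuclideanSpace ℝ (Fin n) := WithLp.toLp 2 y with hy'
  set c : Fin n → ℝ := fun i => inner ℝ (b i) y' with hc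
  have hrepr : ∑ i, c i • (b i : EuclideanSpace ℝ (Fin n)) = y' := b.sum_repr' y'
  let P : (j : Fin n) → EuclideanSpace ℝ (Fin n) →ₗ[ℝ] ℝ := fun j =>
    (LinearMap.proj j).comp (WithLp.linearEquiv 2 ℝ (Fin n → ℝ)).toLinearMap
  have hyfun : y = fun j => ∑ i, c i * (b i : EuclideanSpace ℝ (Fin n)) j := by
    funext j
    calc y j = P j y' := rfl
      _ = P j (∑ i, c i • (b i : EuclideanSpace ℝ (Fin n))) := by rw [hrepr]
      _ = ∑ i, P j (c i • (b i : EuclideanSpace ℝ (Fin n))) := map_sum (P j) _ _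
      _ = ∑ i, c i * (b i : EuclideanSpace ℝ (Fin n)) j := by
          refine Finset.sum_congr rfl fun i _ => ?_
          rw [_root_.map_smul]
          rfl
  have hmv : N.mulVec y = fun j => ∑ i, c i * (e i * (b i : EuclideanSpace ℝ (Fin n)) j) := by
    funext j
    conv_lhs => rw [hyfun]
    simp only [mulVec, dotProduct]
    simp_rw [Finset.mul_sum]
    rw [Finset.sum_comm]
    congr 1
    funext i
    calc ∑ k, N j k * (c i * (b i : EuclideanSpace ℝ (Fin n)) k)
        = c i * ∑ k, N j k * (b i : EuclideanSpace ℝ (Fin n)) k := by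
          rw [Finset.mul_sum]; congr 1; funext k; ring
      _ = c i * ((N *ᵥ ⇑(b i)) j) := rfl
      _ = c i * ((e i • ⇑(b i) : Fin n → ℝ) j) := by rw [hH.mulVec_eigenvectorBasis i]
      _ = c i * (e i * (b i : EuclideanSpace ℝ (Fin n)) j) := rfl
  have hkey : y ⬝ᵥ N.mulVec y = ∑ i, e i * c i ^ 2 := by
    rw [hmv]
    simp only [dotProduct]
    simp_rw [Finset.mul_sum]
    rw [Finset.sum_comm]
    congr 1
    funext i
    have hinner : ∑ j, y j * (b i : EuclideanSpace ℝ (Fin n)) j = c i := by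
      rw [hc]
      simp [hy', PiLp.inner_apply, RCLike.inner_apply, mul_comm]
    calc ∑ j, y j * (c i * (e i * (b i : EuclideanSpace ℝ (Fin n)) j))
        = e i * c i * ∑ j, y j * (b i : EuclideanSpace ℝ (Fin n)) j := by
          rw [Finset.mul_sum]; congr 1; funext j; ring
      _ = e i * c i ^ 2 := by rw [hinner]; ring
  have hyy : y ⬝ᵥ y = ∑ i, c i ^ 2 := by
    have h2 := b.sum_inner_mul_inner y' y'
    have h3 : (inner ℝ y' y' : ℝ) = ∑ i, y i * y i := by
      rw [hy', PiLp.inner_apply]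
      simp [RCLike.inner_apply, pow_two]
    simp only [dotProduct]
    rw [← h3, ← h2]
    congr 1
    funext i
    rw [real_inner_comm y' (b i)]
    simp [hc, pow_two, PiLp.inner_apply, RCLike.inner_apply, mul_comm]
  have heig : ∀ i, e i ≤ lamMax N := by
    intro i
    apply le_csSup (bddAbove_eigs N)
    exact ⟨(b i : EuclideanSpace ℝ (Fin n)), (WithLp.ofLp_eq_zero 2).ne.2 (b.orthonormal.ne_zero i), hH.mulVec_eigenvectorBasis i⟩
  rw [hkey, hyy, Finset.mul_sum]
  refine Finset.sum_le_sum fun i _ => ?_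
  exact mul_le_mul_of_nonneg_right (heig i) (sq_nonneg _)

/-- **Walk-summable matrices.** If the columns of `A` have unit norm (so
`‖A‖_F² = n`) and `λ_max(|Iₙ − AᵀA|) < 1`, then
`‖A‖₂² ≤ 1 + λ_max(|Iₙ − AᵀA|) < 2` and
`κ(A) < 2 min{m,n}/n ≤ 2 min{m,n}(m+n)/(mn) = min{m,n}·Γ(1,1)`. -/
theorem walk_summable_implies_ggamp_convergence {m n : ℕ} (hm : 0 < m) (hn : 0 < n)
    (A : Matrix (Fin m) (Fin n) ℝ)
    (hcol : ∀ j, ∑ i, (A i j) ^ 2 = 1)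
    (hws : lamMax (fun i j => |((1 : Matrix (Fin n) (Fin n) ℝ) - Aᵀ * A) i j|) < 1) :
    specSq A ≤ 1 + lamMax (fun i j => |((1 : Matrix (Fin n) (Fin n) ℝ) - Aᵀ * A) i j|) ∧
    specSq A < 2 ∧
    kappa A < 2 * (min m n : ℝ) / (n : ℝ) ∧
    2 * (min m n : ℝ) / (n : ℝ) ≤ 2 * (min m n : ℝ) * ((m : ℝ) + n) / ((m : ℝ) * n) ∧
    2 * (min m n : ℝ) * ((m : ℝ) + n) / ((m : ℝ) * n) = (min m n : ℝ) * Gam m n 1 1 := by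
  classical
  set M : Matrix (Fin n) (Fin n) ℝ := (1 : Matrix (Fin n) (Fin n) ℝ) - Aᵀ * A with hM
  set N : Matrix (Fin n) (Fin n) ℝ := fun i j => |M i j| with hN
  set L : ℝ := lamMax N with hL
  have hMsym : Mᵀ = M := by
    rw [hM, transpose_sub, transpose_one, transpose_mul, transpose_transpose]
  have hH : N.IsHermitian := by
    ext i j
    have h1 : M i j = M j i := by
      have h2 := congrFun (congrFun hMsym j) i
      simpa using h2
    show star (N j i) = N i j
    simp [hN, conjTranspose_apply, h1]
  have hn' : (0:ℝ) < n := by exact_mod_cast hn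
  have hm' : (0:ℝ) < m := by exact_mod_cast hm
  have hmin : (0:ℝ) < (min m n : ℝ) := by exact_mod_cast lt_min hm hn
  -- main operator bound
  have hbound : ∀ x : Fin n → ℝ,
      ∑ i, (A.mulVec x i) ^ 2 ≤ (1 + L) * ∑ i, (x i) ^ 2 := by
    intro x
    have e1 : ∑ i, (A.mulVec x i) ^ 2 = x ⬝ᵥ ((Aᵀ * A).mulVec x) := by
      rw [← mulVec_mulVec, dotProduct_mulVec, vecMul_transpose]
      simp [dotProduct, pow_two]
    have hAM : Aᵀ * A = 1 - M := by rw [hM, sub_sub_cancel]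
    have e2 : x ⬝ᵥ ((Aᵀ * A).mulVec x) = x ⬝ᵥ x - x ⬝ᵥ M.mulVec x := by
      rw [hAM, sub_mulVec, one_mulVec, dotProduct_sub]
    have e3 : |x ⬝ᵥ M.mulVec x| ≤ (fun i => |x i|) ⬝ᵥ N.mulVec (fun i => |x i|) := by
      simp only [dotProduct, mulVec]
      calc |∑ i, x i * ∑ j, M i j * x j|
          ≤ ∑ i, |x i * ∑ j, M i j * x j| := Finset.abs_sum_le_sum_abs _ _
        _ ≤ ∑ i, |x i| * ∑ j, N i j * |x j| := by
            refine Finset.sum_le_sum fun i _ => ?_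
            rw [abs_mul]
            refine mul_le_mul_of_nonneg_left ?_ (abs_nonneg _)
            calc |∑ j, M i j * x j| ≤ ∑ j, |M i j * x j| := Finset.abs_sum_le_sum_abs _ _
              _ = ∑ j, N i j * |x j| := by
                  refine Finset.sum_congr rfl fun j _ => ?_
                  rw [abs_mul]
    have e4 := rayleigh_le N hH (fun i => |x i|)
    have e5 : (fun i => |x i|) ⬝ᵥ (fun i => |x i|) = x ⬝ᵥ x := by
      simp [dotProduct, abs_mul_abs_self]
    have e6 : x ⬝ᵥ x = ∑ i, (x i) ^ 2 := by simp [dotProduct, pow_two]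
    rw [e5, ← hL] at e4
    rw [e1, e2, ← e6]
    have h7 := neg_abs_le (x ⬝ᵥ M.mulVec x)
    nlinarith [e3, e4, h7]
  have hL0 : 0 ≤ L := by
    set i0 : Fin n := ⟨0, hn⟩
    set y : Fin n → ℝ := Pi.single i0 (1:ℝ) with hy
    have h3 := rayleigh_le N hH y
    have h4 : y ⬝ᵥ N.mulVec y = N i0 i0 := by
      simp [hy, dotProduct, mulVec, Pi.single_apply]
    have h5 : y ⬝ᵥ y = 1 := by
      simp [hy, dotProduct, Pi.single_apply]
    rw [h4, h5, mul_one, ← hL] at h3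
    have h6 : 0 ≤ N i0 i0 := abs_nonneg _
    linarith
  have hspec : specSq A ≤ 1 + L := by
    have hT : ‖LinearMap.toContinuousLinearMap (Matrix.toEuclideanLin A)‖ ≤ Real.sqrt (1 + L) := by
      apply ContinuousLinearMap.opNorm_le_bound _ (Real.sqrt_nonneg _)
      intro x
      have hx2 : ‖x‖ ^ 2 = ∑ i, (x i) ^ 2 := by
        rw [EuclideanSpace.norm_eq, Real.sq_sqrt (Finset.sum_nonneg fun i _ => sq_nonneg _)]
        simp [Real.norm_eq_abs, sq_abs]
      have hTx : ‖LinearMap.toContinuousLinearMap (Matrix.toEuclideanLin A) x‖ ^ 2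
          = ∑ i, (A.mulVec x i) ^ 2 := by
        rw [EuclideanSpace.norm_eq, Real.sq_sqrt (Finset.sum_nonneg fun i _ => sq_nonneg _)]
        simp only [Real.norm_eq_abs, sq_abs]
        rfl
      have hb := hbound x
      rw [← hx2, ← hTx] at hb
      have h1 : ‖LinearMap.toContinuousLinearMap (Matrix.toEuclideanLin A) x‖
          ≤ Real.sqrt ((1 + L) * ‖x‖ ^ 2) := by
        rw [← Real.sqrt_sq (norm_nonneg _)]
        exact Real.sqrt_le_sqrt hb
      calc ‖LinearMap.toContinuousLinearMap (Matrix.toEuclideanLin A) x‖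
          ≤ Real.sqrt ((1 + L) * ‖x‖ ^ 2) := h1
        _ = Real.sqrt (1 + L) * ‖x‖ := by
            rw [Real.sqrt_mul (by linarith), Real.sqrt_sq (norm_nonneg _)]
    calc specSq A = ‖LinearMap.toContinuousLinearMap (Matrix.toEuclideanLin A)‖ ^ 2 := rfl
      _ ≤ Real.sqrt (1 + L) ^ 2 := by
          exact pow_le_pow_left₀ (norm_nonneg _) hT 2
      _ = 1 + L := Real.sq_sqrt (by linarith)
  have hws' : L < 1 := hws
  have hspec2 : specSq A < 2 := by linarith
  refine ⟨hspec, hspec2, ?_, ?_, ?_⟩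
  · -- kappa bound
    have hfrob : frobSq A = n := by
      rw [frobSq, Finset.sum_comm]
      simp [hcol]
    have hk : kappa A = specSq A * (min m n : ℝ) / n := by
      rw [kappa, hfrob]
      field_simp
    rw [hk]
    rw [div_lt_div_iff₀ hn' hn']
    have h8 := mul_lt_mul_of_pos_right hspec2 (mul_pos hmin hn')
    nlinarith [h8]
  · rw [div_le_div_iff₀ hn' (by positivity)]
    nlinarith [mul_nonneg (mul_nonneg hmin.le hn'.le) hn'.le]
  · rw [Gam]
    split_ifs with h
    · field_simp
      ring
    · field_simp
      ring
end

section
/- Let F be a complex m×n matrix with operator norm ‖F‖₂ < 1, and let D_s ∈ ℂ^{m×m} and D_x ∈ ℂ^{n×n} be real diagonal matrices whose diagonal entries all lie in the interval [0,1). Then every complex eigenvalue of the (m+n)×(m+n) block matrix H := [[D_s, F],[−F*D_s, D_x − F*F]] has modulus strictly less than 1 (here F* denotes the conjugate transpose). -/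
open Matrix

/-- Spectral (ℓ²-operator) norm of a complex matrix. -/
noncomputable def specNormC {m n : ℕ} (A : Matrix (Fin m) (Fin n) ℂ) : ℝ :=
  ‖LinearMap.toContinuousLinearMap (Matrix.toEuclideanLin A)‖

/-- **Theorem 3 (local stability of damped GAMP).** If `‖F‖₂ < 1` and `D_s, D_x`
are real diagonal matrices with diagonal entries in `[0,1)`, then every
eigenvalue of the block matrix `H = [[D_s, F], [−F*D_s, D_x − F*F]]` has
modulus strictly less than 1. -/
theorem damped_gamp_local_stability {m n : ℕ}
    (F : Matrix (Fin m) (Fin n) ℂ) (hF : specNormC F < 1)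
    (ds : Fin m → ℝ) (hds : ∀ i, ds i ∈ Set.Ico (0 : ℝ) 1)
    (dx : Fin n → ℝ) (hdx : ∀ j, dx j ∈ Set.Ico (0 : ℝ) 1) :
    ∀ (μ : ℂ) (v : (Fin m ⊕ Fin n) → ℂ), v ≠ 0 →
      (Matrix.fromBlocks
          (Matrix.diagonal (fun i => (ds i : ℂ))) F
          (-(Fᴴ * Matrix.diagonal (fun i => (ds i : ℂ))))
          (Matrix.diagonal (fun j => (dx j : ℂ)) - Fᴴ * F)).mulVec v = μ • v →
      ‖μ‖ < 1 := by
  intro μ v hv heq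
  obtain ⟨u, w, rfl⟩ : ∃ u w, v = Sum.elim u w :=
    ⟨fun i => v (Sum.inl i), fun j => v (Sum.inr j), funext fun k => by cases k <;> rfl⟩
  rw [Matrix.fromBlocks_mulVec] at heq
  have h1v : Matrix.diagonal (fun i => (ds i : ℂ)) *ᵥ u + F *ᵥ w = μ • u :=
    funext fun i => congrFun heq (Sum.inl i)
  have h2v : (-(Fᴴ * Matrix.diagonal (fun i => (ds i : ℂ)))) *ᵥ u
      + (Matrix.diagonal (fun j => (dx j : ℂ)) - Fᴴ * F) *ᵥ w = μ • w :=
    funext fun j => congrFun heq (Sum.inr j)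
  -- Simplify the second block equation.
  have E2v : Matrix.diagonal (fun j => (dx j : ℂ)) *ᵥ w = μ • w + μ • (Fᴴ *ᵥ u) := by
    have hrw : (-(Fᴴ * Matrix.diagonal (fun i => (ds i : ℂ)))) *ᵥ u
        + (Matrix.diagonal (fun j => (dx j : ℂ)) - Fᴴ * F) *ᵥ w
        = Matrix.diagonal (fun j => (dx j : ℂ)) *ᵥ w
          - Fᴴ *ᵥ (Matrix.diagonal (fun i => (ds i : ℂ)) *ᵥ u + F *ᵥ w) := by
      rw [Matrix.neg_mulVec, Matrix.sub_mulVec, Matrix.mulVec_add,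
        ← Matrix.mulVec_mulVec, ← Matrix.mulVec_mulVec]
      abel
    rw [hrw, h1v, Matrix.mulVec_smul] at h2v
    exact eq_add_of_sub_eq h2v
  have E1 : ∀ i, (ds i : ℂ) * u i + (F *ᵥ w) i = μ * u i := fun i => by
    have := congrFun h1v i
    simpa [Matrix.mulVec_diagonal] using this
  have E2 : ∀ j, (dx j : ℂ) * w j = μ * w j + μ * (Fᴴ *ᵥ u) j := fun j => by
    have := congrFun E2v j
    simpa [Matrix.mulVec_diagonal] using this
  by_cases hu : u = 0
  · -- then Dx w = μ w, so μ is a diagonal entry of Dx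
    have hw : w ≠ 0 := by
      rintro rfl; exact hv (by rw [hu]; ext k; cases k <;> rfl)
    obtain ⟨j, hj⟩ := Function.ne_iff.mp hw
    have h0 : ((dx j : ℂ) - μ) * w j = 0 := by
      have := E2 j
      rw [hu, Matrix.mulVec_zero] at this
      simp only [Pi.zero_apply] at this
      ring_nf
      linear_combination this
    have hμ : μ = (dx j : ℂ) := by
      rcases mul_eq_zero.mp h0 with h | h
      · exact (sub_eq_zero.mp h).symm
      · exact absurd h hj
    rw [hμ]
    rw [Complex.norm_real, Real.norm_eq_abs, abs_of_nonneg (hdx j).1]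
    exact (hdx j).2
  by_cases hw : w = 0
  · obtain ⟨i, hi⟩ := Function.ne_iff.mp hu
    have h0 : ((ds i : ℂ) - μ) * u i = 0 := by
      have := E1 i
      rw [hw, Matrix.mulVec_zero] at this
      simp only [Pi.zero_apply] at this
      linear_combination this
    have hμ : μ = (ds i : ℂ) := by
      rcases mul_eq_zero.mp h0 with h | h
      · exact (sub_eq_zero.mp h).symm
      · exact absurd h hi
    rw [hμ, Complex.norm_real, Real.norm_eq_abs, abs_of_nonneg (hds i).1]
    exact (hds i).2
  -- main case: u ≠ 0 and w ≠ 0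
  set P : ℝ := ∑ i, Complex.normSq (u i) with hPdef
  set Q : ℝ := ∑ j, Complex.normSq (w j) with hQdef
  set A : ℝ := ∑ i, ds i * Complex.normSq (u i) with hAdef
  set B : ℝ := ∑ j, dx j * Complex.normSq (w j) with hBdef
  set c : ℂ := ∑ i, (starRingEnd ℂ) (u i) * (F *ᵥ w) i with hcdef
  obtain ⟨i₀, hi₀⟩ := Function.ne_iff.mp hu
  obtain ⟨j₀, hj₀⟩ := Function.ne_iff.mp hw
  have hP0 : 0 < P :=
    Finset.sum_pos' (fun i _ => Complex.normSq_nonneg _)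
      ⟨i₀, Finset.mem_univ i₀, Complex.normSq_pos.mpr hi₀⟩
  have hQ0 : 0 < Q :=
    Finset.sum_pos' (fun j _ => Complex.normSq_nonneg _)
      ⟨j₀, Finset.mem_univ j₀, Complex.normSq_pos.mpr hj₀⟩
  have hAP : A < P :=
    Finset.sum_lt_sum
      (fun i _ => mul_le_of_le_one_left (Complex.normSq_nonneg _) (hds i).2.le)
      ⟨i₀, Finset.mem_univ i₀,
        mul_lt_of_lt_one_left (Complex.normSq_pos.mpr hi₀) (hds i₀).2⟩
  have hBQ : B < Q :=
    Finset.sum_lt_sum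
      (fun j _ => mul_le_of_le_one_left (Complex.normSq_nonneg _) (hdx j).2.le)
      ⟨j₀, Finset.mem_univ j₀,
        mul_lt_of_lt_one_left (Complex.normSq_pos.mpr hj₀) (hdx j₀).2⟩
  have hA0 : 0 ≤ A :=
    Finset.sum_nonneg fun i _ => mul_nonneg (hds i).1 (Complex.normSq_nonneg _)
  have hB0 : 0 ≤ B :=
    Finset.sum_nonneg fun j _ => mul_nonneg (hdx j).1 (Complex.normSq_nonneg _)
  -- scalar equation 1 : A + c = μ P
  have hAc : (A : ℂ) + c = μ * (P : ℂ) := by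
    rw [hPdef, hAdef, hcdef]
    push_cast
    rw [← Finset.sum_add_distrib, Finset.mul_sum]
    refine Finset.sum_congr rfl fun i _ => ?_
    have hns : ((Complex.normSq (u i) : ℝ) : ℂ) = (starRingEnd ℂ) (u i) * u i :=
      Complex.normSq_eq_conj_mul_self
    linear_combination (starRingEnd ℂ) (u i) * E1 i + ((ds i : ℂ) - μ) * hns
  -- the cross term identity
  have hd : ∑ j, (starRingEnd ℂ) (w j) * (Fᴴ *ᵥ u) j = (starRingEnd ℂ) c := by
    rw [hcdef, map_sum]
    simp only [Matrix.mulVec, dotProduct, Matrix.conjTranspose_apply,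
      _root_.map_mul, map_sum, Finset.mul_sum, Complex.conj_conj, RCLike.star_def]
    rw [Finset.sum_comm]
    exact Finset.sum_congr rfl fun j _ => Finset.sum_congr rfl fun i _ => by ring
  -- scalar equation 2 : B = μ Q + μ conj c
  have hBc : (B : ℂ) = μ * (Q : ℂ) + μ * (starRingEnd ℂ) c := by
    rw [← hd, hQdef, hBdef]
    push_cast
    rw [Finset.mul_sum, Finset.mul_sum, ← Finset.sum_add_distrib]
    refine Finset.sum_congr rfl fun j _ => ?_
    have hns : ((Complex.normSq (w j) : ℝ) : ℂ) = (starRingEnd ℂ) (w j) * w j :=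
      Complex.normSq_eq_conj_mul_self
    linear_combination (starRingEnd ℂ) (w j) * E2 j + ((dx j : ℂ) - μ) * hns
  -- Cauchy–Schwarz : |c| < √P √Q
  set u' : EuclideanSpace ℂ (Fin m) := (WithLp.equiv 2 (Fin m → ℂ)).symm u with hu'def
  set w' : EuclideanSpace ℂ (Fin n) := (WithLp.equiv 2 (Fin n → ℂ)).symm w with hw'def
  have hPsqrt : Real.sqrt P = ‖u'‖ := by
    rw [EuclideanSpace.norm_eq, hPdef]
    congr 1
    exact Finset.sum_congr rfl fun i _ => by
      simp [hu'def, WithLp.equiv_symm_apply, Complex.sq_norm]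
  have hQsqrt : Real.sqrt Q = ‖w'‖ := by
    rw [EuclideanSpace.norm_eq, hQdef]
    congr 1
    exact Finset.sum_congr rfl fun j _ => by
      simp [hw'def, WithLp.equiv_symm_apply, Complex.sq_norm]
  have hcinner : c = inner ℂ u' ((Matrix.toEuclideanLin F) w') := by
    rw [Matrix.toEuclideanLin_apply, hcdef]
    simp [PiLp.inner_apply, RCLike.inner_apply, hu'def, hw'def,
      WithLp.equiv_symm_apply, RCLike.star_def]
    exact Finset.sum_congr rfl fun i _ => mul_comm _ _
  have hcabs : ‖c‖ < Real.sqrt P * Real.sqrt Q := by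
    have hle : ‖c‖ ≤ ‖u'‖ * ‖(Matrix.toEuclideanLin F) w'‖ := by
      rw [hcinner]
      exact norm_inner_le_norm _ _
    have hop : ‖(Matrix.toEuclideanLin F) w'‖ ≤ specNormC F * ‖w'‖ := by
      have h := (LinearMap.toContinuousLinearMap (Matrix.toEuclideanLin F)).le_opNorm w'
      simpa [specNormC] using h
    have hup : (0 : ℝ) < ‖u'‖ := by rw [← hPsqrt]; exact Real.sqrt_pos.mpr hP0
    have hwp : (0 : ℝ) < ‖w'‖ := by rw [← hQsqrt]; exact Real.sqrt_pos.mpr hQ0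
    rw [hPsqrt, hQsqrt]
    have h3 : ‖c‖ ≤ ‖u'‖ * (specNormC F * ‖w'‖) :=
      hle.trans (mul_le_mul_of_nonneg_left hop (norm_nonneg _))
    have h5 : specNormC F * (‖u'‖ * ‖w'‖) < 1 * (‖u'‖ * ‖w'‖) :=
      mul_lt_mul_of_pos_right hF (mul_pos hup hwp)
    nlinarith
  -- suppose |μ| ≥ 1 and derive a contradiction
  by_contra hcon
  push_neg at hcon
  have hns1 : 1 ≤ Complex.normSq μ := by
    rw [← Complex.sq_norm]
    nlinarith
  have hconjA : (A : ℂ) + (starRingEnd ℂ) c = (starRingEnd ℂ) μ * (P : ℂ) := by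
    have h := congrArg (starRingEnd ℂ) hAc
    simpa [map_add, _root_.map_mul, Complex.conj_ofReal] using h
  have hkey : (B : ℂ) = μ * (Q : ℂ) + (Complex.normSq μ : ℂ) * (P : ℂ) - μ * (A : ℂ) := by
    have hmc : μ * (starRingEnd ℂ) μ = (Complex.normSq μ : ℂ) := Complex.mul_conj μ
    linear_combination hBc + μ * hconjA + (P : ℂ) * hmc
  have hkeyIm : μ.im * Q - μ.im * A = 0 := by
    have h := congrArg Complex.im hkey
    simp only [Complex.add_im, Complex.sub_im, Complex.mul_im, Complex.ofReal_im,
      Complex.ofReal_re, mul_zero, zero_mul, add_zero, zero_add] at h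
    linarith
  have hkeyRe : B = μ.re * Q + Complex.normSq μ * P - μ.re * A := by
    have h := congrArg Complex.re hkey
    simp only [Complex.add_re, Complex.sub_re, Complex.mul_re, Complex.ofReal_im,
      Complex.ofReal_re, mul_zero, zero_mul, add_zero, sub_zero, zero_add] at h
    linarith
  clear_value P Q A B c u' w'
  clear hPsqrt hQsqrt hcinner hu'def hw'def u' w'
  clear heq h1v h2v E2v E1 E2 hd hBc hconjA hkey
  clear hPdef hQdef hAdef hBdef hcdef hv hu hw hi₀ hj₀ F hF hds hdx ds dx
  rcases eq_or_ne μ.im 0 with him0 | him0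
  · -- μ is real
    obtain ⟨t, rfl⟩ : ∃ t : ℝ, μ = (t : ℂ) :=
      ⟨μ.re, Complex.ext (by simp) (by simp [him0])⟩
    rw [Complex.norm_real, Real.norm_eq_abs] at hcon
    rw [Complex.ofReal_re, Complex.normSq_ofReal] at hkeyRe
    clear hkeyIm him0 hns1
    rcases le_or_gt 1 t with ht1 | ht1
    · -- t ≥ 1 : B > Q, contradiction
      clear hAc hcabs c
      have h1 : 0 < t * P - A := by nlinarith
      have h2 : 0 < t * (t * P - A) := mul_pos (by linarith) h1
      nlinarith
    · -- t ≤ -1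
      have ht2 : t ≤ -1 := by
        rcases abs_cases t with ⟨h, _⟩ | ⟨h, _⟩ <;> linarith
      have hcreal : c = ((t * P - A : ℝ) : ℂ) := by
        have h : c = (t : ℂ) * (P : ℂ) - (A : ℂ) := by linear_combination hAc
        rw [h]; push_cast; ring
      rw [hcreal, Complex.norm_real, Real.norm_eq_abs] at hcabs
      clear hcreal hAc c
      have hcabs' : A - t * P < Real.sqrt P * Real.sqrt Q :=
        lt_of_le_of_lt (by rw [abs_sub_comm]; exact le_abs_self _) hcabs
      have hQle : Q ≤ A - t * P := by nlinarith
      have hPle : P ≤ A - t * P := by nlinarith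
      have hsq : (Real.sqrt P * Real.sqrt Q) ^ 2 = P * Q := by
        rw [mul_pow, Real.sq_sqrt hP0.le, Real.sq_sqrt hQ0.le]
      nlinarith [Real.sqrt_nonneg P, Real.sqrt_nonneg Q]
  · -- μ is not real : then Q = A and B = |μ|² P
    have hQA : Q = A := by
      rcases mul_eq_zero.mp (by linarith [hkeyIm] : μ.im * (Q - A) = 0) with h | h
      · exact absurd h him0
      · linarith [sub_eq_zero.mp h]
    rw [hQA] at hkeyRe hBQ
    linarith [mul_nonneg (by linarith : (0 : ℝ) ≤ Complex.normSq μ - 1) hP0.le]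
end

section
/- Let F be a complex m×n matrix, let D_s ∈ ℂ^{m×m} and D_x ∈ ℂ^{n×n} be real diagonal matrices with all diagonal entries in [0,1), let H := [[D_s, F],[−F*D_s, D_x − F*F]] be the (m+n)×(m+n) block matrix, and let λ ∈ ℂ with |λ| ≥ 1. Then λI_{m+n} − H is invertible if and only if the n×n matrix J_λ := λI_n − D_x + λ·F*(λI_m − D_s)^{−1}F is invertible. (Note λI_m − D_s is invertible since |λ| ≥ 1 exceeds every diagonal entry of D_s.) -/
open Matrix

/-- **Lemma 1 (Appendix B).** For `|λ| ≥ 1` and real diagonal `D_s, D_x` with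
entries in `[0,1)`, the matrix `λI − H`, where
`H = [[D_s, F], [−F*D_s, D_x − F*F]]`, is invertible if and only if the
Schur-complement-type matrix `J_λ = λIₙ − D_x + λ·F*(λIₘ − D_s)⁻¹F` is. -/
theorem gamp_schur_complement_invertibility {m n : ℕ}
    (F : Matrix (Fin m) (Fin n) ℂ)
    (ds : Fin m → ℝ) (hds : ∀ i, ds i ∈ Set.Ico (0 : ℝ) 1)
    (dx : Fin n → ℝ) (hdx : ∀ j, dx j ∈ Set.Ico (0 : ℝ) 1)
    (lam : ℂ) (hlam : 1 ≤ ‖lam‖) :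
    IsUnit
      (lam • (1 : Matrix (Fin m ⊕ Fin n) (Fin m ⊕ Fin n) ℂ) -
        Matrix.fromBlocks
          (Matrix.diagonal (fun i => (ds i : ℂ))) F
          (-(Fᴴ * Matrix.diagonal (fun i => (ds i : ℂ))))
          (Matrix.diagonal (fun j => (dx j : ℂ)) - Fᴴ * F)) ↔
    IsUnit
      (lam • (1 : Matrix (Fin n) (Fin n) ℂ) - Matrix.diagonal (fun j => (dx j : ℂ)) +
        lam • (Fᴴ *
          (lam • (1 : Matrix (Fin m) (Fin m) ℂ) -
            Matrix.diagonal (fun i => (ds i : ℂ)))⁻¹ * F)) := by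
  -- the diagonal entries of λI − D_s
  set d : Fin m → ℂ := fun i => lam - (ds i : ℂ) with hd_def
  have hd : ∀ i, d i ≠ 0 := by
    intro i
    have h1 : ‖((ds i : ℂ))‖ < 1 := by
      simpa [Complex.norm_real, Real.norm_eq_abs, abs_of_nonneg (hds i).1] using (hds i).2
    have : ‖((ds i : ℂ))‖ < ‖lam‖ := lt_of_lt_of_le h1 hlam
    intro h
    rw [sub_eq_zero] at h
    rw [h] at this
    exact lt_irrefl _ this
  -- λI − D_s as a diagonal matrix
  have hA : lam • (1 : Matrix (Fin m) (Fin m) ℂ) -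
      Matrix.diagonal (fun i => (ds i : ℂ)) = Matrix.diagonal d := by
    rw [smul_one_eq_diagonal, diagonal_sub]
  have hdinv : Invertible d := ⟨fun i => (d i)⁻¹,
    funext fun i => inv_mul_cancel₀ (hd i), funext fun i => mul_inv_cancel₀ (hd i)⟩
  have hAinv : Invertible (Matrix.diagonal d) := Matrix.diagonalInvertible d
  -- inverse of diagonal
  have hAinv_eq : (Matrix.diagonal d)⁻¹ = Matrix.diagonal (fun i => (d i)⁻¹) := by
    refine Matrix.inv_eq_right_inv ?_
    rw [Matrix.diagonal_mul_diagonal, ← Matrix.diagonal_one]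
    exact congrArg Matrix.diagonal (funext fun i => mul_inv_cancel₀ (hd i))
  have hinvOf : ⅟(Matrix.diagonal d) = Matrix.diagonal (fun i => (d i)⁻¹) := by
    rw [Matrix.invOf_eq_nonsing_inv, hAinv_eq]
  -- rewrite the big matrix as a block matrix
  have hblock : lam • (1 : Matrix (Fin m ⊕ Fin n) (Fin m ⊕ Fin n) ℂ) -
      Matrix.fromBlocks
        (Matrix.diagonal (fun i => (ds i : ℂ))) F
        (-(Fᴴ * Matrix.diagonal (fun i => (ds i : ℂ))))
        (Matrix.diagonal (fun j => (dx j : ℂ)) - Fᴴ * F) =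
      Matrix.fromBlocks (Matrix.diagonal d) (-F)
        (Fᴴ * Matrix.diagonal (fun i => (ds i : ℂ)))
        (lam • (1 : Matrix (Fin n) (Fin n) ℂ) -
          (Matrix.diagonal (fun j => (dx j : ℂ)) - Fᴴ * F)) := by
    rw [← Matrix.fromBlocks_one, Matrix.fromBlocks_smul, sub_eq_add_neg,
      Matrix.fromBlocks_neg, Matrix.fromBlocks_add]
    simp only [smul_zero, zero_add, neg_neg, ← sub_eq_add_neg, hA, zero_sub]
  rw [hblock, Matrix.isUnit_fromBlocks_iff_of_invertible₁₁, hinvOf]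
  -- identify the Schur complement with J_λ
  have key : lam • (1 : Matrix (Fin n) (Fin n) ℂ) -
        (Matrix.diagonal (fun j => (dx j : ℂ)) - Fᴴ * F) -
        Fᴴ * Matrix.diagonal (fun i => (ds i : ℂ)) *
          Matrix.diagonal (fun i => (d i)⁻¹) * (-F) =
      lam • (1 : Matrix (Fin n) (Fin n) ℂ) - Matrix.diagonal (fun j => (dx j : ℂ)) +
        lam • (Fᴴ *
          (lam • (1 : Matrix (Fin m) (Fin m) ℂ) -
            Matrix.diagonal (fun i => (ds i : ℂ)))⁻¹ * F) := by
    rw [hA, hAinv_eq]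
    have hdiag : (1 : Matrix (Fin m) (Fin m) ℂ) +
        Matrix.diagonal (fun i => (ds i : ℂ)) * Matrix.diagonal (fun i => (d i)⁻¹) =
        lam • Matrix.diagonal (fun i => (d i)⁻¹) := by
      ext i j
      rcases eq_or_ne i j with rfl | h
      · simp only [Matrix.add_apply, Matrix.one_apply_eq, Matrix.diagonal_mul_diagonal,
          Matrix.diagonal_apply_eq, Matrix.smul_apply, smul_eq_mul]
        have hsum : d i + (ds i : ℂ) = lam := by rw [hd_def]; ring
        calc (1 : ℂ) + (ds i : ℂ) * (d i)⁻¹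
            = (d i + (ds i : ℂ)) * (d i)⁻¹ := by
              rw [add_mul, mul_inv_cancel₀ (hd i)]
          _ = lam * (d i)⁻¹ := by rw [hsum]
      · simp [Matrix.diagonal_apply_ne _ h, Matrix.one_apply_ne h]
    calc lam • (1 : Matrix (Fin n) (Fin n) ℂ) -
          (Matrix.diagonal (fun j => (dx j : ℂ)) - Fᴴ * F) -
          Fᴴ * Matrix.diagonal (fun i => (ds i : ℂ)) *
            Matrix.diagonal (fun i => (d i)⁻¹) * (-F)
        = lam • (1 : Matrix (Fin n) (Fin n) ℂ) - Matrix.diagonal (fun j => (dx j : ℂ)) +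
          Fᴴ * ((1 : Matrix (Fin m) (Fin m) ℂ) +
            Matrix.diagonal (fun i => (ds i : ℂ)) * Matrix.diagonal (fun i => (d i)⁻¹)) * F := by
          noncomm_ring
          simp [neg_one_smul, Matrix.mul_neg, Matrix.mul_add, Matrix.add_mul,
            Matrix.mul_one, Matrix.mul_assoc]
      _ = lam • (1 : Matrix (Fin n) (Fin n) ℂ) - Matrix.diagonal (fun j => (dx j : ℂ)) +
          lam • (Fᴴ * Matrix.diagonal (fun i => (d i)⁻¹) * F) := by
          rw [hdiag, Matrix.mul_smul, Matrix.smul_mul]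
  rw [key]
end

section
/- Let F be a complex m×n matrix with operator norm ‖F‖₂ < 1, let D_s ∈ ℂ^{m×m} and D_x ∈ ℂ^{n×n} be real diagonal matrices with all diagonal entries in [0,1), and let λ ∈ ℂ with |λ| ≥ 1. Then the matrix J_λ := λI_n − D_x + λ·F*(λI_m − D_s)^{−1}F is invertible. -/
open Matrix

set_option maxHeartbeats 2000000

lemma specNormC_conjTranspose {m n : ℕ} (A : Matrix (Fin m) (Fin n) ℂ) :
    specNormC Aᴴ = specNormC A := by
  unfold specNormC
  rw [Matrix.toEuclideanLin_conjTranspose_eq_adjoint,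
    LinearMap.adjoint_toContinuousLinearMap]
  exact LinearIsometryEquiv.norm_map ContinuousLinearMap.adjoint _

lemma mulVec_sq_sum_le {p q : ℕ} (A : Matrix (Fin p) (Fin q) ℂ) (v : Fin q → ℂ) :
    ∑ i, ‖(A *ᵥ v) i‖^2 ≤ (specNormC A)^2 * ∑ j, ‖v j‖^2 := by
  have h := (LinearMap.toContinuousLinearMap (Matrix.toEuclideanLin A)).le_opNorm
    ((WithLp.equiv 2 (Fin q → ℂ)).symm v)
  rw [LinearMap.coe_toContinuousLinearMap'] at h
  rw [show Matrix.toEuclideanLin A ((WithLp.equiv 2 (Fin q → ℂ)).symm v) = (WithLp.equiv 2 (Fin p → ℂ)).symm (A *ᵥ v) from rfl] at h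
  have e1 : ‖(WithLp.equiv 2 (Fin p → ℂ)).symm (A *ᵥ v)‖ = Real.sqrt (∑ i, ‖(A *ᵥ v) i‖^2) := by
    rw [EuclideanSpace.norm_eq]; rfl
  have e2 : ‖(WithLp.equiv 2 (Fin q → ℂ)).symm v‖ = Real.sqrt (∑ j, ‖v j‖^2) := by
    rw [EuclideanSpace.norm_eq]; rfl
  rw [e1, e2] at h
  have h0 : (0:ℝ) ≤ ∑ j, ‖v j‖^2 := Finset.sum_nonneg (fun _ _ => sq_nonneg _)
  have h1 : (0:ℝ) ≤ ∑ i, ‖(A *ᵥ v) i‖^2 := Finset.sum_nonneg (fun _ _ => sq_nonneg _)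
  have := mul_self_le_mul_self (Real.sqrt_nonneg _) h
  rw [Real.mul_self_sqrt h1] at this
  calc ∑ i, ‖(A *ᵥ v) i‖^2 ≤ (specNormC A * Real.sqrt (∑ j, ‖v j‖^2)) *
        (specNormC A * Real.sqrt (∑ j, ‖v j‖^2)) := this
    _ = (specNormC A)^2 * ∑ j, ‖v j‖^2 := by
        rw [mul_mul_mul_comm, Real.mul_self_sqrt h0]; ring

lemma aux_case_pos (a b nx qx ny qs : ℝ) (ha : 1 ≤ a) (hny0 : 0 ≤ ny) (hqs0 : 0 ≤ qs)
    (hqsle : qs ≤ ny) (hqxlt : qx < nx) (hnx : 0 < nx)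
    (h : a * nx - qx + (a^2 + b^2) * ny - a * qs = 0) : False := by
  nlinarith [sq_nonneg b, mul_nonneg (sq_nonneg b) hny0, mul_le_mul_of_nonneg_left hqsle (by linarith : (0:ℝ) ≤ a), mul_le_mul_of_nonneg_right ha hny0, mul_le_mul_of_nonneg_right ha (le_of_lt hnx)]

lemma aux_case_neg (s nx ny : ℝ) (hs0 : 0 ≤ s) (hs1 : s < 1) (hnx : 0 < nx) (hny0 : 0 ≤ ny)
    (e1 : nx ≤ s^2 * ny) (e2 : ny ≤ s^2 * nx) : False := by
  have h2 : s^2 < 1 := by nlinarith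
  have h3 : s^2 * ny ≤ s^2 * (s^2 * nx) := mul_le_mul_of_nonneg_left e2 (sq_nonneg s)
  have h4 : s^2 * (s^2 * nx) ≤ 1 * (s^2 * nx) :=
    mul_le_mul_of_nonneg_right (le_of_lt h2) (mul_nonneg (sq_nonneg s) (le_of_lt hnx))
  nlinarith [h2, h3, h4]

lemma aux_case_complex (A nx qx ny qs : ℝ) (hA : 1 ≤ A) (h : A * ny = qx)
    (hqxlt : qx < nx) (hnq : nx = qs) (hqslt : qs < ny) (hny0 : 0 ≤ ny) : False := by
  nlinarith [mul_le_mul_of_nonneg_right hA hny0]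

lemma aux_sq_le (a d : ℝ) (hd : 0 ≤ d) (ha : a ≤ 0) : a^2 ≤ (a - d)^2 := by nlinarith

lemma aux_transfer (A B u v : ℝ) (h : A * u = B * v) (hAB : A ≤ B) (hA : 0 < A)
    (hu0 : 0 ≤ u) (hv0 : 0 ≤ v) : v ≤ u := by nlinarith

/-- **Key invertibility step (Appendix D).** If `‖F‖₂ < 1`, `D_s, D_x` are real
diagonal matrices with entries in `[0,1)`, and `|λ| ≥ 1`, then
`J_λ = λIₙ − D_x + λ·F*(λIₘ − D_s)⁻¹F` is invertible. -/
theorem gamp_Jlambda_invertible {m n : ℕ}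
    (F : Matrix (Fin m) (Fin n) ℂ) (hF : specNormC F < 1)
    (ds : Fin m → ℝ) (hds : ∀ i, ds i ∈ Set.Ico (0 : ℝ) 1)
    (dx : Fin n → ℝ) (hdx : ∀ j, dx j ∈ Set.Ico (0 : ℝ) 1)
    (lam : ℂ) (hlam : 1 ≤ ‖lam‖) :
    IsUnit
      (lam • (1 : Matrix (Fin n) (Fin n) ℂ) - Matrix.diagonal (fun j => (dx j : ℂ)) +
        lam • (Fᴴ *
          (lam • (1 : Matrix (Fin m) (Fin m) ℂ) -
            Matrix.diagonal (fun i => (ds i : ℂ)))⁻¹ * F)) := by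
  -- the diagonal entries λ - ds i are nonzero
  have hds0 : ∀ i, (lam - (ds i : ℂ)) ≠ 0 := by
    intro i h
    rw [sub_eq_zero] at h
    have : ‖lam‖ = ds i := by
      rw [h, Complex.norm_real, Real.norm_of_nonneg (hds i).1]
    linarith [(hds i).2]
  have hMinv : (lam • (1 : Matrix (Fin m) (Fin m) ℂ) -
      Matrix.diagonal (fun i => (ds i : ℂ)))⁻¹ =
      Matrix.diagonal (fun i => (lam - ds i)⁻¹) := by
    rw [smul_one_eq_diagonal, diagonal_sub]
    apply Matrix.inv_eq_right_inv
    rw [Matrix.diagonal_mul_diagonal]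
    have : (fun i => (lam - (ds i:ℂ)) * (lam - (ds i:ℂ))⁻¹) = fun _ => (1:ℂ) := by
      funext i
      exact mul_inv_cancel₀ (hds0 i)
    rw [this, Matrix.diagonal_one]
  rw [hMinv]
  rw [Matrix.isUnit_iff_isUnit_det, isUnit_iff_ne_zero]
  intro hdet
  obtain ⟨x, hx0, hxJ⟩ := (Matrix.exists_mulVec_eq_zero_iff).mpr hdet
  -- componentwise equation
  set g : Fin m → ℂ := F *ᵥ x with hg
  set y : Fin m → ℂ := fun i => (lam - ds i)⁻¹ * g i with hy
  set hv : Fin n → ℂ := Fᴴ *ᵥ y with hhv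
  have hcomp : ∀ j, (lam - dx j) * x j + lam * hv j = 0 := by
    intro j
    have h := congrFun hxJ j
    rw [Matrix.add_mulVec, Matrix.sub_mulVec, Matrix.smul_mulVec, Matrix.one_mulVec,
      Matrix.smul_mulVec, Matrix.mul_assoc, ← Matrix.mulVec_mulVec,
      ← Matrix.mulVec_mulVec] at h
    have hd : (Matrix.diagonal (fun i => (lam - (ds i:ℂ))⁻¹)) *ᵥ (F *ᵥ x) = y := by
      funext i; exact Matrix.mulVec_diagonal _ _ _
    rw [hd] at h
    simp only [Pi.add_apply, Pi.sub_apply, Pi.smul_apply, Pi.zero_apply, smul_eq_mul,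
      Matrix.mulVec_diagonal] at h
    linear_combination h
  -- real quantities
  set nx : ℝ := ∑ j, ‖x j‖^2 with hnxd
  set qx : ℝ := ∑ j, dx j * ‖x j‖^2 with hqxd
  set ny : ℝ := ∑ i, ‖y i‖^2 with hnyd
  set qs : ℝ := ∑ i, ds i * ‖y i‖^2 with hqsd
  have hcz : ∀ z : ℂ, (starRingEnd ℂ) z * z = ((‖z‖^2 : ℝ) : ℂ) := by
    intro z
    rw [mul_comm, Complex.mul_conj, Complex.normSq_eq_norm_sq]
  have hgy : ∀ i, g i = (lam - ds i) * y i := by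
    intro i
    rw [hy, ← mul_assoc, mul_inv_cancel₀ (hds0 i), one_mul]
  -- the key complex identity
  have key : lam * (nx:ℂ) - (qx:ℂ) + lam * ((starRingEnd ℂ) lam * (ny:ℂ) - (qs:ℂ)) = 0 := by
    have s1 : ∑ j, (starRingEnd ℂ) (x j) * ((lam - dx j) * x j)
        = lam * (nx:ℂ) - (qx:ℂ) := by
      have e : ∀ j : Fin n, (starRingEnd ℂ) (x j) * ((lam - dx j) * x j)
          = lam * ((‖x j‖^2 : ℝ) : ℂ) - (dx j : ℂ) * ((‖x j‖^2 : ℝ) : ℂ) := by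
        intro j
        rw [show (starRingEnd ℂ) (x j) * ((lam - dx j) * x j)
            = (lam - dx j) * ((starRingEnd ℂ) (x j) * x j) from by ring, hcz]
        ring
      rw [Finset.sum_congr rfl (fun j _ => e j), Finset.sum_sub_distrib, ← Finset.mul_sum]
      rw [hnxd, hqxd]
      push_cast
      rw [Finset.mul_sum]
    have s2 : ∑ j, (starRingEnd ℂ) (x j) * hv j = ∑ i, (starRingEnd ℂ) (g i) * y i := by
      have e : ∀ j : Fin n, (starRingEnd ℂ) (x j) * hv j
          = ∑ i, (starRingEnd ℂ) (x j) * ((starRingEnd ℂ) (F i j) * y i) := by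
        intro j
        rw [hhv, Matrix.mulVec, dotProduct, Finset.mul_sum]
        exact Finset.sum_congr rfl (fun i _ => by rfl)
      rw [Finset.sum_congr rfl (fun j _ => e j), Finset.sum_comm]
      congr 1
      funext i
      rw [hg, Matrix.mulVec, dotProduct, map_sum, Finset.sum_mul]
      congr 1
      funext j
      rw [_root_.map_mul]
      ring
    have s3 : ∑ i, (starRingEnd ℂ) (g i) * y i
        = (starRingEnd ℂ) lam * (ny:ℂ) - (qs:ℂ) := by
      have e : ∀ i : Fin m, (starRingEnd ℂ) (g i) * y i
          = (starRingEnd ℂ) lam * ((‖y i‖^2 : ℝ) : ℂ) - (ds i : ℂ) * ((‖y i‖^2 : ℝ) : ℂ) := by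
        intro i
        rw [hgy i, _root_.map_mul, show (starRingEnd ℂ) (lam - (ds i:ℂ)) * (starRingEnd ℂ) (y i) * y i
            = (starRingEnd ℂ) (lam - ds i) * ((starRingEnd ℂ) (y i) * y i) from by ring, hcz,
          _root_.map_sub, Complex.conj_ofReal]
        ring
      rw [Finset.sum_congr rfl (fun i _ => e i), Finset.sum_sub_distrib, ← Finset.mul_sum]
      rw [hnyd, hqsd]
      push_cast
      rw [Finset.mul_sum]
    have total : ∑ j, (starRingEnd ℂ) (x j) * ((lam - dx j) * x j + lam * hv j) = 0 := by
      rw [Finset.sum_congr rfl (fun j _ => by rw [hcomp j, mul_zero])]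
      exact Finset.sum_const_zero
    have expand : ∑ j, (starRingEnd ℂ) (x j) * ((lam - dx j) * x j + lam * hv j)
        = ∑ j, (starRingEnd ℂ) (x j) * ((lam - dx j) * x j)
          + lam * ∑ j, (starRingEnd ℂ) (x j) * hv j := by
      rw [Finset.mul_sum, ← Finset.sum_add_distrib]
      congr 1
      funext j
      ring
    rw [expand, s1, s2, s3] at total
    convert total using 2
  -- real and imaginary parts
  have h1 := congrArg Complex.re key
  have h2 := congrArg Complex.im key
  simp only [Complex.add_re, Complex.sub_re, Complex.mul_re, Complex.mul_im, Complex.add_im,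
    Complex.sub_im, Complex.conj_re, Complex.conj_im, Complex.ofReal_re, Complex.ofReal_im,
    Complex.zero_re, Complex.zero_im, mul_zero, zero_mul, sub_zero, zero_sub, mul_neg,
    neg_neg, neg_zero, add_zero, zero_add] at h1 h2
  have him : lam.im * (nx - qs) = 0 := by nlinarith [h2]
  have hre : lam.re * nx - qx + (lam.re^2 + lam.im^2) * ny - lam.re * qs = 0 := by
    nlinarith [h1]
  -- basic positivity facts
  obtain ⟨j0, hj0⟩ := Function.ne_iff.mp hx0
  have hj0' : x j0 ≠ 0 := by simpa using hj0
  have hxj0 : (0:ℝ) < ‖x j0‖^2 := pow_pos (norm_pos_iff.mpr hj0') 2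
  have hnx : 0 < nx :=
    Finset.sum_pos' (fun j _ => sq_nonneg _) ⟨j0, Finset.mem_univ _, hxj0⟩
  have hqx0 : 0 ≤ qx :=
    Finset.sum_nonneg (fun j _ => mul_nonneg (hdx j).1 (sq_nonneg _))
  have hqs0 : 0 ≤ qs :=
    Finset.sum_nonneg (fun i _ => mul_nonneg (hds i).1 (sq_nonneg _))
  have hny0 : 0 ≤ ny := Finset.sum_nonneg (fun i _ => sq_nonneg _)
  have hqxlt : qx < nx := by
    have h : 0 < ∑ j, (1 - dx j) * ‖x j‖^2 :=
      Finset.sum_pos' (fun j _ => mul_nonneg (by linarith [(hdx j).2]) (sq_nonneg _))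
        ⟨j0, Finset.mem_univ _, mul_pos (by linarith [(hdx j0).2]) hxj0⟩
    have e : ∑ j, (1 - dx j) * ‖x j‖^2 = nx - qx := by
      rw [hnxd, hqxd, ← Finset.sum_sub_distrib]
      exact Finset.sum_congr rfl (fun j _ => by ring)
    linarith [e ▸ h]
  have hqsle : qs ≤ ny :=
    Finset.sum_le_sum (fun i _ =>
      mul_le_of_le_one_left (sq_nonneg _) (le_of_lt (hds i).2) |>.trans_eq (one_mul _).symm
        |>.trans_eq (one_mul _))
  have habs1 : (1:ℝ) ≤ lam.re^2 + lam.im^2 := by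
    have := Complex.sq_norm lam
    rw [Complex.normSq_apply] at this
    nlinarith [hlam]
  rcases eq_or_ne lam.im 0 with hb | hb
  · -- λ real
    have ha2 : (1:ℝ) ≤ lam.re^2 := by nlinarith [habs1]
    rcases le_or_gt 1 lam.re with ha | ha'
    · -- λ ≥ 1
      exact aux_case_pos lam.re lam.im nx qx ny qs ha hny0 hqs0 hqsle hqxlt hnx hre
    · -- λ ≤ -1
      have ha : lam.re ≤ -1 := by nlinarith [ha2]
      set σ : ℝ := specNormC F with hσd
      have hσ0 : 0 ≤ σ := norm_nonneg _
      have habs2 : ∀ z : ℂ, ‖z‖^2 = z.re^2 + z.im^2 := by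
        intro z
        rw [Complex.sq_norm, Complex.normSq_apply]
        ring
      -- upper bounds from operator norm
      have hgb : ∑ i, ‖g i‖^2 ≤ σ^2 * nx := mulVec_sq_sum_le F x
      have hhb : ∑ j, ‖hv j‖^2 ≤ σ^2 * ny := by
        have := mulVec_sq_sum_le Fᴴ y
        rw [specNormC_conjTranspose] at this
        exact this
      -- lower bound on ∑ ‖g i‖²
      have hglow : lam.re^2 * ny ≤ ∑ i, ‖g i‖^2 := by
        rw [hnyd, Finset.mul_sum]
        apply Finset.sum_le_sum
        intro i _
        have h9 : ‖g i‖^2 = ‖lam - (ds i:ℂ)‖^2 * ‖y i‖^2 := by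
          rw [hgy i, norm_mul, mul_pow]
        rw [h9]
        have hcoef : lam.re^2 ≤ ‖lam - (ds i:ℂ)‖^2 := by
          rw [habs2]
          simp only [Complex.sub_re, Complex.sub_im, Complex.ofReal_re, Complex.ofReal_im, hb]
          have := aux_sq_le lam.re (ds i) (hds i).1 (by linarith)
          nlinarith [this]
        exact mul_le_mul_of_nonneg_right hcoef (sq_nonneg _)
      -- lower bound on ∑ ‖hv j‖²
      have hhlow : nx ≤ ∑ j, ‖hv j‖^2 := by
        rw [hnxd]
        apply Finset.sum_le_sum
        intro j _
        show ‖x j‖^2 ≤ ‖hv j‖^2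
        have hc := hcomp j
        have he : lam * hv j = -((lam - dx j) * x j) := by linear_combination hc
        have hn : ‖lam‖^2 * ‖hv j‖^2 = ‖lam - (dx j:ℂ)‖^2 * ‖x j‖^2 := by
          rw [← mul_pow, ← mul_pow, ← norm_mul, ← norm_mul, he, norm_neg]
        have hl2 : ‖lam‖^2 = lam.re^2 := by rw [habs2, hb]; ring
        have hlx : lam.re^2 ≤ ‖lam - (dx j:ℂ)‖^2 := by
          rw [habs2]
          simp only [Complex.sub_re, Complex.sub_im, Complex.ofReal_re, Complex.ofReal_im, hb]
          have := aux_sq_le lam.re (dx j) (hdx j).1 (by linarith)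
          nlinarith [this]
        rw [hl2] at hn
        exact aux_transfer (lam.re^2) (‖lam - (dx j:ℂ)‖^2) (‖hv j‖^2) (‖x j‖^2) hn hlx
          (by nlinarith [ha2]) (sq_nonneg _) (sq_nonneg _)
      -- combine: nx ≤ σ²·ny and ny ≤ σ²·nx
      have e1 : nx ≤ σ^2 * ny := le_trans hhlow hhb
      have e2 : ny ≤ σ^2 * nx := by
        have h5 := le_trans hglow hgb
        nlinarith [h5, ha2, hny0]
      exact aux_case_neg σ nx ny hσ0 hF hnx hny0 e1 e2
  · -- λ non-real
    have hnq : nx = qs := by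
      rcases mul_eq_zero.mp him with h | h
      · exact absurd h hb
      · linarith
    have hy0 : ∃ i, y i ≠ 0 := by
      by_contra hcon
      push_neg at hcon
      have : qs = 0 := by
        rw [hqsd]
        apply Finset.sum_eq_zero
        intro i _
        rw [hcon i, norm_zero]
        ring
      linarith [hnx, hnq ▸ this]
    obtain ⟨i0, hi0⟩ := hy0
    have hyi0 : (0:ℝ) < ‖y i0‖^2 := pow_pos (norm_pos_iff.mpr hi0) 2
    have hqslt : qs < ny := by
      have h : 0 < ∑ i, (1 - ds i) * ‖y i‖^2 :=
        Finset.sum_pos' (fun i _ => mul_nonneg (by linarith [(hds i).2]) (sq_nonneg _))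
          ⟨i0, Finset.mem_univ _, mul_pos (by linarith [(hds i0).2]) hyi0⟩
      have e : ∑ i, (1 - ds i) * ‖y i‖^2 = ny - qs := by
        rw [hnyd, hqsd, ← Finset.sum_sub_distrib]
        exact Finset.sum_congr rfl (fun i _ => by ring)
      linarith [e ▸ h]
    -- from hre with nx = qs : (a²+b²)·ny = qx
    have hkey : (lam.re^2 + lam.im^2) * ny = qx := by
      rw [hnq] at hre
      linarith
    exact aux_case_complex (lam.re^2 + lam.im^2) nx qx ny qs habs1 hkey hqxlt hnq hqslt hny0
end

section
/- Let A be a real m×n matrix, S := |A|² its entrywise square, τ̄_p ∈ ℝ^m and τ_r ∈ ℝ^n with strictly positive entries, and q_s ∈ (0,1)^m, q_x ∈ (0,1)^n satisfying 1/τ̄_{p,i} = Σ_j S_{ij} q_{x,j} τ_{r,j} and 1/τ_{r,j} = Σ_i S_{ij} q_{s,i} τ̄_{p,i}. Let Ã := diag(τ̄_p q_s)^{1/2}·A·diag(τ_r q_x)^{1/2}, and set q̄_s := (1/m)Σ_i q_{s,i}, q̄_x := (1/n)Σ_j q_{x,j}. Then ‖Ã‖_F² = m·q̄_s = n·q̄_x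 ≤ min{m,n}·max{q̄_s, q̄_x}, hence κ(Ã) ≥ ‖Ã‖₂²/max{q̄_s, q̄_x}; consequently, for any θ_s, θ_x ∈ (0,1], the condition κ(Ã) < 1/(θ_x θ_s max{q̄_s, q̄_x}) implies θ_s θ_x ‖Ã‖₂² < 1. -/
open Matrix

/-- The row-column normalized matrix `Ã = diag(τ̄_p q_s)^{1/2} A diag(τ_r q_x)^{1/2}`. -/
noncomputable def rcNormalized {m n : ℕ} (A : Matrix (Fin m) (Fin n) ℝ)
    (τp qs : Fin m → ℝ) (τr qx : Fin n → ℝ) : Matrix (Fin m) (Fin n) ℝ :=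
  fun i j => Real.sqrt (τp i * qs i) * A i j * Real.sqrt (τr j * qx j)

lemma specSq_zero_of_m_zero {n : ℕ} (A : Matrix (Fin 0) (Fin n) ℝ) : specSq A = 0 := by
  have h : LinearMap.toContinuousLinearMap (Matrix.toEuclideanLin A) = 0 := by
    refine ContinuousLinearMap.ext fun x => Subsingleton.elim _ _
  simp [specSq, h]

/-- **Sufficient condition (26) of Section V.** At GAMP fixed-point stepsizes,
`‖Ã‖_F² = m q̄_s = n q̄_x ≤ min{m,n}·max{q̄_s, q̄_x}`, so
`κ(Ã) ≥ ‖Ã‖₂²/max{q̄_s, q̄_x}`; consequently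
`κ(Ã) < 1/(θ_x θ_s max{q̄_s, q̄_x})` implies `θ_s θ_x ‖Ã‖₂² < 1`. -/
theorem rc_normalized_kappa_condition {m n : ℕ}
    (A : Matrix (Fin m) (Fin n) ℝ)
    (τp : Fin m → ℝ) (hτp : ∀ i, 0 < τp i)
    (τr : Fin n → ℝ) (hτr : ∀ j, 0 < τr j)
    (qs : Fin m → ℝ) (hqs : ∀ i, qs i ∈ Set.Ioo (0 : ℝ) 1)
    (qx : Fin n → ℝ) (hqx : ∀ j, qx j ∈ Set.Ioo (0 : ℝ) 1)
    (hfixp : ∀ i, 1 / τp i = ∑ j, (A i j) ^ 2 * (qx j * τr j))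
    (hfixr : ∀ j, 1 / τr j = ∑ i, (A i j) ^ 2 * (qs i * τp i)) :
    frobSq (rcNormalized A τp qs τr qx) = (m : ℝ) * ((1 / (m : ℝ)) * ∑ i, qs i) ∧
    frobSq (rcNormalized A τp qs τr qx) = (n : ℝ) * ((1 / (n : ℝ)) * ∑ j, qx j) ∧
    frobSq (rcNormalized A τp qs τr qx) ≤
      (min m n : ℝ) * max ((1 / (m : ℝ)) * ∑ i, qs i) ((1 / (n : ℝ)) * ∑ j, qx j) ∧
    specSq (rcNormalized A τp qs τr qx) /
        max ((1 / (m : ℝ)) * ∑ i, qs i) ((1 / (n : ℝ)) * ∑ j, qx j) ≤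
      kappa (rcNormalized A τp qs τr qx) ∧
    (∀ θs θx : ℝ, θs ∈ Set.Ioc (0 : ℝ) 1 → θx ∈ Set.Ioc (0 : ℝ) 1 →
      kappa (rcNormalized A τp qs τr qx) <
        1 / (θx * θs * max ((1 / (m : ℝ)) * ∑ i, qs i) ((1 / (n : ℝ)) * ∑ j, qx j)) →
      θs * θx * specSq (rcNormalized A τp qs τr qx) < 1) := by

  have hAne : ∀ i, τp i ≠ 0 := fun i => (hτp i).ne'
  have hBne : ∀ j, τr j ≠ 0 := fun j => (hτr j).ne'
  have hsq : ∀ i j, (rcNormalized A τp qs τr qx i j) ^ 2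
      = (τp i * qs i) * ((A i j) ^ 2 * (qx j * τr j)) := by
    intro i j
    have h1 : (0:ℝ) ≤ τp i * qs i := le_of_lt (mul_pos (hτp i) (hqs i).1)
    have h2 : (0:ℝ) ≤ τr j * qx j := le_of_lt (mul_pos (hτr j) (hqx j).1)
    simp only [rcNormalized, mul_pow]
    rw [Real.sq_sqrt h1, Real.sq_sqrt h2]
    ring
  have key1 : frobSq (rcNormalized A τp qs τr qx) = ∑ i, qs i := by
    unfold frobSq
    calc ∑ i, ∑ j, (rcNormalized A τp qs τr qx i j) ^ 2
        = ∑ i, (τp i * qs i) * ∑ j, (A i j) ^ 2 * (qx j * τr j) := by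
          refine Finset.sum_congr rfl fun i _ => ?_
          rw [Finset.mul_sum]
          exact Finset.sum_congr rfl fun j _ => hsq i j
      _ = ∑ i, qs i := by
          refine Finset.sum_congr rfl fun i _ => ?_
          rw [← hfixp i]
          field_simp
          exact mul_div_cancel_left₀ _ (hAne i)
  have key2 : frobSq (rcNormalized A τp qs τr qx) = ∑ j, qx j := by
    unfold frobSq
    rw [Finset.sum_comm]
    calc ∑ j, ∑ i, (rcNormalized A τp qs τr qx i j) ^ 2
        = ∑ j, (τr j * qx j) * ∑ i, (A i j) ^ 2 * (qs i * τp i) := by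
          refine Finset.sum_congr rfl fun j _ => ?_
          rw [Finset.mul_sum]
          refine Finset.sum_congr rfl fun i _ => ?_
          rw [hsq i j]; ring
      _ = ∑ j, qx j := by
          refine Finset.sum_congr rfl fun j _ => ?_
          rw [← hfixr j]
          field_simp
          exact mul_div_cancel_left₀ _ (hBne j)
  set F := frobSq (rcNormalized A τp qs τr qx) with hF
  set S := specSq (rcNormalized A τp qs τr qx) with hS
  set Qs := (1 / (m : ℝ)) * ∑ i, qs i with hQs
  set Qx := (1 / (n : ℝ)) * ∑ j, qx j with hQx
  have hSnn : 0 ≤ S := sq_nonneg _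
  rcases Nat.eq_zero_or_pos m with hm | hm
  · rcases Nat.eq_zero_or_pos n with hn | hn
    · -- m = 0, n = 0
      subst hm; subst hn
      have hF0 : F = 0 := by rw [key1]; simp
      have hS0 : S = 0 := specSq_zero_of_m_zero _
      have hQs0 : Qs = 0 := by simp [hQs]
      have hQx0 : Qx = 0 := by simp [hQx]
      refine ⟨by simp [hF0], by simp [hF0], by simp [hF0, hQs0, hQx0],
        by simp [hS0, kappa, ← hF, ← hS], ?_⟩
      intro θs θx _ _ _
      simp [hS0]
    · exfalso
      have h0 := hfixr ⟨0, hn⟩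
      subst hm
      simp only [Finset.univ_eq_empty, Finset.sum_empty] at h0
      exact one_div_ne_zero (hBne _) h0
  · rcases Nat.eq_zero_or_pos n with hn | hn
    · exfalso
      have h0 := hfixp ⟨0, hm⟩
      subst hn
      simp only [Finset.univ_eq_empty, Finset.sum_empty] at h0
      exact one_div_ne_zero (hAne _) h0
    · -- main case: m > 0, n > 0
      have hmR : (0:ℝ) < (m:ℝ) := Nat.cast_pos.mpr hm
      have hnR : (0:ℝ) < (n:ℝ) := Nat.cast_pos.mpr hn
      have eq1 : F = (m : ℝ) * Qs := by
        rw [key1, hQs]; field_simp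
      have eq2 : F = (n : ℝ) * Qx := by
        rw [key2, hQx]; field_simp
      have hQsPos : 0 < Qs := by
        rw [hQs]
        apply mul_pos (one_div_pos.mpr hmR)
        exact Finset.sum_pos (fun i _ => (hqs i).1) ⟨⟨0, hm⟩, Finset.mem_univ _⟩
      have hQxPos : 0 < Qx := by
        rw [hQx]
        apply mul_pos (one_div_pos.mpr hnR)
        exact Finset.sum_pos (fun j _ => (hqx j).1) ⟨⟨0, hn⟩, Finset.mem_univ _⟩
      have hMpos : 0 < max Qs Qx := lt_max_of_lt_left hQsPos
      have hminpos : (0:ℝ) < (min m n : ℝ) := by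
        have : 0 < min m n := lt_min hm hn
        exact_mod_cast this
      have hFpos : 0 < F := by
        rw [eq1]; exact mul_pos hmR hQsPos
      have ineq3 : F ≤ (min m n : ℝ) * max Qs Qx := by
        rcases le_total m n with h | h
        · rw [min_eq_left (Nat.cast_le.mpr h : (m:ℝ) ≤ n), eq1]
          exact mul_le_mul_of_nonneg_left (le_max_left _ _) hmR.le
        · rw [min_eq_right (Nat.cast_le.mpr h : (n:ℝ) ≤ m), eq2]
          exact mul_le_mul_of_nonneg_left (le_max_right _ _) hnR.le
      have hdiv : F / (min m n : ℝ) ≤ max Qs Qx :=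
        (div_le_iff₀ hminpos).mpr (by rw [mul_comm]; exact ineq3)
      have hdivpos : 0 < F / (min m n : ℝ) := div_pos hFpos hminpos
      have ineq4 : S / max Qs Qx ≤ kappa (rcNormalized A τp qs τr qx) := by
        unfold kappa
        rw [← hF, ← hS]
        exact div_le_div_of_nonneg_left hSnn hdivpos hdiv
      refine ⟨eq1, eq2, ineq3, ineq4, ?_⟩
      intro θs θx hθs hθx hlt
      have hθsp := hθs.1
      have hθxp := hθx.1
      have hden : 0 < θx * θs * max Qs Qx := by positivity
      have hk : kappa (rcNormalized A τp qs τr qx) = S / (F / (min m n : ℝ)) := by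
        unfold kappa; rw [← hF, ← hS]
      have hS_lt : S < (1 / (θx * θs * max Qs Qx)) * (F / (min m n : ℝ)) := by
        have := mul_lt_mul_of_pos_right hlt hdivpos
        rwa [hk, div_mul_cancel₀ _ hdivpos.ne'] at this
      have hS_lt2 : S < 1 / (θx * θs) := by
        refine hS_lt.trans_le ?_
        rw [div_mul_eq_mul_div, one_mul, div_le_div_iff₀ hden (by positivity)]
        calc F / (min m n : ℝ) * (θx * θs)
            ≤ max Qs Qx * (θx * θs) :=
              mul_le_mul_of_nonneg_right hdiv (by positivity)
          _ = 1 * (θx * θs * max Qs Qx) := by ring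
      calc θs * θx * S < θs * θx * (1 / (θx * θs)) := by
            exact mul_lt_mul_of_pos_left hS_lt2 (by positivity)
        _ = 1 := by field_simp
end
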